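/- arXiv:2001.00849 — 5 statements merged into one kernel-verified Lean document; each statement's English description precedes it below -/
import Mathlib

section
/- For an edge-ordered graph G on n vertices, the order chromatic number χ'_<(G) equals 2 if and only if the canonically edge-ordered complete bipartite graph K_{n,n}^{can} contains G. -/
/-- An edge-ordered graph: a finite simple graph on vertex set `Fin nv`
together with a labeling of (potential) edges.  The edge-order is the order of
the labels; the labeling is required to be injective on the edge set via
`EOGraph.Valid`. -/
structure EOGraph where
  nv : ℕ
  graph : SimpleGraph (Fin nv)
  label : Sym2 (Fin nv) → ℕ

namespace EOGraph

/-- The labeling is injective on the edge set, hence defines a linear order on the edges. -/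
def Valid (G : EOGraph) : Prop :=
  ∀ e ∈ G.graph.edgeSet, ∀ f ∈ G.graph.edgeSet, G.label e = G.label f → e = f

/-- The number of edges of an edge-ordered graph. -/
noncomputable def edges (G : EOGraph) : ℕ := G.graph.edgeSet.ncard

/-- `G.Contains H`: some subgraph of `G`, with the edge-order induced from `G`,
is isomorphic to `H` (via a graph isomorphism preserving the relative order of edges). -/
def Contains (G H : EOGraph) : Prop :=
  ∃ f : Fin H.nv ↪ Fin G.nv,
    (∀ a b, H.graph.Adj a b → G.graph.Adj (f a) (f b)) ∧
    ∀ a b c d, H.graph.Adj a b → H.graph.Adj c d →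
      (H.label s(a, b) < H.label s(c, d) ↔ G.label s(f a, f b) < G.label s(f c, f d))

/-- `G` avoids `H` if no subgraph of `G` (with the induced edge-order) is isomorphic to `H`. -/
def Avoids (G H : EOGraph) : Prop := ¬ G.Contains H

/-- `G` avoids a family if it avoids every member. -/
def AvoidsFam (G : EOGraph) (F : Set EOGraph) : Prop := ∀ H ∈ F, G.Avoids H

/-- Isomorphism of edge-ordered graphs. -/
def Iso (G H : EOGraph) : Prop :=
  ∃ f : Fin G.nv ≃ Fin H.nv,
    (∀ a b, G.graph.Adj a b ↔ H.graph.Adj (f a) (f b)) ∧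
    ∀ a b c d, G.graph.Adj a b → G.graph.Adj c d →
      (G.label s(a, b) < G.label s(c, d) ↔ H.label s(f a, f b) < H.label s(f c, f d))

end EOGraph

/-- A simple graph `G` can avoid the family `F` if some linear order on its edges
(given by a labeling injective on the edge set) makes it into an edge-ordered graph
avoiding `F`. -/
def CanAvoid {n : ℕ} (G : SimpleGraph (Fin n)) (F : Set EOGraph) : Prop :=
  ∃ L : Sym2 (Fin n) → ℕ, (EOGraph.mk n G L).Valid ∧ (EOGraph.mk n G L).AvoidsFam F

/-- The order chromatic number of a family of edge-ordered graphs: the least chromatic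
number of a finite simple graph that cannot avoid the family (`⊤` if every finite
simple graph can avoid it). -/
noncomputable def orderChrom (F : Set EOGraph) : ℕ∞ :=
  ⨅ (n : ℕ) (G : SimpleGraph (Fin n)) (_ : ¬ CanAvoid G F), G.chromaticNumber

/-- The Turán number `lex(n, F)`: the maximum number of edges of an edge-ordered graph
on `n` vertices avoiding the family `F`. -/
noncomputable def lexFam (n : ℕ) (F : Set EOGraph) : ℕ :=
  sSup {m : ℕ | ∃ G : EOGraph, G.nv = n ∧ G.Valid ∧ G.AvoidsFam F ∧ G.edges = m}

/-- Build a symmetric labeling from a function of the (min, max) of the two endpoints. -/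
def symLabel {N : ℕ} (f : Fin N → Fin N → ℕ) : Sym2 (Fin N) → ℕ :=
  Sym2.lift ⟨fun a b => f (min a b) (max a b), fun a b => by
    show f (min a b) (max a b) = f (min b a) (max b a)
    rw [min_comm, max_comm]⟩

/-- The edge-ordered path on `k` vertices `0, 1, …, k-1`, where the edge `{i, i+1}`
gets label `l[i]`. -/
def pathEO (k : ℕ) (l : List ℕ) : EOGraph where
  nv := k
  graph := SimpleGraph.fromRel (fun a b => (a : ℕ) + 1 = (b : ℕ))
  label := symLabel fun a _ => l.getD (a : ℕ) 0

/-- The canonically edge-ordered complete bipartite graph `K_{m,m}^{can}`: vertices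
`0,…,m-1` are the left vertices `u_1,…,u_m`, vertices `m,…,2m-1` are the right vertices
`v_1,…,v_m`, and the edge `u_i v_j` gets label `m*i + j` (1-based `i, j`). -/
def KnnCan (m : ℕ) : EOGraph where
  nv := 2 * m
  graph := SimpleGraph.fromRel fun a b => (a : ℕ) < m ∧ m ≤ (b : ℕ)
  label := symLabel fun a b => m * ((a : ℕ) + 1) + ((b : ℕ) - m + 1)

section Aux


open Finset

theorem myRamseySteps {β : Type} [DecidableEq β]
    (r : ℕ)
    (IH : ∀ m' : ℕ, ∃ N : ℕ, ∀ S : Finset ℕ, N ≤ S.card → ∀ c : Finset ℕ → β,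
      ∃ H, H ⊆ S ∧ m' ≤ H.card ∧
        ∀ s, s ⊆ H → ∀ t, t ⊆ H → s.card = r → t.card = r → c s = c t)
    (j : ℕ) :
    ∃ M : ℕ, ∀ S : Finset ℕ, M ≤ S.card → ∀ c : Finset ℕ → β,
      ∃ (a : Fin j → ℕ) (col : Fin j → β),
        (∀ i, a i ∈ S) ∧ Function.Injective a ∧
        ∀ i : Fin j, ∀ s : Finset ℕ,
          s ⊆ Finset.image a (Finset.univ.filter (fun i' => i < i')) → s.card = r →
          c (insert (a i) s) = col i := by
  induction j with
  | zero =>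
    exact ⟨0, fun S _ c => ⟨Fin.elim0, Fin.elim0, fun i => i.elim0, fun i => i.elim0,
      fun i => i.elim0⟩⟩
  | succ j ihj =>
    obtain ⟨Mj, hMj⟩ := ihj
    obtain ⟨Nr, hNr⟩ := IH (max Mj r)
    refine ⟨Nr + 1, fun S hS c => ?_⟩
    have hSne : S.Nonempty := Finset.card_pos.mp (by omega)
    obtain ⟨a0, ha0⟩ := hSne
    set S' := S.erase a0 with hS'def
    have hS'card : Nr ≤ S'.card := by
      rw [hS'def, Finset.card_erase_of_mem ha0]; omega
    obtain ⟨H', hH'sub, hH'card, hH'hom⟩ := hNr S' hS'card (fun s => c (insert a0 s))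
    obtain ⟨s0, hs0sub, hs0card⟩ := Finset.exists_subset_card_eq
      (show r ≤ H'.card by omega)
    set κ := c (insert a0 s0) with hκ
    obtain ⟨a', col', ha'mem, ha'inj, ha'prop⟩ := hMj H' (by omega) c
    refine ⟨Fin.cons a0 a', Fin.cons κ col', ?_, ?_, ?_⟩
    · intro i
      refine Fin.cases ?_ ?_ i
      · simpa using ha0
      · intro i'
        simp only [Fin.cons_succ]
        exact (Finset.erase_subset _ _) (hH'sub (ha'mem i'))
    · refine Fin.cons_injective_of_injective ?_ ha'inj
      rintro ⟨i', hi'⟩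
      have : a' i' ∈ S' := hH'sub (ha'mem i')
      rw [hi'] at this
      exact (Finset.notMem_erase a0 S) this
    · intro i
      refine Fin.cases ?_ ?_ i
      · intro s hssub hscard
        rw [Fin.cons_zero]
        have hsub : s ⊆ H' := by
          intro x hx
          have := hssub hx
          simp only [Finset.mem_image, Finset.mem_filter, Finset.mem_univ, true_and] at this
          obtain ⟨i', hi', rfl⟩ := this
          have : i' ≠ 0 := by
            rintro rfl; exact absurd hi' (lt_irrefl _)
          obtain ⟨i'', rfl⟩ := Fin.exists_succ_eq.mpr this
          rw [Fin.cons_succ]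
          exact ha'mem i''
        have h1 := hH'hom s hsub s0 hs0sub hscard hs0card
        rw [Fin.cons_zero, hκ]
        exact h1
      · intro i₀ s hssub hscard
        rw [Fin.cons_succ, Fin.cons_succ]
        refine ha'prop i₀ s ?_ hscard
        intro x hx
        have := hssub hx
        simp only [Finset.mem_image, Finset.mem_filter, Finset.mem_univ, true_and] at this ⊢
        obtain ⟨i', hi', rfl⟩ := this
        have : i' ≠ 0 := by
          rintro rfl
          exact absurd (lt_trans (Fin.succ_pos i₀) hi') (by simp) -- i' = 0 can't be > succ
        obtain ⟨i'', rfl⟩ := Fin.exists_succ_eq.mpr this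
        rw [Fin.cons_succ]
        exact ⟨i'', Fin.succ_lt_succ_iff.mp hi', rfl⟩

theorem myRamsey {β : Type} [Fintype β] [DecidableEq β] [Nonempty β] (r : ℕ) :
    ∀ m : ℕ, ∃ N : ℕ, ∀ S : Finset ℕ, N ≤ S.card → ∀ c : Finset ℕ → β,
      ∃ H, H ⊆ S ∧ m ≤ H.card ∧
        ∀ s, s ⊆ H → ∀ t, t ⊆ H → s.card = r → t.card = r → c s = c t := by
  induction r with
  | zero =>
    intro m
    refine ⟨m, fun S hS c => ⟨S, subset_rfl, hS, fun s _ t _ hs ht => ?_⟩⟩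
    rw [Finset.card_eq_zero] at hs ht
    rw [hs, ht]
  | succ r IH =>
    intro m
    set k := Fintype.card β with hk
    obtain ⟨M, hM⟩ := myRamseySteps r IH (k * m)
    refine ⟨M, fun S hS c => ?_⟩
    obtain ⟨a, col, hamem, hainj, haprop⟩ := hM S hS c
    -- pigeonhole on colors
    have hcard : Fintype.card β * m ≤ Fintype.card (Fin (k * m)) := by simp [hk]
    obtain ⟨v, hv⟩ := Fintype.exists_le_card_fiber_of_mul_le_card (f := col) hcard
    set I := Finset.univ.filter (fun i => col i = v) with hI
    set H := I.image a with hH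
    have hHsub : H ⊆ S := by
      intro x hx
      rw [hH, Finset.mem_image] at hx
      obtain ⟨i, _, rfl⟩ := hx
      exact hamem i
    have hHcard : m ≤ H.card := by
      rw [hH, Finset.card_image_of_injective _ hainj]
      exact hv
    refine ⟨H, hHsub, hHcard, ?_⟩
    have key : ∀ s, s ⊆ H → s.card = r + 1 → c s = v := by
      intro s hssub hscard
      set J := I.filter (fun i => a i ∈ s) with hJ
      have hJne : J.Nonempty := by
        have : s.Nonempty := Finset.card_pos.mp (by omega)
        obtain ⟨x, hx⟩ := this
        have := hssub hx
        rw [hH, Finset.mem_image] at this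
        obtain ⟨i, hi, rfl⟩ := this
        exact ⟨i, by rw [hJ, Finset.mem_filter]; exact ⟨hi, hx⟩⟩
      set i₀ := J.min' hJne with hi₀
      have hi₀J : i₀ ∈ J := J.min'_mem hJne
      have hmemJ : i₀ ∈ I ∧ a i₀ ∈ s := by
        have h := hi₀J
        rw [hJ, Finset.mem_filter] at h
        exact h
      have hi₀I : i₀ ∈ I := hmemJ.1
      have hai₀s : a i₀ ∈ s := hmemJ.2
      have hins : s = insert (a i₀) (s.erase (a i₀)) := (Finset.insert_erase hai₀s).symm
      have hesub : s.erase (a i₀) ⊆ Finset.image a (Finset.univ.filter (fun i' => i₀ < i')) := by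
        intro x hx
        have hxs : x ∈ s := Finset.mem_of_mem_erase hx
        have hxne : x ≠ a i₀ := Finset.ne_of_mem_erase hx
        have := hssub hxs
        rw [hH, Finset.mem_image] at this
        obtain ⟨i, hiI, rfl⟩ := this
        have hiJ : i ∈ J := by rw [hJ, Finset.mem_filter]; exact ⟨hiI, hxs⟩
        have : i₀ ≤ i := J.min'_le i hiJ
        have hne : i ≠ i₀ := fun h => hxne (by rw [h])
        rw [Finset.mem_image]
        exact ⟨i, by rw [Finset.mem_filter]; exact ⟨Finset.mem_univ _, lt_of_le_of_ne this (Ne.symm hne)⟩, rfl⟩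
      have hecard : (s.erase (a i₀)).card = r := by
        have := Finset.card_erase_of_mem hai₀s; omega
      have := haprop i₀ _ hesub hecard
      rw [← hins] at this
      rw [this]
      rw [hI, Finset.mem_filter] at hi₀I
      exact hi₀I.2
    intro s hs t ht hsc htc
    rw [key s hs hsc, key t ht htc]

section Fam

variable {n : ℕ}

/-- Homogeneity data for a grid function. -/
def Fam (n : ℕ) (h : Fin n → Fin n → ℕ) (R C D X : Prop) : Prop :=
  (∀ i j j', j < j' → (h i j < h i j' ↔ R)) ∧
  (∀ i i' j, i < i' → (h i j < h i' j ↔ C)) ∧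
  (∀ i j i' j', i < i' → j < j' → (h i j < h i' j' ↔ D)) ∧
  (∀ i j i' j', i < i' → j < j' → (h i j' < h i' j ↔ X))

def GInj (n : ℕ) (h : Fin n → Fin n → ℕ) : Prop :=
  ∀ i j i' j', h i j = h i' j' → i = i' ∧ j = j'

lemma ltflip {a b : ℕ} (hab : a ≠ b) : a < b ↔ ¬ (b < a) := by omega

lemma GInj.ne {h : Fin n → Fin n → ℕ} (hinj : GInj n h) {i j i' j' : Fin n}
    (hne : i ≠ i' ∨ j ≠ j') : h i j ≠ h i' j' := by
  intro he
  obtain ⟨h1, h2⟩ := hinj _ _ _ _ he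
  tauto

lemma GInj.flipCols {h : Fin n → Fin n → ℕ} (hinj : GInj n h) :
    GInj n (fun i j => h i (j.rev)) := by
  intro i j i' j' he
  obtain ⟨h1, h2⟩ := hinj _ _ _ _ he
  exact ⟨h1, Fin.rev_injective h2⟩

lemma GInj.flipRows {h : Fin n → Fin n → ℕ} (hinj : GInj n h) :
    GInj n (fun i j => h (i.rev) j) := by
  intro i j i' j' he
  obtain ⟨h1, h2⟩ := hinj _ _ _ _ he
  exact ⟨Fin.rev_injective h1, h2⟩

lemma GInj.transpose {h : Fin n → Fin n → ℕ} (hinj : GInj n h) :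
    GInj n (fun i j => h j i) := by
  intro i j i' j' he
  obtain ⟨h1, h2⟩ := hinj _ _ _ _ he
  exact ⟨h2, h1⟩

lemma Fam.flipCols {h : Fin n → Fin n → ℕ} {R C D X : Prop}
    (hinj : GInj n h) (fam : Fam n h R C D X) :
    Fam n (fun i j => h i (j.rev)) (¬R) C X D := by
  obtain ⟨hr, hc, hd, hx⟩ := fam
  refine ⟨?_, ?_, ?_, ?_⟩
  · intro i j j' hjj'
    have hrev : j'.rev < j.rev := by rwa [Fin.rev_lt_rev]
    rw [ltflip (hinj.ne (Or.inr (by simp [Fin.rev_inj]; omega)))]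
    rw [hr i _ _ hrev]
  · intro i i' j hii'
    exact hc i i' j.rev hii'
  · intro i j i' j' hii' hjj'
    have hrev : j'.rev < j.rev := by rwa [Fin.rev_lt_rev]
    exact hx i _ i' _ hii' hrev
  · intro i j i' j' hii' hjj'
    have hrev : j'.rev < j.rev := by rwa [Fin.rev_lt_rev]
    exact hd i _ i' _ hii' hrev

lemma Fam.flipRows {h : Fin n → Fin n → ℕ} {R C D X : Prop}
    (hinj : GInj n h) (fam : Fam n h R C D X) :
    Fam n (fun i j => h (i.rev) j) R (¬C) (¬X) (¬D) := by
  obtain ⟨hr, hc, hd, hx⟩ := fam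
  refine ⟨?_, ?_, ?_, ?_⟩
  · intro i j j' hjj'
    exact hr i.rev j j' hjj'
  · intro i i' j hii'
    have hrev : i'.rev < i.rev := by rwa [Fin.rev_lt_rev]
    rw [ltflip (hinj.ne (Or.inl (by simp [Fin.rev_inj]; omega)))]
    rw [hc _ _ j hrev]
  · intro i j i' j' hii' hjj'
    have hrev : i'.rev < i.rev := by rwa [Fin.rev_lt_rev]
    rw [ltflip (hinj.ne (Or.inl (by simp [Fin.rev_inj]; omega)))]
    rw [hx i'.rev j i.rev j' hrev hjj']
  · intro i j i' j' hii' hjj'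
    have hrev : i'.rev < i.rev := by rwa [Fin.rev_lt_rev]
    rw [ltflip (hinj.ne (Or.inl (by simp [Fin.rev_inj]; omega)))]
    rw [hd i'.rev j i.rev j' hrev hjj']

lemma Fam.transpose {h : Fin n → Fin n → ℕ} {R C D X : Prop}
    (hinj : GInj n h) (fam : Fam n h R C D X) :
    Fam n (fun i j => h j i) C R D (¬X) := by
  obtain ⟨hr, hc, hd, hx⟩ := fam
  refine ⟨?_, ?_, ?_, ?_⟩
  · intro i j j' hjj'
    exact hc j j' i hjj'
  · intro i i' j hii'
    exact hr j i i' hii'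
  · intro i j i' j' hii' hjj'
    exact hd j i j' i' hjj' hii'
  · intro i j i' j' hii' hjj'
    rw [ltflip (hinj.ne (Or.inl (by intro hh; exact absurd hh (ne_of_gt hjj'))))]
    rw [hx j i j' i' hjj' hii']

/-- In the fully normalised situation the order is lexicographic. -/
lemma lex_of_fam {h : Fin n → Fin n → ℕ} {R C D X : Prop}
    (hinj : GInj n h) (fam : Fam n h R C D X) (hR : R) (hC : C) (hX : X) :
    ∀ i j i' j', h i j < h i' j' ↔ (i < i' ∨ (i = i' ∧ j < j')) := by
  obtain ⟨hr, hc, hd, hx⟩ := fam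
  have fwd : ∀ i j i' j' : Fin n, (i < i' ∨ (i = i' ∧ j < j')) → h i j < h i' j' := by
    rintro i j i' j' (hii' | ⟨rfl, hjj'⟩)
    · rcases lt_trichotomy j j' with hj | rfl | hj
      · exact lt_trans ((hr i j j' hj).mpr hR) ((hc i i' j' hii').mpr hC)
      · exact (hc i i' j hii').mpr hC
      · exact (hx i j' i' j hii' hj).mpr hX
    · exact (hr i j j' hjj').mpr hR
  intro i j i' j'
  constructor
  · intro hlt
    rcases lt_trichotomy i i' with hi | rfl | hi
    · exact Or.inl hi
    · rcases lt_trichotomy j j' with hj | rfl | hj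
      · exact Or.inr ⟨rfl, hj⟩
      · exact absurd hlt (lt_irrefl _)
      · exact absurd hlt (not_lt_of_gt (fwd _ _ _ _ (Or.inr ⟨rfl, hj⟩)))
    · exact absurd hlt (not_lt_of_gt (fwd _ _ _ _ (Or.inl hi)))
  · exact fwd i j i' j'

/-- Main consequence: any homogeneous grid admits a relabeling of rows and columns
(and possibly a transposition) making it lexicographic. -/
lemma main_of_fam {h : Fin n → Fin n → ℕ} {R C D X : Prop}
    (hinj : GInj n h) (fam : Fam n h R C D X) :
    ∃ σ τ : Fin n → Fin n, Function.Injective σ ∧ Function.Injective τ ∧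
      ((∀ i j i' j', h (σ i) (τ j) < h (σ i') (τ j') ↔ (i < i' ∨ (i = i' ∧ j < j'))) ∨
       (∀ i j i' j', h (τ j) (σ i) < h (τ j') (σ i') ↔ (i < i' ∨ (i = i' ∧ j < j')))) := by
  by_cases hR : R
  · by_cases hC : C
    · by_cases hX : X
      · exact ⟨id, id, Function.injective_id, Function.injective_id,
          Or.inl (lex_of_fam hinj fam hR hC hX)⟩
      · exact ⟨id, id, Function.injective_id, Function.injective_id,
          Or.inr (lex_of_fam hinj.transpose (fam.transpose hinj) hC hR hX)⟩
    · have fam1 := fam.flipRows hinj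
      have hinj1 := hinj.flipRows
      by_cases hD : D
      · exact ⟨id, Fin.rev, Function.injective_id, Fin.rev_injective,
          Or.inr (lex_of_fam hinj1.transpose (fam1.transpose hinj1) hC hR (not_not_intro hD))⟩
      · exact ⟨Fin.rev, id, Fin.rev_injective, Function.injective_id,
          Or.inl (lex_of_fam hinj1 fam1 hR hC hD)⟩
  · have fam1 := fam.flipCols hinj
    have hinj1 := hinj.flipCols
    by_cases hC : C
    · by_cases hD : D
      · exact ⟨id, Fin.rev, Function.injective_id, Fin.rev_injective,
          Or.inl (lex_of_fam hinj1 fam1 hR hC hD)⟩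
      · exact ⟨Fin.rev, id, Fin.rev_injective, Function.injective_id,
          Or.inr (lex_of_fam hinj1.transpose (fam1.transpose hinj1) hC hR hD)⟩
    · have fam2 := fam1.flipRows hinj1
      have hinj2 := hinj1.flipRows
      by_cases hX : X
      · exact ⟨Fin.rev, Fin.rev, Fin.rev_injective, Fin.rev_injective,
          Or.inr (lex_of_fam hinj2.transpose (fam2.transpose hinj2) hC hR (not_not_intro hX))⟩
      · exact ⟨Fin.rev, Fin.rev, Fin.rev_injective, Fin.rev_injective,
          Or.inl (lex_of_fam hinj2 fam2 hR hC hX)⟩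

end Fam

def quadColor (g : ℕ → ℕ → ℕ) (s : Finset ℕ) : Bool × Bool × Bool × Bool :=
  match s.sort (· ≤ ·) with
  | [a, b, u, v] => (decide (g a u < g a v), decide (g a u < g b u),
      decide (g a u < g b v), decide (g a v < g b u))
  | _ => (false, false, false, false)

lemma quadColor_eq (g : ℕ → ℕ → ℕ) {a b u v : ℕ} (h1 : a < b) (h2 : b < u) (h3 : u < v) :
    quadColor g {a, b, u, v} = (decide (g a u < g a v), decide (g a u < g b u),
      decide (g a u < g b v), decide (g a v < g b u)) := by
  have hnd : ([a, b, u, v] : List ℕ).Nodup := by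
    simp only [List.nodup_cons, List.mem_cons, List.mem_singleton, List.not_mem_nil,
      List.nodup_nil, and_true, not_or, or_false, not_false_eq_true]
    omega
  have hsorted : ([a, b, u, v] : List ℕ).Pairwise (· ≤ ·) := by
    simp only [List.pairwise_cons, List.mem_cons, List.mem_singleton, List.not_mem_nil,
      List.Pairwise.nil, and_true, or_false, forall_eq_or_imp, forall_eq, not_false_eq_true,
      List.not_mem_nil, IsEmpty.forall_iff, implies_true]
    omega
  have hsort : ({a, b, u, v} : Finset ℕ).sort (· ≤ ·) = [a, b, u, v] := by
    have := (List.toFinset_sort (· ≤ ·) hnd).mpr hsorted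
    simpa using this
  unfold quadColor
  rw [hsort]

theorem gridLex (n : ℕ) : ∃ N : ℕ, 0 < N ∧ ∀ g : ℕ → ℕ → ℕ,
    (∀ i j i' j', i < N → j < N → i' < N → j' < N → g i j = g i' j' → i = i' ∧ j = j') →
    ∃ σ τ : Fin n → ℕ, (∀ i, σ i < N) ∧ (∀ j, τ j < N) ∧
      Function.Injective σ ∧ Function.Injective τ ∧
      ((∀ i j i' j' : Fin n, g (σ i) (τ j) < g (σ i') (τ j') ↔ (i < i' ∨ (i = i' ∧ j < j'))) ∨
       (∀ i j i' j' : Fin n, g (τ j) (σ i) < g (τ j') (σ i') ↔ (i < i' ∨ (i = i' ∧ j < j')))) := by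
  obtain ⟨N₀, hN₀⟩ := myRamsey (β := Bool × Bool × Bool × Bool) 4 (2 * n + 2)
  refine ⟨N₀ + 1, Nat.succ_pos _, fun g hg => ?_⟩
  set N := N₀ + 1 with hN
  obtain ⟨H₀, hH₀sub, hH₀card, hH₀hom⟩ := hN₀ (Finset.range N)
    (by rw [Finset.card_range]; omega) (quadColor g)
  obtain ⟨H, hHsub, hHcard⟩ := Finset.exists_subset_card_eq hH₀card
  have hHhom : ∀ s, s ⊆ H → ∀ t, t ⊆ H → s.card = 4 → t.card = 4 →
      quadColor g s = quadColor g t :=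
    fun s hs t ht => hH₀hom s (hs.trans hHsub) t (ht.trans hHsub)
  set e := H.sort (· ≤ ·) with he
  have hlen : e.length = 2 * n + 2 := by rw [he, Finset.length_sort]; exact hHcard
  set E : ℕ → ℕ := fun t => e.getD t 0 with hE
  have hEmem : ∀ t, t < 2 * n + 2 → E t ∈ H := by
    intro t ht
    rw [hE]
    simp only
    rw [List.getD_eq_getElem e 0 (by omega)]
    have h2 : e[t] ∈ e := List.getElem_mem _
    exact (Finset.mem_sort _).mp h2
  have hElt : ∀ t, t < 2 * n + 2 → E t < N := by
    intro t ht
    have := hHsub.trans hH₀sub (hEmem t ht)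
    rwa [Finset.mem_range] at this
  have hEmono : ∀ t t', t < t' → t' < 2 * n + 2 → E t < E t' := by
    intro t t' htt' ht'
    have hsl : e.Pairwise (· < ·) := by rw [he]; exact ((Finset.pairwise_sort H (· ≤ ·)).and (Finset.sort_nodup H (· ≤ ·))).imp fun h => lt_of_le_of_ne h.1 h.2
    rw [hE]
    simp only
    rw [List.getD_eq_getElem e 0 (by omega), List.getD_eq_getElem e 0 (by omega)]
    exact List.pairwise_iff_getElem.mp hsl t t' (by omega) (by omega) htt'
  -- the homogeneous color
  set K := quadColor g {E 0, E 1, E (n + 1), E (n + 2)} with hK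
  have quadKey : ∀ p q u v : ℕ, p < q → q < n + 1 → n + 1 ≤ u → u < v → v < 2 * n + 2 →
      (decide (g (E p) (E u) < g (E p) (E v)), decide (g (E p) (E u) < g (E q) (E u)),
       decide (g (E p) (E u) < g (E q) (E v)), decide (g (E p) (E v) < g (E q) (E u))) = K := by
    intro p q u v h1 h2 h3 h4 h5
    have e1 : E p < E q := hEmono p q h1 (by omega)
    have e2 : E q < E u := hEmono q u (by omega) (by omega)
    have e3 : E u < E v := hEmono u v h4 h5
    rw [← quadColor_eq g e1 e2 e3]
    have c1 : ({E p, E q, E u, E v} : Finset ℕ).card = 4 := by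
      rw [Finset.card_insert_of_notMem (by simp; omega),
        Finset.card_insert_of_notMem (by simp; omega),
        Finset.card_insert_of_notMem (by simp; omega), Finset.card_singleton]
    have hsub1 : ({E p, E q, E u, E v} : Finset ℕ) ⊆ H := by
      intro x hx
      simp only [Finset.mem_insert, Finset.mem_singleton] at hx
      rcases hx with rfl | rfl | rfl | rfl
      · exact hEmem p (by omega)
      · exact hEmem q (by omega)
      · exact hEmem u (by omega)
      · exact hEmem v (by omega)
    have e1' : E 0 < E 1 := hEmono 0 1 (by omega) (by omega)
    have e2' : E 1 < E (n + 1) := hEmono 1 (n + 1) (by omega) (by omega)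
    have e3' : E (n + 1) < E (n + 2) := hEmono (n + 1) (n + 2) (by omega) (by omega)
    have c2 : ({E 0, E 1, E (n + 1), E (n + 2)} : Finset ℕ).card = 4 := by
      rw [Finset.card_insert_of_notMem (by simp; omega),
        Finset.card_insert_of_notMem (by simp; omega),
        Finset.card_insert_of_notMem (by simp; omega), Finset.card_singleton]
    have hsub2 : ({E 0, E 1, E (n + 1), E (n + 2)} : Finset ℕ) ⊆ H := by
      intro x hx
      simp only [Finset.mem_insert, Finset.mem_singleton] at hx
      rcases hx with rfl | rfl | rfl | rfl
      · exact hEmem 0 (by omega)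
      · exact hEmem 1 (by omega)
      · exact hEmem (n + 1) (by omega)
      · exact hEmem (n + 2) (by omega)
    rw [hK]
    exact hHhom _ hsub1 _ hsub2 c1 c2
  -- the grid function
  set h : Fin n → Fin n → ℕ := fun i j => g (E i) (E (n + 1 + j)) with hh
  have hbound : ∀ i : Fin n, (i : ℕ) < 2 * n + 2 := fun i => by omega
  have hbound2 : ∀ j : Fin n, n + 1 + (j : ℕ) < 2 * n + 2 := fun j => by omega
  have hinj : GInj n h := by
    intro i j i' j' hij
    rw [hh] at hij
    simp only at hij
    have := hg _ _ _ _ (hElt _ (hbound i)) (hElt _ (hbound2 j)) (hElt _ (hbound i'))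
      (hElt _ (hbound2 j')) hij
    constructor
    · by_contra hne
      have hne' : (i : ℕ) ≠ (i' : ℕ) := fun hc => hne (Fin.ext hc)
      rcases Nat.lt_or_ge (i : ℕ) (i' : ℕ) with hlt | hge
      · exact absurd this.1 (Nat.ne_of_lt (hEmono _ _ hlt (hbound i')))
      · exact absurd this.1.symm (Nat.ne_of_lt (hEmono _ _ (by omega) (hbound i)))
    · by_contra hne
      have hne' : (j : ℕ) ≠ (j' : ℕ) := fun hc => hne (Fin.ext hc)
      rcases Nat.lt_or_ge (j : ℕ) (j' : ℕ) with hlt | hge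
      · exact absurd this.2 (Nat.ne_of_lt (hEmono _ _ (by omega) (hbound2 j')))
      · exact absurd this.2.symm (Nat.ne_of_lt (hEmono _ _ (by omega) (hbound2 j)))
  have bit_iff : ∀ (P : Prop) [Decidable P] (b : Bool), decide P = b → (P ↔ b = true) := by
    intro P _ b hb
    constructor
    · intro hp; rw [← hb]; exact decide_eq_true hp
    · intro hbt; rw [hbt] at hb; exact of_decide_eq_true hb
  have fam : Fam n h (K.1 = true) (K.2.1 = true) (K.2.2.1 = true) (K.2.2.2 = true) := by
    refine ⟨?_, ?_, ?_, ?_⟩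
    · intro i j j' hjj'
      have := quadKey i n (n + 1 + j) (n + 1 + j') i.isLt (by omega) (by omega)
        (by have : (j:ℕ) < (j':ℕ) := hjj'; omega) (by omega)
      exact bit_iff _ _ (congrArg (·.1) this)
    · intro i i' j hii'
      have := quadKey i i' (n + 1 + j) (2 * n + 1) (by exact_mod_cast hii') (by omega)
        (by omega) (by have := j.isLt; omega) (by omega)
      exact bit_iff _ _ (congrArg (·.2.1) this)
    · intro i j i' j' hii' hjj'
      have := quadKey i i' (n + 1 + j) (n + 1 + j') (by exact_mod_cast hii') (by omega)
        (by omega) (by have : (j:ℕ) < (j':ℕ) := hjj'; omega) (by omega)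
      exact bit_iff _ _ (congrArg (·.2.2.1) this)
    · intro i j i' j' hii' hjj'
      have := quadKey i i' (n + 1 + j) (n + 1 + j') (by exact_mod_cast hii') (by omega)
        (by omega) (by have : (j:ℕ) < (j':ℕ) := hjj'; omega) (by omega)
      exact bit_iff _ _ (congrArg (·.2.2.2) this)
  obtain ⟨σ', τ', hσ'inj, hτ'inj, hmain⟩ := main_of_fam hinj fam
  have hEinj : ∀ f : Fin n → ℕ, (∀ i, f i < 2 * n + 2) → Function.Injective f →
      Function.Injective (fun i => E (f i)) := by
    intro f hb hfinj x y hxy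
    have hfe : f x = f y := by
      by_contra hvv
      rcases Nat.lt_or_ge (f x) (f y) with hlt | hge
      · exact absurd hxy (Nat.ne_of_lt (hEmono _ _ hlt (hb y)))
      · have hlt : f y < f x := by omega
        exact absurd hxy.symm (Nat.ne_of_lt (hEmono _ _ hlt (hb x)))
    exact hfinj hfe
  rw [hh] at hmain
  rcases hmain with hmain | hmain
  · refine ⟨fun i => E (σ' i), fun j => E (n + 1 + τ' j), fun i => hElt _ (hbound (σ' i)),
      fun j => hElt _ (hbound2 (τ' j)), ?_, ?_, Or.inl (by simpa using hmain)⟩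
    · exact hEinj (fun i => (σ' i : ℕ)) (fun i => hbound (σ' i))
        (fun x y hh' => hσ'inj (Fin.ext hh'))
    · exact hEinj (fun j => n + 1 + (τ' j : ℕ)) (fun j => hbound2 (τ' j))
        (fun x y hh' => hτ'inj (Fin.ext (by simpa using hh')))
  · refine ⟨fun i => E (n + 1 + σ' i), fun j => E (τ' j), fun i => hElt _ (hbound2 (σ' i)),
      fun j => hElt _ (hbound (τ' j)), ?_, ?_, Or.inr (by simpa using hmain)⟩
    · exact hEinj (fun i => n + 1 + (σ' i : ℕ)) (fun i => hbound2 (σ' i))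
        (fun x y hh' => hσ'inj (Fin.ext (by simpa using hh')))
    · exact hEinj (fun j => (τ' j : ℕ)) (fun j => hbound (τ' j))
        (fun x y hh' => hτ'inj (Fin.ext hh'))

def leftV (m : ℕ) (i : Fin m) : Fin (2 * m) := ⟨i, by omega⟩
def rightV (m : ℕ) (j : Fin m) : Fin (2 * m) := ⟨m + (j : ℕ), by omega⟩

lemma lexLabel {t a b a' b' : ℕ} (hb : b < t) (hb' : b' < t) :
    t * (a + 1) + (b + 1) < t * (a' + 1) + (b' + 1) ↔
      (a < a' ∨ (a = a' ∧ b < b')) := by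
  have mono : ∀ x y x' y' : ℕ, y < t → x < x' →
      t * (x + 1) + (y + 1) < t * (x' + 1) + (y' + 1) := by
    intro x y x' y' hy hxx'
    have h1 : t * (x + 2) ≤ t * (x' + 1) := Nat.mul_le_mul_left t (by omega)
    have h2 : t * (x + 2) = t * (x + 1) + t := by ring
    omega
  constructor
  · intro hlt
    rcases lt_trichotomy a a' with h | h | h
    · exact Or.inl h
    · subst h; exact Or.inr ⟨rfl, by omega⟩
    · exact absurd (mono a' b' a b hb' h) (by omega)
  · rintro (h | ⟨rfl, h⟩)
    · exact mono a b a' b' hb h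
    · omega

lemma knn_graph (m : ℕ) : (KnnCan m).graph =
    SimpleGraph.fromRel (fun a b : Fin (2 * m) => (a : ℕ) < m ∧ m ≤ (b : ℕ)) := rfl

lemma knn_label_def (m : ℕ) : (KnnCan m).label =
    symLabel (fun a b : Fin (2 * m) => m * ((a : ℕ) + 1) + ((b : ℕ) - m + 1)) := rfl

lemma knn_adj (m : ℕ) (i j : Fin m) : (KnnCan m).graph.Adj (leftV m i) (rightV m j) := by
  have hi := i.isLt
  rw [knn_graph, SimpleGraph.fromRel_adj]
  refine ⟨?_, Or.inl ⟨by simpa [leftV] using hi, by simp [rightV]⟩⟩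
  intro h
  have := congrArg (Fin.val) h
  simp [leftV, rightV] at this
  omega

lemma knn_label (m : ℕ) (i j : Fin m) :
    (KnnCan m).label s(leftV m i, rightV m j) = m * ((i : ℕ) + 1) + ((j : ℕ) + 1) := by
  have hi := i.isLt
  have hle : leftV m i ≤ rightV m j := by
    rw [leftV, rightV, Fin.mk_le_mk]; omega
  simp only [knn_label_def, symLabel, Sym2.lift_mk]
  show m * (((leftV m i) ⊓ (rightV m j) : Fin (2 * m)) + 1) +
    (((leftV m i) ⊔ (rightV m j) : Fin (2 * m)) - m + 1) = _
  rw [inf_eq_left.mpr hle, sup_eq_right.mpr hle]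
  have h1 : ((leftV m i : Fin (2 * m)) : ℕ) = (i : ℕ) := rfl
  have h2 : ((rightV m j : Fin (2 * m)) : ℕ) = m + (j : ℕ) := rfl
  rw [h1, h2]
  congr 1
  omega

lemma knn_adj_cases {m : ℕ} {a b : Fin (2 * m)} (h : (KnnCan m).graph.Adj a b) :
    (∃ i j : Fin m, a = leftV m i ∧ b = rightV m j) ∨
    (∃ i j : Fin m, b = leftV m i ∧ a = rightV m j) := by
  rw [knn_graph, SimpleGraph.fromRel_adj] at h
  obtain ⟨hne, h | h⟩ := h
  · left
    exact ⟨⟨a, h.1⟩, ⟨(b : ℕ) - m, by have := b.isLt; omega⟩,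
      by apply Fin.ext; simp [leftV],
      by apply Fin.ext; have := h.2; simp [rightV]; omega⟩
  · right
    exact ⟨⟨b, h.1⟩, ⟨(a : ℕ) - m, by have := a.isLt; omega⟩,
      by apply Fin.ext; simp [leftV],
      by apply Fin.ext; have := h.2; simp [rightV]; omega⟩

lemma contains_trans {A B C : EOGraph} (hAB : A.Contains B) (hBC : B.Contains C) :
    A.Contains C := by
  obtain ⟨f, fadj, ford⟩ := hAB
  obtain ⟨g, gadj, gord⟩ := hBC
  refine ⟨g.trans f, fun a b h => fadj _ _ (gadj a b h), fun a b c d hab hcd => ?_⟩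
  rw [gord a b c d hab hcd, ford _ _ _ _ (gadj a b hab) (gadj c d hcd)]
  rfl

/-- Build a containment of `KnnCan n` from a pair of maps realising the canonical order. -/
lemma contains_of_maps {n : ℕ} (H : EOGraph) (u v : Fin n → Fin H.nv)
    (hadj : ∀ i j, H.graph.Adj (u i) (v j))
    (huinj : Function.Injective u) (hvinj : Function.Injective v)
    (huv : ∀ i j, u i ≠ v j)
    (hlex : ∀ i j i' j' : Fin n, H.label s(u i, v j) < H.label s(u i', v j') ↔
      ((i : ℕ) < (i' : ℕ) ∨ (i = i' ∧ (j : ℕ) < (j' : ℕ)))) :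
    H.Contains (KnnCan n) := by
  have hnv : (KnnCan n).nv = 2 * n := rfl
  set F : Fin (2 * n) → Fin H.nv := fun a =>
    if h : (a : ℕ) < n then u ⟨a, h⟩ else v ⟨(a : ℕ) - n, by have := a.isLt; omega⟩ with hF
  have hFleft : ∀ i : Fin n, F (leftV n i) = u i := by
    intro i
    have hi := i.isLt
    rw [hF]
    simp only [leftV]
    exact dif_pos hi
  have hFright : ∀ j : Fin n, F (rightV n j) = v j := by
    intro j
    rw [hF]
    simp only [rightV]
    refine (dif_neg (by omega)).trans ?_
    congr 1
    exact Fin.ext (by simp)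
  have hFinj : Function.Injective F := by
    intro x y hxy
    rw [hF] at hxy
    simp only at hxy
    by_cases hx : (x : ℕ) < n <;> by_cases hy : (y : ℕ) < n
    · rw [dif_pos hx, dif_pos hy] at hxy
      have := huinj hxy
      exact Fin.ext (by simpa using congrArg Fin.val this)
    · rw [dif_pos hx, dif_neg hy] at hxy
      exact absurd hxy (huv _ _)
    · rw [dif_neg hx, dif_pos hy] at hxy
      exact absurd hxy.symm (huv _ _)
    · rw [dif_neg hx, dif_neg hy] at hxy
      have := hvinj hxy
      have hval := congrArg Fin.val this
      simp only at hval
      have hx2 := x.isLt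
      have hy2 := y.isLt
      exact Fin.ext (by omega)
  refine ⟨⟨F, hFinj⟩, ?_, ?_⟩
  · intro a b hab
    show H.graph.Adj (F a) (F b)
    rcases knn_adj_cases hab with ⟨i, j, rfl, rfl⟩ | ⟨i, j, rfl, rfl⟩
    · rw [hFleft, hFright]
      exact hadj i j
    · rw [hFleft, hFright]
      exact (hadj i j).symm
  · have core : ∀ i j i' j' : Fin n,
        ((KnnCan n).label s(leftV n i, rightV n j) <
          (KnnCan n).label s(leftV n i', rightV n j') ↔
         H.label s(F (leftV n i), F (rightV n j)) <
          H.label s(F (leftV n i'), F (rightV n j'))) := by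
      intro i j i' j'
      rw [hFleft, hFright, hFleft, hFright, knn_label, knn_label,
        lexLabel j.isLt j'.isLt, hlex]
      constructor
      · rintro (h | ⟨h, h2⟩)
        · exact Or.inl h
        · exact Or.inr ⟨Fin.ext h, h2⟩
      · rintro (h | ⟨rfl, h2⟩)
        · exact Or.inl h
        · exact Or.inr ⟨rfl, h2⟩
    intro a b c d hab hcd
    change _ ↔ H.label s(F a, F b) < H.label s(F c, F d)
    have e1 : ∀ x y : Fin (2 * n), (KnnCan n).label s(x, y) = (KnnCan n).label s(y, x) :=
      fun x y => congrArg _ Sym2.eq_swap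
    have e2 : ∀ x y : Fin H.nv, H.label s(x, y) = H.label s(y, x) :=
      fun x y => congrArg _ Sym2.eq_swap
    rcases knn_adj_cases hab with ⟨i, j, rfl, rfl⟩ | ⟨i, j, rfl, rfl⟩ <;>
      rcases knn_adj_cases hcd with ⟨i', j', rfl, rfl⟩ | ⟨i', j', rfl, rfl⟩
    · exact core i j i' j'
    · rw [e1 (rightV n j') (leftV n i'), e2 (F (rightV n j')) (F (leftV n i'))]
      exact core i j i' j'
    · rw [e1 (rightV n j) (leftV n i), e2 (F (rightV n j)) (F (leftV n i))]
      exact core i j i' j'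
    · rw [e1 (rightV n j) (leftV n i), e2 (F (rightV n j)) (F (leftV n i)),
        e1 (rightV n j') (leftV n i'), e2 (F (rightV n j')) (F (leftV n i'))]
      exact core i j i' j'

/-- Every valid edge-ordering of the complete bipartite graph `K_{N,N}` (for suitable `N`)
contains the canonical `K_{n,n}`. -/
lemma hostContains (n : ℕ) : ∃ N : ℕ, 0 < N ∧ ∀ L : Sym2 (Fin (2 * N)) → ℕ,
    (EOGraph.mk (2 * N) (KnnCan N).graph L).Valid →
    (EOGraph.mk (2 * N) (KnnCan N).graph L).Contains (KnnCan n) := by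
  obtain ⟨N, hNpos, hN⟩ := gridLex n
  refine ⟨N, hNpos, fun L hval => ?_⟩
  set H : EOGraph := EOGraph.mk (2 * N) (KnnCan N).graph L with hH
  set g : ℕ → ℕ → ℕ := fun i j =>
    if h : i < N ∧ j < N then L s(leftV N ⟨i, h.1⟩, rightV N ⟨j, h.2⟩) else 0 with hg
  have gval : ∀ (i j : ℕ) (hi : i < N) (hj : j < N),
      g i j = L s(leftV N ⟨i, hi⟩, rightV N ⟨j, hj⟩) := by
    intro i j hi hj
    rw [hg]
    simp only
    rw [dif_pos ⟨hi, hj⟩]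
  have hmemE : ∀ (i j : ℕ) (hi : i < N) (hj : j < N),
      (s(leftV N ⟨i, hi⟩, rightV N ⟨j, hj⟩) : Sym2 (Fin (2 * N))) ∈
        (KnnCan N).graph.edgeSet := by
    intro i j hi hj
    refine (SimpleGraph.mem_edgeSet _).mpr ?_
    exact knn_adj N _ _
  have ginj : ∀ i j i' j', i < N → j < N → i' < N → j' < N → g i j = g i' j' →
      i = i' ∧ j = j' := by
    intro i j i' j' hi hj hi' hj' heq
    rw [gval i j hi hj, gval i' j' hi' hj'] at heq
    have := hval _ (hmemE i j hi hj) _ (hmemE i' j' hi' hj') heq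
    rw [Sym2.eq_iff] at this
    rcases this with ⟨h1, h2⟩ | ⟨h1, h2⟩
    · have v1 := congrArg Fin.val h1
      have v2 := congrArg Fin.val h2
      simp only [leftV, rightV] at v1 v2
      exact ⟨v1, by omega⟩
    · exfalso
      have v1 := congrArg Fin.val h1
      simp only [leftV, rightV] at v1
      omega
  obtain ⟨σ, τ, hσlt, hτlt, hσinj, hτinj, hbr⟩ := hN g ginj
  rcases hbr with hlex | hlex
  · refine contains_of_maps H (fun i => leftV N ⟨σ i, hσlt i⟩) (fun j => rightV N ⟨τ j, hτlt j⟩)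
      (fun i j => knn_adj N _ _) ?_ ?_ ?_ ?_
    · intro x y hxy
      have := congrArg Fin.val hxy
      simp only [leftV] at this
      exact hσinj this
    · intro x y hxy
      have := congrArg Fin.val hxy
      simp only [rightV] at this
      exact hτinj (by omega)
    · intro i j hxy
      have := congrArg Fin.val hxy
      simp only [leftV, rightV] at this
      have := hσlt i
      omega
    · intro i j i' j'
      have e1 : H.label s(leftV N ⟨σ i, hσlt i⟩, rightV N ⟨τ j, hτlt j⟩) = g (σ i) (τ j) :=
        (gval _ _ _ _).symm
      have e2 : H.label s(leftV N ⟨σ i', hσlt i'⟩, rightV N ⟨τ j', hτlt j'⟩) =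
          g (σ i') (τ j') := (gval _ _ _ _).symm
      rw [e1, e2, hlex i j i' j']
      rw [Fin.lt_def, Fin.lt_def, Fin.ext_iff]
  · refine contains_of_maps H (fun i => rightV N ⟨σ i, hσlt i⟩) (fun j => leftV N ⟨τ j, hτlt j⟩)
      (fun i j => (knn_adj N _ _).symm) ?_ ?_ ?_ ?_
    · intro x y hxy
      have := congrArg Fin.val hxy
      simp only [rightV] at this
      exact hσinj (by omega)
    · intro x y hxy
      have := congrArg Fin.val hxy
      simp only [leftV] at this
      exact hτinj this
    · intro i j hxy
      have := congrArg Fin.val hxy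
      simp only [leftV, rightV] at this
      have := hτlt j
      omega
    · intro i j i' j'
      have s1 : (s(rightV N ⟨σ i, hσlt i⟩, leftV N ⟨τ j, hτlt j⟩) : Sym2 (Fin (2 * N))) =
          s(leftV N ⟨τ j, hτlt j⟩, rightV N ⟨σ i, hσlt i⟩) := Sym2.eq_swap
      have s2 : (s(rightV N ⟨σ i', hσlt i'⟩, leftV N ⟨τ j', hτlt j'⟩) : Sym2 (Fin (2 * N))) =
          s(leftV N ⟨τ j', hτlt j'⟩, rightV N ⟨σ i', hσlt i'⟩) := Sym2.eq_swap
      have e1 : H.label s(rightV N ⟨σ i, hσlt i⟩, leftV N ⟨τ j, hτlt j⟩) = g (τ j) (σ i) := by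
        rw [show H.label = L from rfl, s1]
        exact (gval _ _ _ _).symm
      have e2 : H.label s(rightV N ⟨σ i', hσlt i'⟩, leftV N ⟨τ j', hτlt j'⟩) =
          g (τ j') (σ i') := by
        rw [show H.label = L from rfl, s2]
        exact (gval _ _ _ _).symm
      rw [e1, e2, hlex i j i' j']
      rw [Fin.lt_def, Fin.lt_def, Fin.ext_iff]

lemma knn_label_inj {m : ℕ} {i j i' j' : Fin m}
    (h : (KnnCan m).label s(leftV m i, rightV m j) =
      (KnnCan m).label s(leftV m i', rightV m j')) : i = i' ∧ j = j' := by
  rw [knn_label, knn_label] at h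
  have h1 := lexLabel (t := m) (a := (i : ℕ)) (a' := (i' : ℕ)) j.isLt j'.isLt
  have h2 := lexLabel (t := m) (a := (i' : ℕ)) (a' := (i : ℕ)) j'.isLt j.isLt
  have hn1 : ¬ ((i : ℕ) < (i' : ℕ) ∨ ((i : ℕ) = (i' : ℕ) ∧ (j : ℕ) < (j' : ℕ))) := by
    rw [← h1]; omega
  have hn2 : ¬ ((i' : ℕ) < (i : ℕ) ∨ ((i' : ℕ) = (i : ℕ) ∧ (j' : ℕ) < (j : ℕ))) := by
    rw [← h2]; omega
  push_neg at hn1 hn2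
  exact ⟨Fin.ext (by omega), Fin.ext (by omega)⟩

/-- If a `2`-colorable graph `G'` cannot avoid `G`, then the canonical complete bipartite
graph on its vertex count contains `G`. -/
lemma contains_of_bipartite_cannot_avoid {n' : ℕ} (G : EOGraph) (G' : SimpleGraph (Fin n'))
    (C : G'.Coloring (Fin 2)) (hno : ¬ CanAvoid G' {G}) : (KnnCan n').Contains G := by
  classical
  set φ : Fin n' → Fin (2 * n') := fun v =>
    if C v = 0 then ⟨(v : ℕ), by omega⟩ else ⟨n' + (v : ℕ), by omega⟩ with hφ
  have hφleft : ∀ v, C v = 0 → φ v = leftV n' v := by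
    intro v hv; rw [hφ]; simp only [if_pos hv]; rfl
  have hφright : ∀ v, C v ≠ 0 → φ v = rightV n' v := by
    intro v hv; rw [hφ]; simp only [if_neg hv]; rfl
  have hφinj : Function.Injective φ := by
    intro x y hxy
    rw [hφ] at hxy
    simp only at hxy
    by_cases hx : C x = 0 <;> by_cases hy : C y = 0 <;>
      [skip; skip; skip; skip] <;>
      first
        | (rw [if_pos hx, if_pos hy] at hxy; exact Fin.ext (by simpa using congrArg Fin.val hxy))
        | (rw [if_pos hx, if_neg hy] at hxy
           exact absurd (congrArg Fin.val hxy) (by have := x.isLt; simp; omega))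
        | (rw [if_neg hx, if_pos hy] at hxy
           exact absurd (congrArg Fin.val hxy) (by have := y.isLt; simp; omega))
        | (rw [if_neg hx, if_neg hy] at hxy
           exact Fin.ext (by have := congrArg Fin.val hxy; simp at this; omega))
  have hφadj : ∀ a b, G'.Adj a b → (KnnCan n').graph.Adj (φ a) (φ b) := by
    intro a b hab
    have hCne := C.valid hab
    by_cases ha : C a = 0
    · have hb : C b ≠ 0 := fun h => hCne (ha.trans h.symm)
      rw [hφleft a ha, hφright b hb]
      exact knn_adj n' a b
    · have hb : C b = 0 := by
        revert hCne ha
        generalize C a = x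
        generalize C b = y
        revert x y
        decide
      rw [hφright a ha, hφleft b hb]
      exact (knn_adj n' b a).symm
  set L : Sym2 (Fin n') → ℕ := fun e => (KnnCan n').label (e.map φ) with hL
  have hLval : ∀ a b : Fin n', L s(a, b) = (KnnCan n').label s(φ a, φ b) := by
    intro a b
    rw [hL]
    rfl
  have hvalid : (EOGraph.mk n' G' L).Valid := by
    intro e he f hf hef
    induction e with
    | _ a b =>
    induction f with
    | _ c d =>
    rw [SimpleGraph.mem_edgeSet] at he hf
    have hef' : (KnnCan n').label s(φ a, φ b) = (KnnCan n').label s(φ c, φ d) := by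
      rw [← hLval, ← hLval]
      exact hef
    clear hef
    -- normalise orientations
    have hCab := C.valid he
    have hCcd := C.valid hf
    have key : ∀ a b c d : Fin n', C a = 0 → C b ≠ 0 → C c = 0 → C d ≠ 0 →
        (KnnCan n').label s(φ a, φ b) = (KnnCan n').label s(φ c, φ d) →
        (s(a, b) : Sym2 (Fin n')) = s(c, d) := by
      intro a b c d ha hb hc hd heq
      rw [hφleft a ha, hφright b hb, hφleft c hc, hφright d hd] at heq
      obtain ⟨h1, h2⟩ := knn_label_inj heq
      rw [h1, h2]
    have fin2 : ∀ x y : Fin 2, x ≠ y → x ≠ 0 → y = 0 := by decide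
    by_cases ha : C a = 0 <;> by_cases hc : C c = 0
    · exact key a b c d ha (fun h => hCab (ha.trans h.symm)) hc
        (fun h => hCcd (hc.trans h.symm)) hef'
    · have hd : C d = 0 := fin2 (C c) (C d) hCcd hc
      have := key a b d c ha (fun h => hCab (ha.trans h.symm)) hd hc
        (hef'.trans (congrArg (KnnCan n').label Sym2.eq_swap))
      exact this.trans Sym2.eq_swap
    · have hb : C b = 0 := fin2 (C a) (C b) hCab ha
      have := key b a c d hb ha hc (fun h => hCcd (hc.trans h.symm))
        ((congrArg (KnnCan n').label Sym2.eq_swap).trans hef')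
      exact Sym2.eq_swap.trans this
    · have hb : C b = 0 := fin2 (C a) (C b) hCab ha
      have hd : C d = 0 := fin2 (C c) (C d) hCcd hc
      have := key b a d c hb ha hd hc
        ((congrArg (KnnCan n').label Sym2.eq_swap).trans
          (hef'.trans (congrArg (KnnCan n').label Sym2.eq_swap)))
      exact Sym2.eq_swap.trans (this.trans Sym2.eq_swap)
  have hcontains : (EOGraph.mk n' G' L).Contains G := by
    by_contra hc
    exact hno ⟨L, hvalid, fun K hK => by
      rw [Set.mem_singleton_iff] at hK
      rw [hK]
      exact hc⟩
  obtain ⟨f, fadj, ford⟩ := hcontains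
  refine ⟨⟨fun v => φ (f v), fun x y hxy => f.injective (hφinj hxy)⟩, ?_, ?_⟩
  · intro a b hab
    exact hφadj _ _ (fadj a b hab)
  · intro a b c d hab hcd
    refine (ford a b c d hab hcd).trans ?_
    show L s(f a, f b) < L s(f c, f d) ↔ _
    rw [hLval, hLval]
    rfl

/-- Compression: if some canonical complete bipartite graph contains `G`, then already
`K_{nv,nv}` does, where `nv` is the number of vertices of `G`. -/
lemma knn_compress {m : ℕ} (G : EOGraph) (h : (KnnCan m).Contains G) :
    (KnnCan G.nv).Contains G := by
  classical
  set nv := G.nv with hnv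
  obtain ⟨f, fadj, ford⟩ := h
  set vals : Finset ℕ := Finset.univ.image (fun v : Fin nv => ((f v : Fin (2 * m)) : ℕ))
    with hvals
  have hvalscard : vals.card ≤ nv := by
    calc vals.card ≤ (Finset.univ : Finset (Fin nv)).card := Finset.card_image_le
      _ = nv := by simp
  set A : Finset ℕ := vals.filter (· < m) with hA
  set B : Finset ℕ := vals.filter (fun x => ¬ x < m) with hB
  set rk : Finset ℕ → ℕ → ℕ := fun s x => (s.filter (· < x)).card with hrk
  have rk_lt_card : ∀ (s : Finset ℕ) (x : ℕ), x ∈ s → rk s x < s.card := by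
    intro s x hx
    apply Finset.card_lt_card
    constructor
    · exact Finset.filter_subset _ _
    · intro hsub
      have := hsub hx
      rw [Finset.mem_filter] at this
      omega
  have rk_mono : ∀ (s : Finset ℕ) (x y : ℕ), x ∈ s → x < y → rk s x < rk s y := by
    intro s x y hx hxy
    apply Finset.card_lt_card
    constructor
    · intro z hz
      rw [Finset.mem_filter] at hz ⊢
      exact ⟨hz.1, by omega⟩
    · intro hsub
      have hxmem : x ∈ s.filter (· < y) := Finset.mem_filter.mpr ⟨hx, hxy⟩
      have := hsub hxmem
      rw [Finset.mem_filter] at this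
      omega
  have rk_lt_iff : ∀ (s : Finset ℕ) (x y : ℕ), x ∈ s → y ∈ s → (rk s x < rk s y ↔ x < y) := by
    intro s x y hx hy
    constructor
    · intro hlt
      rcases lt_trichotomy x y with h | rfl | h
      · exact h
      · omega
      · exact absurd (rk_mono s y x hy h) (by omega)
    · exact rk_mono s x y hx
  have rk_eq_iff : ∀ (s : Finset ℕ) (x y : ℕ), x ∈ s → y ∈ s → (rk s x = rk s y ↔ x = y) := by
    intro s x y hx hy
    constructor
    · intro hlt
      rcases lt_trichotomy x y with h | rfl | h
      · exact absurd (rk_mono s x y hx h) (by omega)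
      · rfl
      · exact absurd (rk_mono s y x hy h) (by omega)
    · rintro rfl; rfl
  have hAcard : A.card ≤ nv := le_trans (Finset.card_le_card (Finset.filter_subset _ _)) hvalscard
  have hBcard : B.card ≤ nv := le_trans (Finset.card_le_card (Finset.filter_subset _ _)) hvalscard
  have hmemvals : ∀ v : Fin nv, ((f v : Fin (2 * m)) : ℕ) ∈ vals := by
    intro v
    rw [hvals, Finset.mem_image]
    exact ⟨v, Finset.mem_univ v, rfl⟩
  have hmemA : ∀ v : Fin nv, ((f v : Fin (2 * m)) : ℕ) < m → ((f v : Fin (2 * m)) : ℕ) ∈ A := by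
    intro v hv
    rw [hA, Finset.mem_filter]
    exact ⟨hmemvals v, hv⟩
  have hmemB : ∀ v : Fin nv, ¬ ((f v : Fin (2 * m)) : ℕ) < m →
      ((f v : Fin (2 * m)) : ℕ) ∈ B := by
    intro v hv
    rw [hB, Finset.mem_filter]
    exact ⟨hmemvals v, hv⟩
  set ψ : Fin nv → Fin (2 * nv) := fun v =>
    if hc : ((f v : Fin (2 * m)) : ℕ) < m
    then ⟨rk A ((f v : Fin (2 * m)) : ℕ), by
      have := rk_lt_card A _ (hmemA v hc); omega⟩
    else ⟨nv + rk B ((f v : Fin (2 * m)) : ℕ), by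
      have := rk_lt_card B _ (hmemB v hc); omega⟩ with hψ
  have hψleft : ∀ v (hc : ((f v : Fin (2 * m)) : ℕ) < m),
      ψ v = leftV nv ⟨rk A ((f v : Fin (2 * m)) : ℕ), by
        have := rk_lt_card A _ (hmemA v hc); omega⟩ := by
    intro v hc
    rw [hψ]
    simp only [dif_pos hc]
    rfl
  have hψright : ∀ v (hc : ¬ ((f v : Fin (2 * m)) : ℕ) < m),
      ψ v = rightV nv ⟨rk B ((f v : Fin (2 * m)) : ℕ), by
        have := rk_lt_card B _ (hmemB v hc); omega⟩ := by
    intro v hc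
    rw [hψ]
    simp only [dif_neg hc]
    rfl
  have hψinj : Function.Injective ψ := by
    intro x y hxy
    rw [hψ] at hxy
    simp only at hxy
    by_cases hx : ((f x : Fin (2 * m)) : ℕ) < m <;>
      by_cases hy : ((f y : Fin (2 * m)) : ℕ) < m
    · rw [dif_pos hx, dif_pos hy] at hxy
      have := congrArg Fin.val hxy
      simp only at this
      have := (rk_eq_iff A _ _ (hmemA x hx) (hmemA y hy)).mp this
      exact f.injective (Fin.ext this)
    · rw [dif_pos hx, dif_neg hy] at hxy
      have := congrArg Fin.val hxy
      simp only at this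
      have h1 := rk_lt_card A _ (hmemA x hx)
      omega
    · rw [dif_neg hx, dif_pos hy] at hxy
      have := congrArg Fin.val hxy
      simp only at this
      have h1 := rk_lt_card A _ (hmemA y hy)
      omega
    · rw [dif_neg hx, dif_neg hy] at hxy
      have := congrArg Fin.val hxy
      simp only at this
      have := (rk_eq_iff B _ _ (hmemB x hx) (hmemB y hy)).mp (by omega)
      exact f.injective (Fin.ext this)
  -- each G-edge maps to a (left, right) pair under f
  have edgecase : ∀ a b, G.graph.Adj a b →
      (((f a : Fin (2 * m)) : ℕ) < m ∧ ¬ ((f b : Fin (2 * m)) : ℕ) < m) ∨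
      (((f b : Fin (2 * m)) : ℕ) < m ∧ ¬ ((f a : Fin (2 * m)) : ℕ) < m) := by
    intro a b hab
    rcases knn_adj_cases (fadj a b hab) with ⟨i, j, h1, h2⟩ | ⟨i, j, h1, h2⟩
    · left
      have v1 := congrArg Fin.val h1
      have v2 := congrArg Fin.val h2
      simp only [leftV, rightV] at v1 v2
      have hi := i.isLt
      have hj := j.isLt
      omega
    · right
      have v1 := congrArg Fin.val h1
      have v2 := congrArg Fin.val h2
      simp only [leftV, rightV] at v1 v2
      have hi := i.isLt
      have hj := j.isLt
      omega
  -- adjacency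
  refine ⟨⟨ψ, hψinj⟩, ?_, ?_⟩
  · intro a b hab
    show (KnnCan nv).graph.Adj (ψ a) (ψ b)
    rcases edgecase a b hab with ⟨h1, h2⟩ | ⟨h1, h2⟩
    · rw [hψleft a h1, hψright b h2]
      exact knn_adj nv _ _
    · rw [hψleft b h1, hψright a h2]
      exact (knn_adj nv _ _).symm
  · -- order
    have mcore : ∀ (a b : Fin nv) (h1 : ((f a : Fin (2 * m)) : ℕ) < m)
        (h2 : ¬ ((f b : Fin (2 * m)) : ℕ) < m),
        (KnnCan m).label s(f a, f b) =
          m * (((f a : Fin (2 * m)) : ℕ) + 1) + ((((f b : Fin (2 * m)) : ℕ) - m) + 1) := by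
      intro a b h1 h2
      have hbv : ((f b : Fin (2 * m)) : ℕ) < 2 * m := (f b : Fin (2 * m)).isLt
      have e1 : (f a : Fin (2 * m)) = leftV m ⟨((f a : Fin (2 * m)) : ℕ), h1⟩ :=
        Fin.ext rfl
      have e2 : (f b : Fin (2 * m)) = rightV m ⟨(((f b : Fin (2 * m)) : ℕ) - m), by omega⟩ :=
        Fin.ext (by simp only [rightV]; omega)
      rw [e1, e2, knn_label]
      simp only [leftV, rightV, Fin.val_mk]
      omega
    have ncore : ∀ (a b : Fin nv) (h1 : ((f a : Fin (2 * m)) : ℕ) < m)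
        (h2 : ¬ ((f b : Fin (2 * m)) : ℕ) < m),
        (KnnCan nv).label s(ψ a, ψ b) =
          nv * (rk A ((f a : Fin (2 * m)) : ℕ) + 1) +
            (rk B ((f b : Fin (2 * m)) : ℕ) + 1) := by
      intro a b h1 h2
      rw [hψleft a h1, hψright b h2, knn_label]
    -- the two-sided comparison for normalised quadruples
    have core : ∀ (a b c d : Fin nv) (hab : ((f a : Fin (2 * m)) : ℕ) < m)
        (hab2 : ¬ ((f b : Fin (2 * m)) : ℕ) < m) (hcd : ((f c : Fin (2 * m)) : ℕ) < m)
        (hcd2 : ¬ ((f d : Fin (2 * m)) : ℕ) < m),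
        ((KnnCan m).label s(f a, f b) < (KnnCan m).label s(f c, f d) ↔
         (KnnCan nv).label s(ψ a, ψ b) < (KnnCan nv).label s(ψ c, ψ d)) := by
      intro a b c d hab hab2 hcd hcd2
      rw [mcore a b hab hab2, mcore c d hcd hcd2, ncore a b hab hab2, ncore c d hcd hcd2]
      have hbv : ((f b : Fin (2 * m)) : ℕ) < 2 * m := (f b : Fin (2 * m)).isLt
      have hdv : ((f d : Fin (2 * m)) : ℕ) < 2 * m := (f d : Fin (2 * m)).isLt
      rw [lexLabel (by omega) (by omega),
        lexLabel (lt_of_lt_of_le (rk_lt_card B _ (hmemB b hab2)) hBcard)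
          (lt_of_lt_of_le (rk_lt_card B _ (hmemB d hcd2)) hBcard)]
      rw [rk_lt_iff A _ _ (hmemA a hab) (hmemA c hcd),
        rk_eq_iff A _ _ (hmemA a hab) (hmemA c hcd),
        rk_lt_iff B _ _ (hmemB b hab2) (hmemB d hcd2)]
      omega
    intro a b c d hab hcd
    change _ ↔ (KnnCan nv).label s(ψ a, ψ b) < (KnnCan nv).label s(ψ c, ψ d)
    rw [ford a b c d hab hcd]
    have em : ∀ x y : Fin (2 * m), (KnnCan m).label s(x, y) = (KnnCan m).label s(y, x) :=
      fun x y => congrArg _ Sym2.eq_swap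
    have en : ∀ x y : Fin (2 * nv), (KnnCan nv).label s(x, y) = (KnnCan nv).label s(y, x) :=
      fun x y => congrArg _ Sym2.eq_swap
    rcases edgecase a b hab with ⟨h1, h2⟩ | ⟨h1, h2⟩ <;>
      rcases edgecase c d hcd with ⟨h3, h4⟩ | ⟨h3, h4⟩
    · exact core a b c d h1 h2 h3 h4
    · rw [em (f c) (f d), en (ψ c) (ψ d)]
      exact core a b d c h1 h2 h3 h4
    · rw [em (f a) (f b), en (ψ a) (ψ b)]
      exact core b a c d h1 h2 h3 h4
    · rw [em (f a) (f b), en (ψ a) (ψ b), em (f c) (f d), en (ψ c) (ψ d)]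
      exact core b a d c h1 h2 h3 h4

lemma two_le_of_adj {n : ℕ} {G' : SimpleGraph (Fin n)} {a b : Fin n} (hab : G'.Adj a b) :
    2 ≤ G'.chromaticNumber := by
  by_contra h
  push_neg at h
  have h1 : G'.chromaticNumber ≤ 1 := by
    rw [show (2 : ℕ∞) = 1 + 1 from rfl] at h
    exact (ENat.lt_add_one_iff (by simp)).mp h
  have hcol : G'.Colorable 1 := SimpleGraph.chromaticNumber_le_iff_colorable.mp
    (by exact_mod_cast h1)
  obtain ⟨C⟩ := hcol
  exact C.valid hab (Subsingleton.elim _ _)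

lemma chrom_knn_le_two (N : ℕ) :
    ((KnnCan N).graph : SimpleGraph (Fin (2 * N))).chromaticNumber ≤ 2 := by
  have hcol : ((KnnCan N).graph : SimpleGraph (Fin (2 * N))).Colorable 2 := by
    refine ⟨SimpleGraph.Coloring.mk (fun v => if (v : ℕ) < N then 0 else 1) ?_⟩
    intro v w hvw
    replace hvw : v ≠ w ∧ (((v : ℕ) < N ∧ N ≤ (w : ℕ)) ∨ ((w : ℕ) < N ∧ N ≤ (v : ℕ))) := hvw
    obtain ⟨hne, h | h⟩ := hvw
    · rw [if_pos h.1, if_neg (by omega)]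
      simp
    · rw [if_neg (by omega), if_pos h.1]
      simp
  have := hcol.chromaticNumber_le
  exact_mod_cast this

lemma canAvoid_of_no_edge {n : ℕ} {G' : SimpleGraph (Fin n)} (G : EOGraph)
    (hne : G.graph.edgeSet.Nonempty) (hno : ∀ a b, ¬ G'.Adj a b) : CanAvoid G' {G} := by
  refine ⟨fun _ => 0, ?_, ?_⟩
  · intro e he f hf heq
    exfalso
    induction e with
    | _ a b =>
    rw [SimpleGraph.mem_edgeSet] at he
    exact hno a b he
  · intro K hK
    rw [Set.mem_singleton_iff] at hK
    subst hK
    rintro ⟨F, Fadj, -⟩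
    obtain ⟨e, he⟩ := hne
    induction e with
    | _ a b =>
    rw [SimpleGraph.mem_edgeSet] at he
    exact hno _ _ (Fadj a b he)


end Aux

/-- For an edge-ordered graph `G` on `n` vertices, the order chromatic
number of `G` equals `2` if and only if `K_{n,n}^{can}` contains `G`. -/
theorem orderChrom_eq_two_iff_knncan_contains (G : EOGraph)
    (hval : G.Valid) (hne : G.graph.edgeSet.Nonempty) :
    orderChrom {G} = 2 ↔ (KnnCan G.nv).Contains G := by
  constructor
  · intro h2
    have hex : ∃ n' : ℕ, ∃ G' : SimpleGraph (Fin n'),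
        ¬ CanAvoid G' {G} ∧ G'.chromaticNumber ≤ 2 := by
      by_contra hno
      push_neg at hno
      have h3 : (3 : ℕ∞) ≤ orderChrom {G} := by
        rw [orderChrom]
        refine le_iInf fun n => le_iInf fun G' => le_iInf fun hP => ?_
        have hlt := hno n G' hP
        have := (ENat.add_one_le_iff (show (2 : ℕ∞) ≠ ⊤ by simp)).mpr hlt
        exact (show (3 : ℕ∞) = 2 + 1 by norm_num).trans_le this
      rw [h2] at h3
      exact absurd h3 (by exact_mod_cast (by omega : ¬ (3 : ℕ) ≤ 2))
    obtain ⟨n', G', hP, hχ⟩ := hex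
    have hcol : G'.Colorable 2 := SimpleGraph.chromaticNumber_le_iff_colorable.mp
      (by exact_mod_cast hχ)
    obtain ⟨C⟩ := hcol
    exact knn_compress G (contains_of_bipartite_cannot_avoid G G' C hP)
  · intro hcont
    obtain ⟨N, hNpos, hhost⟩ := hostContains G.nv
    have hncan : ¬ CanAvoid ((KnnCan N).graph : SimpleGraph (Fin (2 * N))) {G} := by
      rintro ⟨L, hv, hav⟩
      exact hav G rfl (contains_trans (hhost L hv) hcont)
    apply le_antisymm
    · rw [orderChrom]
      refine iInf_le_of_le (2 * N) (iInf_le_of_le ((KnnCan N).graph) ?_)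
      exact iInf_le_of_le hncan (chrom_knn_le_two N)
    · rw [orderChrom]
      refine le_iInf fun n => le_iInf fun G' => le_iInf fun hP => ?_
      have hadj : ∃ a b, G'.Adj a b := by
        by_contra hno2
        push_neg at hno2
        exact hP (canAvoid_of_no_edge G hne hno2)
      obtain ⟨a, b, hab⟩ := hadj
      exact two_le_of_adj hab
end

section
/- For every positive integer n there exists m₀ such that for all m ≥ m₀, the complete bipartite graph K_{m,m} cannot avoid K_{n,n}^{can}; that is, every linear ordering of the edges of K_{m,m} yields an edge-ordered graph containing K_{n,n}^{can}. -/
open Function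

/-- Growth function for the prehomogeneous sequence argument. -/
def ramF (k : ℕ) : ℕ → ℕ
  | 0 => 0
  | t + 1 => k * ramF k t + 1

lemma prehom (α : Type) [Fintype α] [DecidableEq α] [Nonempty α] :
    ∀ (t : ℕ) (S : Finset ℕ), ramF (Fintype.card α) t ≤ S.card →
    ∀ χ : ℕ → ℕ → α,
    ∃ (x : Fin t → ℕ) (c : Fin t → α), StrictMono x ∧ (∀ i, x i ∈ S) ∧
      ∀ i j : Fin t, i < j → χ (x i) (x j) = c i := by
  intro t
  induction t with
  | zero =>
    intro S _ χ
    exact ⟨Fin.elim0, Fin.elim0, fun i => i.elim0, fun i => i.elim0, fun i => i.elim0⟩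
  | succ t ih =>
    intro S hS χ
    have hpos : 0 < S.card := by
      have := hS; simp [ramF] at this; omega
    have hne : S.Nonempty := Finset.card_pos.mp hpos
    set a := S.min' hne with ha
    have haS : a ∈ S := S.min'_mem hne
    set S' := S.erase a with hS'
    have hcard' : Fintype.card α * ramF (Fintype.card α) t ≤ S'.card := by
      have : S'.card = S.card - 1 := by simp [hS', Finset.card_erase_of_mem haS]
      rw [this]
      have := hS; simp [ramF] at this; omega
    obtain ⟨c₀, -, hc₀⟩ := Finset.exists_le_card_fiber_of_mul_le_card_of_maps_to
      (s := S') (t := (Finset.univ : Finset α)) (f := fun z => χ a z)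
      (fun _ _ => Finset.mem_univ _) ⟨Classical.arbitrary α, Finset.mem_univ _⟩
      (by simpa using hcard')
    set T := {z ∈ S' | χ a z = c₀} with hT
    obtain ⟨x', c', hmono, hmem, hcol⟩ := ih T hc₀ χ
    have hmemS' : ∀ i, x' i ∈ S' := fun i => (Finset.mem_filter.mp (hmem i)).1
    have haLT : ∀ i, a < x' i := by
      intro i
      have hne' : x' i ≠ a := Finset.ne_of_mem_erase (hmemS' i)
      have hle : a ≤ x' i := S.min'_le _ (Finset.mem_of_mem_erase (hmemS' i))
      omega
    refine ⟨Fin.cons a x', Fin.cons c₀ c', ?_, ?_, ?_⟩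
    · intro i j hij
      rcases Fin.eq_zero_or_eq_succ j with rfl | ⟨j', rfl⟩
      · exact absurd hij (Fin.not_lt_zero _)
      · rcases Fin.eq_zero_or_eq_succ i with rfl | ⟨i', rfl⟩
        · simpa using haLT j'
        · simp only [Fin.cons_succ]
          exact hmono (by exact_mod_cast Fin.succ_lt_succ_iff.mp hij)
    · intro i
      rcases Fin.eq_zero_or_eq_succ i with rfl | ⟨i', rfl⟩
      · simpa using haS
      · simp only [Fin.cons_succ]
        exact Finset.mem_of_mem_erase (hmemS' i')
    · intro i j hij
      rcases Fin.eq_zero_or_eq_succ j with rfl | ⟨j', rfl⟩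
      · exact absurd hij (Fin.not_lt_zero _)
      · rcases Fin.eq_zero_or_eq_succ i with rfl | ⟨i', rfl⟩
        · simp only [Fin.cons_zero, Fin.cons_succ]
          exact (Finset.mem_filter.mp (hmem j')).2
        · simp only [Fin.cons_succ]
          exact hcol i' j' (by exact_mod_cast Fin.succ_lt_succ_iff.mp hij)

theorem ramseyPairs (α : Type) [Fintype α] [DecidableEq α] [Nonempty α] (s : ℕ) :
    ∃ N : ℕ, ∀ χ : ℕ → ℕ → α, ∃ x : Fin s → ℕ, StrictMono x ∧ (∀ i, x i < N) ∧
      ∃ c : α, ∀ i j : Fin s, i < j → χ (x i) (x j) = c := by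
  classical
  set t := Fintype.card α * s with ht
  refine ⟨ramF (Fintype.card α) t, fun χ => ?_⟩
  obtain ⟨x, c, hmono, hmem, hcol⟩ := prehom α t (Finset.range (ramF (Fintype.card α) t))
    (by simp) χ
  obtain ⟨c₀, -, hc₀⟩ := Finset.exists_le_card_fiber_of_mul_le_card_of_maps_to
    (s := (Finset.univ : Finset (Fin t))) (t := (Finset.univ : Finset α)) (f := c) (n := s)
    (fun _ _ => Finset.mem_univ _) ⟨Classical.arbitrary α, Finset.mem_univ _⟩
    (by simp [ht])
  set I := {i ∈ (Finset.univ : Finset (Fin t)) | c i = c₀} with hI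
  obtain ⟨I', hI'sub, hI'card⟩ := I.exists_subset_card_eq hc₀
  set e := I'.orderEmbOfFin hI'card with he
  refine ⟨fun i => x (e i), ?_, ?_, c₀, ?_⟩
  · intro i j hij
    exact hmono (e.strictMono hij)
  · intro i
    have := hmem (e i)
    simpa using this
  · intro i j hij
    have h1 : χ (x (e i)) (x (e j)) = c (e i) := hcol _ _ (e.strictMono hij)
    have h2 : e i ∈ I := hI'sub (I'.orderEmbOfFin_mem hI'card i)
    rw [h1]
    exact (Finset.mem_filter.mp h2).2

theorem gridRamsey (α : Type) [Fintype α] [DecidableEq α] [Nonempty α] (s : ℕ) :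
    ∃ N : ℕ, ∀ χ : ℕ → ℕ → ℕ → ℕ → α, ∃ x y : Fin s → ℕ,
      StrictMono x ∧ StrictMono y ∧ (∀ i, x i < N) ∧ (∀ i, y i < N) ∧
      ∃ c : α, ∀ i j k l : Fin s, i < j → k < l → χ (x i) (x j) (y k) (y l) = c := by
  classical
  obtain ⟨N₂, h₂⟩ := ramseyPairs α s
  obtain ⟨N₁, h₁⟩ := ramseyPairs (Fin N₂ → Fin N₂ → α) s
  refine ⟨max N₁ N₂, fun χ => ?_⟩
  obtain ⟨x, hx, hxlt, c₁, hc₁⟩ := h₁ (fun i i' => fun k l : Fin N₂ => χ i i' k l)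
  obtain ⟨y, hy, hylt, c, hc⟩ := h₂ (fun k l =>
    if hk : k < N₂ then if hl : l < N₂ then c₁ ⟨k, hk⟩ ⟨l, hl⟩ else Classical.arbitrary α
    else Classical.arbitrary α)
  refine ⟨x, y, hx, hy, fun i => lt_of_lt_of_le (hxlt i) (le_max_left _ _),
    fun i => lt_of_lt_of_le (hylt i) (le_max_right _ _), c, ?_⟩
  intro i j k l hij hkl
  have e1 : (fun k l : Fin N₂ => χ (x i) (x j) k l) = c₁ := hc₁ i j hij
  have e2 := hc k l hkl
  rw [dif_pos (hylt k), dif_pos (hylt l)] at e2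
  calc χ (x i) (x j) (y k) (y l)
      = (fun k l : Fin N₂ => χ (x i) (x j) (k : ℕ) (l : ℕ)) ⟨y k, hylt k⟩ ⟨y l, hylt l⟩ := rfl
    _ = c₁ ⟨y k, hylt k⟩ ⟨y l, hylt l⟩ := by rw [e1]
    _ = c := e2


lemma lexify {s : ℕ} (w1 : Fin s → Fin s → ℕ)
    (inj : ∀ a b a' b', w1 a b = w1 a' b' → a = a' ∧ b = b')
    (hR : ∀ a b b', b < b' → w1 a b < w1 a b')
    (hD : ∀ a a' b, a < a' → w1 a b < w1 a' b)
    (hT : ∀ a a' b b', a < a' → b < b' → w1 a b' < w1 a' b) :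
    ∀ a b a' b', (w1 a b < w1 a' b' ↔ (a < a' ∨ (a = a' ∧ b < b'))) := by
  have fwd : ∀ a a' b b', a < a' → w1 a b < w1 a' b' := by
    intro a a' b b' haa
    rcases lt_trichotomy b b' with h | rfl | h
    · exact lt_trans (hR a b b' h) (hD a a' b' haa)
    · exact hD a a' b haa
    · exact hT a a' b' b haa h
  intro a b a' b'
  rcases lt_trichotomy a a' with h | rfl | h
  · simp only [h, true_or, iff_true]; exact fwd a a' b b' h
  · constructor
    · intro hlt
      rcases lt_trichotomy b b' with h' | rfl | h'
      · exact Or.inr ⟨rfl, h'⟩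
      · exact absurd hlt (lt_irrefl _)
      · exact absurd (lt_trans hlt (hR a b' b h')) (lt_irrefl _)
    · rintro (h | ⟨-, h⟩)
      · exact absurd h (lt_irrefl _)
      · exact hR a b b' h
  · constructor
    · intro hlt
      exact absurd (lt_trans hlt (fwd a' a b' b h)) (lt_irrefl _)
    · rintro (h' | ⟨rfl, h'⟩)
      · exact absurd h' (asymm h)
      · exact absurd h (lt_irrefl _)

lemma buildLex {n s : ℕ} (w : Fin s → Fin s → ℕ)
    (winj : ∀ a b a' b', w a b = w a' b' → a = a' ∧ b = b')
    (hle : n ≤ s)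
    (hrow : (∀ a b b', b < b' → w a b < w a b') ∨ (∀ a b b', b < b' → w a b' < w a b))
    (hcol : (∀ a a' b, a < a' → w a b < w a' b) ∨ (∀ a a' b, a < a' → w a' b < w a b))
    (hdiag : (∀ a a' b b', a < a' → b < b' → w a b < w a' b') ∨
      (∀ a a' b b', a < a' → b < b' → w a' b' < w a b))
    (hanti : (∀ a a' b b', a < a' → b < b' → w a b' < w a' b) ∨
      (∀ a a' b b', a < a' → b < b' → w a' b < w a b')) :
    ∃ g h : Fin n → Fin s, Injective g ∧ Injective h ∧
      ((∀ a b a' b' : Fin n, (w (g a) (h b) < w (g a') (h b') ↔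
          (a < a' ∨ (a = a' ∧ b < b')))) ∨
       (∀ a b a' b' : Fin n, (w (h b) (g a) < w (h b') (g a') ↔
          (a < a' ∨ (a = a' ∧ b < b'))))) := by
  set E : Fin n → Fin s := Fin.castLE hle with hE
  have hEinj : Injective E := Fin.castLE_injective hle
  have hElt : ∀ a a' : Fin n, E a < E a' ↔ a < a' := fun a a' => Iff.rfl
  have caseStep : ∀ (ρ κ : Fin s → Fin s), Injective ρ → Injective κ →
      (∀ a b b', b < b' → w (ρ a) (κ b) < w (ρ a) (κ b')) →
      (∀ a a' b, a < a' → w (ρ a) (κ b) < w (ρ a') (κ b)) →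
      ((∀ a a' b b', a < a' → b < b' → w (ρ a) (κ b') < w (ρ a') (κ b)) ∨
       (∀ a a' b b', a < a' → b < b' → w (ρ a') (κ b) < w (ρ a) (κ b'))) →
      ∃ g h : Fin n → Fin s, Injective g ∧ Injective h ∧
      ((∀ a b a' b' : Fin n, (w (g a) (h b) < w (g a') (h b') ↔
          (a < a' ∨ (a = a' ∧ b < b')))) ∨
       (∀ a b a' b' : Fin n, (w (h b) (g a) < w (h b') (g a') ↔
          (a < a' ∨ (a = a' ∧ b < b'))))) := by
    intro ρ κ hρ hκ hR1 hD1 hOr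
    have winj1 : ∀ a b a' b', w (ρ a) (κ b) = w (ρ a') (κ b') → a = a' ∧ b = b' := by
      intro a b a' b' h
      obtain ⟨h1, h2⟩ := winj _ _ _ _ h
      exact ⟨hρ h1, hκ h2⟩
    rcases hOr with hT | hT'
    · have hlex := lexify (fun a b => w (ρ a) (κ b)) winj1 hR1 hD1 hT
      refine ⟨ρ ∘ E, κ ∘ E, hρ.comp hEinj, hκ.comp hEinj, Or.inl ?_⟩
      intro a b a' b'
      rw [comp_apply, comp_apply, comp_apply, comp_apply, hlex]
      constructor
      · rintro (h | ⟨h, h'⟩)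
        · exact Or.inl ((hElt _ _).mp h)
        · exact Or.inr ⟨hEinj h, (hElt _ _).mp h'⟩
      · rintro (h | ⟨rfl, h'⟩)
        · exact Or.inl ((hElt _ _).mpr h)
        · exact Or.inr ⟨rfl, (hElt _ _).mpr h'⟩
    · -- transpose
      have winj2 : ∀ a b a' b', w (ρ b) (κ a) = w (ρ b') (κ a') → a = a' ∧ b = b' := by
        intro a b a' b' h
        obtain ⟨h1, h2⟩ := winj _ _ _ _ h
        exact ⟨hκ h2, hρ h1⟩
      have hlex := lexify (fun a b => w (ρ b) (κ a)) winj2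
        (fun a b b' h => hD1 b b' a h) (fun a a' b h => hR1 b a a' h)
        (fun a a' b b' ha hb => hT' b b' a a' hb ha)
      refine ⟨κ ∘ E, ρ ∘ E, hκ.comp hEinj, hρ.comp hEinj, Or.inr ?_⟩
      intro a b a' b'
      rw [comp_apply, comp_apply, comp_apply, comp_apply, hlex]
      constructor
      · rintro (h | ⟨h, h'⟩)
        · exact Or.inl ((hElt _ _).mp h)
        · exact Or.inr ⟨hEinj h, (hElt _ _).mp h'⟩
      · rintro (h | ⟨rfl, h'⟩)
        · exact Or.inl ((hElt _ _).mpr h)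
        · exact Or.inr ⟨rfl, (hElt _ _).mpr h'⟩
  rcases hrow with hR | hR' <;> rcases hcol with hD | hD'
  · refine caseStep id id injective_id injective_id
      (fun a b b' h => hR a b b' h) (fun a a' b h => hD a a' b h) ?_
    rcases hanti with h | h
    · exact Or.inl (fun a a' b b' ha hb => h a a' b b' ha hb)
    · exact Or.inr (fun a a' b b' ha hb => h a a' b b' ha hb)
  · refine caseStep Fin.rev id Fin.rev_injective injective_id
      (fun a b b' h => hR _ b b' h)
      (fun a a' b h => hD' _ _ b (Fin.rev_lt_rev.mpr h)) ?_
    rcases hdiag with h | h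
    · exact Or.inr (fun a a' b b' ha hb => h _ _ b b' (Fin.rev_lt_rev.mpr ha) hb)
    · exact Or.inl (fun a a' b b' ha hb => h _ _ b b' (Fin.rev_lt_rev.mpr ha) hb)
  · refine caseStep id Fin.rev injective_id Fin.rev_injective
      (fun a b b' h => hR' a _ _ (Fin.rev_lt_rev.mpr h))
      (fun a a' b h => hD a a' _ h) ?_
    rcases hdiag with h | h
    · exact Or.inl (fun a a' b b' ha hb => h a a' _ _ ha (Fin.rev_lt_rev.mpr hb))
    · exact Or.inr (fun a a' b b' ha hb => h a a' _ _ ha (Fin.rev_lt_rev.mpr hb))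
  · refine caseStep Fin.rev Fin.rev Fin.rev_injective Fin.rev_injective
      (fun a b b' h => hR' _ _ _ (Fin.rev_lt_rev.mpr h))
      (fun a a' b h => hD' _ _ _ (Fin.rev_lt_rev.mpr h)) ?_
    rcases hanti with h | h
    · exact Or.inr (fun a a' b b' ha hb => h _ _ _ _ (Fin.rev_lt_rev.mpr ha) (Fin.rev_lt_rev.mpr hb))
    · exact Or.inl (fun a a' b b' ha hb => h _ _ _ _ (Fin.rev_lt_rev.mpr ha) (Fin.rev_lt_rev.mpr hb))


section Aux

/-- Selection function: `sel 0 x y = x`, `sel 1 x y = y`. -/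
def sel {β : Type*} (k : Fin 2) (x y : β) : β := if k = 0 then x else y

@[simp] lemma sel_zero {β : Type*} (x y : β) : sel (0 : Fin 2) x y = x := rfl

@[simp] lemma sel_one {β : Type*} (x y : β) : sel (1 : Fin 2) x y = y := rfl

lemma natLex {n : ℕ} (hn : 1 ≤ n) {a b c d : ℕ} (ha : a < n) (hb : b < n)
    (hc : c < n) (hd : d < n) :
    (n * (a + 1) + (b + 1) < n * (c + 1) + (d + 1)) ↔ (a < c ∨ (a = c ∧ b < d)) := by
  rcases lt_trichotomy a c with h | rfl | h
  · apply iff_of_true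
    · have h1 : n * (a + 2) ≤ n * (c + 1) := Nat.mul_le_mul_left _ (by omega)
      have h2 : n * (a + 2) = n * (a + 1) + n := by ring
      omega
    · exact Or.inl h
  · constructor
    · intro h'
      exact Or.inr ⟨rfl, by omega⟩
    · rintro (h' | ⟨-, h'⟩)
      · exact absurd h' (lt_irrefl _)
      · omega
  · apply iff_of_false
    · have h1 : n * (c + 2) ≤ n * (a + 1) := Nat.mul_le_mul_left _ (by omega)
      have h2 : n * (c + 2) = n * (c + 1) + n := by ring
      omega
    · rintro (h' | ⟨rfl, -⟩)
      · omega
      · exact absurd h (lt_irrefl _)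

end Aux

lemma finishContains {n m : ℕ} (hn : 1 ≤ n) (L : Sym2 (Fin (2 * m)) → ℕ)
    (F G : Fin n → Fin (2 * m)) (hFinj : Function.Injective F)
    (hGinj : Function.Injective G)
    (hAdjFG : ∀ i j, (SimpleGraph.fromRel
      fun a b : Fin (2 * m) => (a : ℕ) < m ∧ m ≤ (b : ℕ)).Adj (F i) (G j))
    (hneFG : ∀ i j, F i ≠ G j)
    (hLex : ∀ i j i' j' : Fin n, (L s(F i, G j) < L s(F i', G j') ↔
      (i < i' ∨ (i = i' ∧ j < j')))) :
    (EOGraph.mk (2 * m) (SimpleGraph.fromRel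
      fun a b : Fin (2 * m) => (a : ℕ) < m ∧ m ≤ (b : ℕ)) L).Contains (KnnCan n) := by
  -- the embedding
  set f : Fin (2 * n) → Fin (2 * m) := fun a =>
    if hh : (a : ℕ) < n then F ⟨a, hh⟩
    else G ⟨(a : ℕ) - n, by have : (a : ℕ) < 2 * n := a.isLt; omega⟩ with hf
  have hfleft : ∀ (a : Fin (2 * n)) (hh : (a : ℕ) < n), f a = F ⟨a, hh⟩ :=
    fun a hh => dif_pos hh
  have hfright : ∀ (a : Fin (2 * n)) (hh : n ≤ (a : ℕ)),
      f a = G ⟨(a : ℕ) - n, by have : (a : ℕ) < 2 * n := a.isLt; omega⟩ :=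
    fun a hh => dif_neg (not_lt.mpr hh)
  have hfinj : Injective f := by
    intro a b hab
    by_cases ha : (a : ℕ) < n <;> by_cases hb : (b : ℕ) < n
    · rw [hfleft a ha, hfleft b hb] at hab
      have h2 := congrArg Fin.val (hFinj hab)
      exact Fin.ext (by simpa using h2)
    · rw [hfleft a ha, hfright b (by omega)] at hab
      exact absurd hab (hneFG _ _)
    · rw [hfright a (by omega), hfleft b hb] at hab
      exact absurd hab.symm (hneFG _ _)
    · rw [hfright a (by omega), hfright b (by omega)] at hab
      have h2 := congrArg Fin.val (hGinj hab)
      simp only at h2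
      have ha2 : (a : ℕ) < 2 * n := a.isLt
      have hb2 : (b : ℕ) < 2 * n := b.isLt
      exact Fin.ext (by omega)
  have hKadj : ∀ a b : Fin (2 * n), (KnnCan n).graph.Adj a b ↔
      (a ≠ b ∧ (((a : ℕ) < n ∧ n ≤ (b : ℕ)) ∨ ((b : ℕ) < n ∧ n ≤ (a : ℕ)))) := by
    intro a b
    exact SimpleGraph.fromRel_adj _ a b
  have hKlab : ∀ a b : Fin (2 * n), (a : ℕ) < n → n ≤ (b : ℕ) →
      (KnnCan n).label s(a, b) = n * ((a : ℕ) + 1) + ((b : ℕ) - n + 1) := by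
    intro a b ha hb
    have hab : a ≤ b := by rw [Fin.le_def]; omega
    have hlab : (KnnCan n).label =
        symLabel fun a b : Fin (2 * n) => n * ((a : ℕ) + 1) + ((b : ℕ) - n + 1) := rfl
    rw [hlab]
    unfold symLabel
    erw [Sym2.lift_mk]
    dsimp only
    rw [min_eq_left hab, max_eq_right hab]
  have key : ∀ a b a' b' : Fin (2 * n), (a : ℕ) < n → n ≤ (b : ℕ) →
      (a' : ℕ) < n → n ≤ (b' : ℕ) →
      ((KnnCan n).label s(a, b) < (KnnCan n).label s(a', b') ↔
        L s(f a, f b) < L s(f a', f b')) := by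
    intro a b a' b' ha hb ha' hb'
    rw [hKlab a b ha hb, hKlab a' b' ha' hb', hfleft a ha, hfright b hb,
      hfleft a' ha', hfright b' hb', hLex]
    have hbn : (b : ℕ) - n < n := by have : (b : ℕ) < 2 * n := b.isLt; omega
    have hbn' : (b' : ℕ) - n < n := by have : (b' : ℕ) < 2 * n := b'.isLt; omega
    rw [natLex hn ha hbn ha' hbn']
    simp only [Fin.mk_lt_mk, Fin.mk.injEq]
  refine ⟨(⟨f, hfinj⟩ : Fin (2 * n) ↪ Fin (2 * m)), fun (a b : Fin (2 * n)) hab => ?_,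
    fun (a b a' b' : Fin (2 * n)) hab ha'b' => ?_⟩
  · show (SimpleGraph.fromRel fun a b : Fin (2 * m) => (a : ℕ) < m ∧ m ≤ (b : ℕ)).Adj (f a) (f b)
    replace hab := (hKadj a b).mp hab
    obtain ⟨-, h1 | h1⟩ := hab
    · rw [hfleft a h1.1, hfright b h1.2]
      exact hAdjFG _ _
    · rw [hfleft b h1.1, hfright a h1.2]
      exact (hAdjFG _ _).symm
  · show (KnnCan n).label s(a, b) < (KnnCan n).label s(a', b') ↔ L s(f a, f b) < L s(f a', f b')
    replace hab := (hKadj a b).mp hab; replace ha'b' := (hKadj a' b').mp ha'b'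
    obtain ⟨-, h1 | h1⟩ := hab <;> obtain ⟨-, h2 | h2⟩ := ha'b'
    · exact key a b a' b' h1.1 h1.2 h2.1 h2.2
    · erw [show s(a', b') = s(b', a') from Sym2.eq_swap,
        show s(f a', f b') = s(f b', f a') from Sym2.eq_swap]
      exact key a b b' a' h1.1 h1.2 h2.1 h2.2
    · erw [show s(a, b) = s(b, a) from Sym2.eq_swap,
        show s(f a, f b) = s(f b, f a) from Sym2.eq_swap]
      exact key b a a' b' h1.1 h1.2 h2.1 h2.2
    · erw [show s(a, b) = s(b, a) from Sym2.eq_swap,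
        show s(f a, f b) = s(f b, f a) from Sym2.eq_swap,
        show s(a', b') = s(b', a') from Sym2.eq_swap,
        show s(f a', f b') = s(f b', f a') from Sym2.eq_swap]
      exact key b a b' a' h1.1 h1.2 h2.1 h2.2

set_option maxHeartbeats 2000000 in
theorem knn_cannot_avoid_knncan (n : ℕ) (hn : 1 ≤ n) :
    ∃ m₀ : ℕ, ∀ m : ℕ, m₀ ≤ m →
      ¬ CanAvoid (SimpleGraph.fromRel fun a b : Fin (2 * m) => (a : ℕ) < m ∧ m ≤ (b : ℕ))
        {KnnCan n} := by
  classical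
  obtain ⟨N, hN⟩ := gridRamsey (Fin 2 → Fin 2 → Fin 2 → Fin 2 → Bool) (n + 2)
  refine ⟨N + 1, fun m hm => ?_⟩
  rintro ⟨L, hval, havoid⟩
  have hmpos : 0 < m := by omega
  have hNm : N ≤ m := by omega
  refine havoid (KnnCan n) rfl ?_
  -- the labeling of cells of the m × m grid
  set ℓ : ℕ → ℕ → ℕ := fun i j =>
    if h : i < m ∧ j < m then
      L s((⟨i, by omega⟩ : Fin (2 * m)), (⟨m + j, by omega⟩ : Fin (2 * m)))
    else 0 with hℓ
  set χ : ℕ → ℕ → ℕ → ℕ → (Fin 2 → Fin 2 → Fin 2 → Fin 2 → Bool) := fun i i' j j' =>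
    fun p r q t => decide (ℓ (sel p i i') (sel r j j') < ℓ (sel q i i') (sel t j j')) with hχ
  obtain ⟨x, y, hx, hy, hxlt, hylt, c, hc⟩ := hN χ
  have hxm : ∀ i, x i < m := fun i => lt_of_lt_of_le (hxlt i) hNm
  have hym : ∀ i, y i < m := fun i => lt_of_lt_of_le (hylt i) hNm
  -- vertex maps for the selected rows and columns
  set Lv : Fin (n + 2) → Fin (2 * m) := fun a => ⟨x a, by have := hxm a; omega⟩ with hLv
  set Rv : Fin (n + 2) → Fin (2 * m) := fun b => ⟨m + y b, by have := hym b; omega⟩ with hRv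
  set w : Fin (n + 2) → Fin (n + 2) → ℕ := fun a b => ℓ (x a) (y b) with hw
  have hwL : ∀ a b, w a b = L s(Lv a, Rv b) := by
    intro a b
    show (if h : x a < m ∧ y b < m then
      L s((⟨x a, by omega⟩ : Fin (2 * m)), (⟨m + y b, by omega⟩ : Fin (2 * m)))
      else 0) = L s(Lv a, Rv b)
    rw [dif_pos ⟨hxm a, hym b⟩]
  have hedge : ∀ a b, (SimpleGraph.fromRel
      fun a b : Fin (2 * m) => (a : ℕ) < m ∧ m ≤ (b : ℕ)).Adj (Lv a) (Rv b) := by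
    intro a b
    rw [SimpleGraph.fromRel_adj]
    constructor
    · exact Fin.ne_of_val_ne (by have := hxm a; simp [hLv, hRv]; omega)
    · left
      exact ⟨by simp [hLv]; exact hxm a, by simp [hRv]⟩
  have hmem : ∀ a b, s(Lv a, Rv b) ∈ (SimpleGraph.fromRel
      fun a b : Fin (2 * m) => (a : ℕ) < m ∧ m ≤ (b : ℕ)).edgeSet := by
    intro a b; rw [SimpleGraph.mem_edgeSet]; exact hedge a b
  have winj : ∀ a b a' b', w a b = w a' b' → a = a' ∧ b = b' := by
    intro a b a' b' h
    rw [hwL, hwL] at h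
    have := hval _ (hmem a b) _ (hmem a' b') h
    rw [Sym2.eq_iff] at this
    rcases this with ⟨h1, h2⟩ | ⟨h1, h2⟩
    · have e1 : x a = x a' := congrArg Fin.val h1
      have e2 : m + y b = m + y b' := congrArg Fin.val h2
      exact ⟨hx.injective e1, hy.injective (by omega)⟩
    · have e1 : x a = m + y b' := congrArg Fin.val h1
      have := hxm a
      omega
  -- the monochromatic pattern
  have hpat : ∀ (a a' b b' : Fin (n + 2)), a < a' → b < b' → ∀ p r q t : Fin 2,
      (w (sel p a a') (sel r b b') < w (sel q a a') (sel t b b') ↔ c p r q t = true) := by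
    intro a a' b b' haa hbb p r q t
    have hsel : ∀ (k : Fin 2) (u v : Fin (n + 2)), x (sel k u v) = sel k (x u) (x v) := by
      intro k u v; by_cases h : k = 0 <;> simp [sel, h]
    have hsely : ∀ (k : Fin 2) (u v : Fin (n + 2)), y (sel k u v) = sel k (y u) (y v) := by
      intro k u v; by_cases h : k = 0 <;> simp [sel, h]
    have he := hc a a' b b' haa hbb
    have he2 := congrFun (congrFun (congrFun (congrFun he p) r) q) t
    simp only [hχ] at he2
    show ℓ (x (sel p a a')) (y (sel r b b')) < ℓ (x (sel q a a')) (y (sel t b b')) ↔ _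
    rw [hsel, hsel, hsely, hsely, ← he2]
    exact decide_eq_true_iff.symm
  -- distinguished elements
  have h2lt : (2 : ℕ) < n + 2 := by omega
  set z0 : Fin (n + 2) := ⟨0, by omega⟩ with hz0
  set z1 : Fin (n + 2) := ⟨1, by omega⟩ with hz1
  set z2 : Fin (n + 2) := ⟨2, by omega⟩ with hz2
  have h01 : z0 < z1 := by simp [hz0, hz1, Fin.lt_def]
  have h12 : z1 < z2 := by simp [hz1, hz2, Fin.lt_def]
  -- row dichotomy
  have hrowA : ∀ a a' b b', a < a' → b < b' → (w a b < w a b' ↔ c 0 0 0 1 = true) := by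
    intro a a' b b' haa hbb
    simpa using hpat a a' b b' haa hbb 0 0 0 1
  have hrowB : ∀ a a' b b', a < a' → b < b' → (w a' b < w a' b' ↔ c 1 0 1 1 = true) := by
    intro a a' b b' haa hbb
    simpa using hpat a a' b b' haa hbb 1 0 1 1
  have hbridge : (c 0 0 0 1 = true) ↔ (c 1 0 1 1 = true) :=
    ((hrowA z1 z2 z0 z1 h12 h01).symm).trans (hrowB z0 z1 z0 z1 h01 h01)
  have hrowIff : ∀ a b b', b < b' → (w a b < w a b' ↔ c 0 0 0 1 = true) := by
    intro a b b' hbb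
    by_cases hA : (a : ℕ) + 1 < n + 2
    · exact hrowA a ⟨a + 1, hA⟩ b b' (by simp [Fin.lt_def]) hbb
    · have h0a : z0 < a := by
        rw [Fin.lt_def]; have := a.isLt; omega
      exact (hrowB z0 a b b' h0a hbb).trans hbridge.symm
  -- column dichotomy
  have hcolA : ∀ a a' b b', a < a' → b < b' → (w a b < w a' b ↔ c 0 0 1 0 = true) := by
    intro a a' b b' haa hbb
    simpa using hpat a a' b b' haa hbb 0 0 1 0
  have hcolB : ∀ a a' b b', a < a' → b < b' → (w a b' < w a' b' ↔ c 0 1 1 1 = true) := by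
    intro a a' b b' haa hbb
    simpa using hpat a a' b b' haa hbb 0 1 1 1
  have hbridge2 : (c 0 0 1 0 = true) ↔ (c 0 1 1 1 = true) :=
    ((hcolA z0 z1 z1 z2 h01 h12).symm).trans (hcolB z0 z1 z0 z1 h01 h01)
  have hcolIff : ∀ a a' b, a < a' → (w a b < w a' b ↔ c 0 0 1 0 = true) := by
    intro a a' b haa
    by_cases hB : (b : ℕ) + 1 < n + 2
    · exact hcolA a a' b ⟨b + 1, hB⟩ haa (by simp [Fin.lt_def])
    · have h0b : z0 < b := by
        rw [Fin.lt_def]; have := b.isLt; omega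
      exact (hcolB a a' z0 b haa h0b).trans hbridge2.symm
  -- diagonal and antidiagonal
  have hdiagIff : ∀ a a' b b', a < a' → b < b' → (w a b < w a' b' ↔ c 0 0 1 1 = true) := by
    intro a a' b b' haa hbb
    simpa using hpat a a' b b' haa hbb 0 0 1 1
  have hantiIff : ∀ a a' b b', a < a' → b < b' → (w a b' < w a' b ↔ c 0 1 1 0 = true) := by
    intro a a' b b' haa hbb
    simpa using hpat a a' b b' haa hbb 0 1 1 0
  -- dichotomies
  have hrowOr : (∀ a b b', b < b' → w a b < w a b') ∨ (∀ a b b', b < b' → w a b' < w a b) := by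
    by_cases hb : c 0 0 0 1 = true
    · exact Or.inl fun a b b' h => (hrowIff a b b' h).mpr hb
    · refine Or.inr fun a b b' h => ?_
      have h1 : ¬ (w a b < w a b') := fun hh => hb ((hrowIff a b b' h).mp hh)
      have h2 : w a b' ≠ w a b := fun hh => (by omega : b' ≠ b) (winj _ _ _ _ hh).2
      omega
  have hcolOr : (∀ a a' b, a < a' → w a b < w a' b) ∨ (∀ a a' b, a < a' → w a' b < w a b) := by
    by_cases hb : c 0 0 1 0 = true
    · exact Or.inl fun a a' b h => (hcolIff a a' b h).mpr hb
    · refine Or.inr fun a a' b h => ?_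
      have h1 : ¬ (w a b < w a' b) := fun hh => hb ((hcolIff a a' b h).mp hh)
      have h2 : w a' b ≠ w a b := fun hh => (by omega : a' ≠ a) (winj _ _ _ _ hh).1
      omega
  have hdiagOr : (∀ a a' b b', a < a' → b < b' → w a b < w a' b') ∨
      (∀ a a' b b', a < a' → b < b' → w a' b' < w a b) := by
    by_cases hb : c 0 0 1 1 = true
    · exact Or.inl fun a a' b b' h h' => (hdiagIff a a' b b' h h').mpr hb
    · refine Or.inr fun a a' b b' h h' => ?_
      have h1 : ¬ (w a b < w a' b') := fun hh => hb ((hdiagIff a a' b b' h h').mp hh)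
      have h2 : w a' b' ≠ w a b := fun hh => (by omega : a' ≠ a) (winj _ _ _ _ hh).1
      omega
  have hantiOr : (∀ a a' b b', a < a' → b < b' → w a b' < w a' b) ∨
      (∀ a a' b b', a < a' → b < b' → w a' b < w a b') := by
    by_cases hb : c 0 1 1 0 = true
    · exact Or.inl fun a a' b b' h h' => (hantiIff a a' b b' h h').mpr hb
    · refine Or.inr fun a a' b b' h h' => ?_
      have h1 : ¬ (w a b' < w a' b) := fun hh => hb ((hantiIff a a' b b' h h').mp hh)
      have h2 : w a' b ≠ w a b' := fun hh => (by omega : a' ≠ a) (winj _ _ _ _ hh).1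
      omega
  obtain ⟨g, h, hginj, hhinj, hmain⟩ :=
    buildLex w winj (by omega : n ≤ n + 2) hrowOr hcolOr hdiagOr hantiOr
  -- construct the two sides of the embedded canonical K_{n,n}
  have hFG : ∃ F G : Fin n → Fin (2 * m), Injective F ∧ Injective G ∧
      (∀ i j, (SimpleGraph.fromRel
        fun a b : Fin (2 * m) => (a : ℕ) < m ∧ m ≤ (b : ℕ)).Adj (F i) (G j)) ∧
      (∀ i j, F i ≠ G j) ∧
      (∀ i j i' j' : Fin n, (L s(F i, G j) < L s(F i', G j') ↔
        (i < i' ∨ (i = i' ∧ j < j')))) := by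
    have hLvinj : Injective Lv := fun a b hab => hx.injective (congrArg Fin.val hab)
    have hRvinj : Injective Rv := by
      intro a b hab
      have h2 := congrArg Fin.val hab
      simp only [hRv] at h2
      exact hy.injective (by omega)
    have hneLR : ∀ a b, Lv a ≠ Rv b := by
      intro a b hab
      have h2 := congrArg Fin.val hab
      simp only [hLv, hRv] at h2
      have := hxm a
      omega
    rcases hmain with hmain | hmain
    · refine ⟨Lv ∘ g, Rv ∘ h, hLvinj.comp hginj, hRvinj.comp hhinj,
        fun i j => hedge _ _, fun i j => hneLR _ _, ?_⟩
      intro i j i' j'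
      rw [comp_apply, comp_apply, comp_apply, comp_apply, ← hwL, ← hwL]
      exact hmain i j i' j'
    · have hswap : ∀ X Y, L s(Rv X, Lv Y) = w Y X := by
        intro X Y
        rw [Sym2.eq_swap]
        exact (hwL Y X).symm
      refine ⟨Rv ∘ g, Lv ∘ h, hRvinj.comp hginj, hLvinj.comp hhinj,
        fun i j => (hedge _ _).symm, fun i j hij => hneLR _ _ hij.symm, ?_⟩
      intro i j i' j'
      rw [comp_apply, comp_apply, comp_apply, comp_apply, hswap, hswap]
      exact hmain i j i' j'
  obtain ⟨F, G, hFinj, hGinj, hAdjFG, hneFG, hLex⟩ := hFG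
  exact finishContains hn L F G hFinj hGinj hAdjFG hneFG hLex
end

section
/- For every n ≥ 2, the order chromatic number of the edge-ordered graph D_n satisfies χ'_<(D_n) > 2^{n-2}. -/
/-- The underlying simple graph of `D_n`: vertices `0,…,n-1` (standing for
`x_1,…,x_n`), the edges being exactly the pairs incident to `x_1 = 0` or to
`x_n = n-1`. -/
def Dunder (n : ℕ) : SimpleGraph (Fin n) :=
  SimpleGraph.fromRel fun a b => (a : ℕ) = 0 ∨ (b : ℕ) = n - 1

/-- The edge-ordered graph `D_n` with edge-order
`x_1x_2 < x_1x_3 < ⋯ < x_1x_n < x_2x_n < ⋯ < x_{n-1}x_n`. -/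
def Dgraph (n : ℕ) : EOGraph where
  nv := n
  graph := Dunder n
  label := symLabel fun a b => if (a : ℕ) = 0 then (b : ℕ) else (n - 1) + (a : ℕ)

namespace DnP


def hdiff (x y : ℕ) : ℕ :=
  if x / 2 = y / 2 then 0 else hdiff (x / 2) (y / 2) + 1
  termination_by x + y
  decreasing_by omega

def tob3 (x : ℕ) : ℕ :=
  if x = 0 then 0 else 3 * tob3 (x / 2) + x % 2
  termination_by x
  decreasing_by omega

lemma tob3_eq (x : ℕ) : tob3 x = 3 * tob3 (x / 2) + x % 2 := by
  rw [tob3]; split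
  · next h => subst h; rw [tob3]; simp
  · rfl

lemma tob3_zero : tob3 0 = 0 := by rw [tob3]; simp

lemma tob3_two_mul (q : ℕ) : tob3 (2 * q) = 3 * tob3 q := by
  rw [tob3_eq]; simp [Nat.mul_div_cancel_left, Nat.mul_mod_right]

lemma tob3_two_mul_add_one (q : ℕ) : tob3 (2 * q + 1) = 3 * tob3 q + 1 := by
  rw [tob3_eq]
  have h1 : (2 * q + 1) / 2 = q := by omega
  have h2 : (2 * q + 1) % 2 = 1 := by omega
  rw [h1, h2]

lemma tob3_strictMono : StrictMono tob3 := by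
  have key : ∀ y x : ℕ, x < y → tob3 x < tob3 y := by
    intro y
    induction y using Nat.strong_induction_on with
    | _ y ih =>
      intro x hxy
      rw [tob3_eq x, tob3_eq y]
      rcases Nat.lt_or_ge (x / 2) (y / 2) with h | h
      · have := ih (y / 2) (by omega) (x / 2) h
        omega
      · have hq : x / 2 = y / 2 := by omega
        rw [hq]
        omega
  exact fun x y h => key y x h

lemma tob3_mono : Monotone tob3 := tob3_strictMono.monotone

lemma tob3_lt_pow {x s : ℕ} (h : x < 2 ^ s) : tob3 x < 3 ^ s := by
  induction s generalizing x with
  | zero => interval_cases x; simp [tob3_zero]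
  | succ s ih =>
    have hx2 : x / 2 < 2 ^ s := by
      have : (2:ℕ) ^ (s+1) = 2 * 2 ^ s := by rw [pow_succ']
      omega
    have := ih hx2
    have h3 : (3:ℕ) ^ (s+1) = 3 * 3 ^ s := by rw [pow_succ']
    rw [tob3_eq]
    omega

lemma tob3_concat {s a r : ℕ} (h : r < 2 ^ s) : tob3 (a * 2 ^ s + r) = tob3 a * 3 ^ s + tob3 r := by
  induction s generalizing a r with
  | zero =>
    have hr : r = 0 := by omega
    subst hr; simp [tob3_zero]
  | succ s ih =>
    have h2 : (2:ℕ) ^ (s+1) = 2 * 2 ^ s := by rw [pow_succ']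
    have h3 : (3:ℕ) ^ (s+1) = 3 * 3 ^ s := by rw [pow_succ']
    have hdiv : (a * 2 ^ (s+1) + r) / 2 = a * 2 ^ s + r / 2 := by
      rw [h2, show a * (2 * 2 ^ s) + r = r + (a * 2 ^ s) * 2 by ring,
        Nat.add_mul_div_right _ _ (by norm_num : (0:ℕ) < 2), Nat.add_comm]
    have hmod : (a * 2 ^ (s+1) + r) % 2 = r % 2 := by
      rw [h2, show a * (2 * 2 ^ s) + r = r + (a * 2 ^ s) * 2 by ring,
        Nat.add_mul_mod_self_right]
    rw [tob3_eq, hdiv, hmod, ih (by omega), tob3_eq r]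
    ring

lemma tob3_pow_sub_one (s : ℕ) : 2 * tob3 (2 ^ s - 1) + 1 = 3 ^ s := by
  induction s with
  | zero => simp [tob3_zero]
  | succ s ih =>
    have h3 : (3:ℕ) ^ (s+1) = 3 * 3 ^ s := by rw [pow_succ']
    have he : (2:ℕ) ^ (s+1) - 1 = 2 * (2 ^ s - 1) + 1 := by
      have h2 : (2:ℕ) ^ (s+1) = 2 * 2 ^ s := by rw [pow_succ']
      have : (1:ℕ) ≤ 2 ^ s := Nat.one_le_two_pow
      omega
    rw [he, tob3_two_mul_add_one]
    omega

lemma hdiff_succ_eq (x y : ℕ) : x / 2 ^ (hdiff x y + 1) = y / 2 ^ (hdiff x y + 1) := by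
  rw [hdiff]; split
  · next h => simpa [pow_one] using h
  · next h =>
    have ih := hdiff_succ_eq (x / 2) (y / 2)
    have hx : x / 2 ^ (hdiff (x/2) (y/2) + 1 + 1) = x / 2 / 2 ^ (hdiff (x/2) (y/2) + 1) := by
      rw [Nat.div_div_eq_div_mul, pow_succ']
    have hy : y / 2 ^ (hdiff (x/2) (y/2) + 1 + 1) = y / 2 / 2 ^ (hdiff (x/2) (y/2) + 1) := by
      rw [Nat.div_div_eq_div_mul, pow_succ']
    rw [hx, hy, ih]
  termination_by x + y
  decreasing_by omega

lemma hdiff_ne (x y : ℕ) (h : x ≠ y) : x / 2 ^ (hdiff x y) ≠ y / 2 ^ (hdiff x y) := by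
  rw [hdiff]; split
  · next h2 => simpa using h
  · next h2 =>
    have ih := hdiff_ne (x / 2) (y / 2) h2
    have hx : x / 2 ^ (hdiff (x/2) (y/2) + 1) = x / 2 / 2 ^ (hdiff (x/2) (y/2)) := by
      rw [Nat.div_div_eq_div_mul, pow_succ']
    have hy : y / 2 ^ (hdiff (x/2) (y/2) + 1) = y / 2 / 2 ^ (hdiff (x/2) (y/2)) := by
      rw [Nat.div_div_eq_div_mul, pow_succ']
    rw [hx, hy]; exact ih
  termination_by x + y
  decreasing_by omega

lemma div_pow_agree_mono {x y : ℕ} (s : ℕ) {t : ℕ} (hst : s ≤ t) (h : x / 2 ^ s = y / 2 ^ s) :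
    x / 2 ^ t = y / 2 ^ t := by
  rw [show t = s + (t - s) by omega, pow_add, ← Nat.div_div_eq_div_mul,
    ← Nat.div_div_eq_div_mul, h]

lemma le_hdiff {x y s : ℕ} (h : x / 2 ^ s ≠ y / 2 ^ s) : s ≤ hdiff x y := by
  by_contra hc
  exact h (div_pow_agree_mono (hdiff x y + 1) (by omega) (hdiff_succ_eq x y))

lemma hdiff_lt {x y s : ℕ} (hxy : x ≠ y) (h : x / 2 ^ s = y / 2 ^ s) : hdiff x y < s := by
  by_contra hc
  exact hdiff_ne x y hxy (div_pow_agree_mono s (by omega) h)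

lemma hdiff_symm (x y : ℕ) : hdiff x y = hdiff y x := by
  rcases eq_or_ne x y with rfl | h
  · rfl
  · have h1 := hdiff_lt h.symm (hdiff_succ_eq x y).symm
    have h2 := hdiff_lt h (hdiff_succ_eq y x).symm
    omega

/-! ### The block key -/

def blk (x y : ℕ) : ℕ :=
  3 ^ (hdiff x y + 1) * (3 * tob3 (max x y / 2 ^ (hdiff x y + 1)) + 2)

lemma blk_comm (x y : ℕ) : blk x y = blk y x := by
  rw [blk, blk, hdiff_symm, max_comm]

lemma lemA {x y L q' : ℕ} (hxy : x ≠ y) (hx : x / 2 ^ L = q') (hy : y / 2 ^ L = q') :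
    2 * blk x y ≤ 6 * (3 ^ L * tob3 q') + 3 * 3 ^ L + 3 ^ (hdiff x y + 1) := by
  have hjL : hdiff x y < L := hdiff_lt hxy (hx.trans hy.symm)
  set j := hdiff x y with hj
  set u := L - (j + 1) with hu
  have hL : L = (j + 1) + u := by omega
  have hm : max x y / 2 ^ L = q' := by
    rcases max_choice x y with h | h <;> rw [h] <;> assumption
  set qe := max x y / 2 ^ (j + 1) with hqe
  have hqeq : qe / 2 ^ u = q' := by
    rw [hqe, Nat.div_div_eq_div_mul, ← pow_add, ← hL, hm]
  set r := qe % 2 ^ u with hr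
  have hupos : 0 < (2:ℕ) ^ u := pow_pos (by norm_num) _
  have hrlt : r < 2 ^ u := Nat.mod_lt _ hupos
  have hdecomp : qe = q' * 2 ^ u + r := by
    have h0 := Nat.div_add_mod qe (2 ^ u)
    rw [hqeq] at h0
    rw [mul_comm]
    omega
  have htq : tob3 qe = tob3 q' * 3 ^ u + tob3 r := by rw [hdecomp]; exact tob3_concat hrlt
  have hrb : 2 * tob3 r + 1 ≤ 3 ^ u := by
    have h1 := tob3_mono (show r ≤ 2 ^ u - 1 by omega)
    have h2 := tob3_pow_sub_one u
    omega
  have hblk : blk x y = 3 ^ (j+1) * (3 * (tob3 q' * 3 ^ u + tob3 r) + 2) := by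
    rw [blk, ← hj, ← hqe, htq]
  have hpow : (3:ℕ) ^ L = 3 ^ (j+1) * 3 ^ u := by rw [hL, pow_add]
  rw [hblk, hpow]
  calc 2 * (3 ^ (j+1) * (3 * (tob3 q' * 3 ^ u + tob3 r) + 2))
      = 3 ^ (j+1) * (6 * (tob3 q' * 3 ^ u) + (2 * (3 * tob3 r + 2))) := by ring
    _ ≤ 3 ^ (j+1) * (6 * (tob3 q' * 3 ^ u) + (3 * 3 ^ u + 1)) := by
        apply Nat.mul_le_mul_left
        omega
    _ = 6 * (3 ^ (j+1) * 3 ^ u * tob3 q') + 3 * (3 ^ (j+1) * 3 ^ u) + 3 ^ (j+1) := by ring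

lemma blk_cross {x y J q : ℕ} (hx1 : x / 2 ^ (J+1) = q) (hy1 : y / 2 ^ (J+1) = q)
    (hxy : x / 2 ^ J ≠ y / 2 ^ J) : blk x y = 3 ^ (J+1) * (3 * tob3 q + 2) := by
  have hne : x ≠ y := fun h => hxy (by rw [h])
  have h1 : J ≤ hdiff x y := le_hdiff hxy
  have h2 : hdiff x y < J + 1 := hdiff_lt hne (hx1.trans hy1.symm)
  have hJ : hdiff x y = J := by omega
  have hm : max x y / 2 ^ (J+1) = q := by
    rcases max_choice x y with h | h <;> rw [h] <;> assumption
  rw [blk, hJ, hm]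

lemma div_succ_of_div {x J t : ℕ} (h : x / 2 ^ J = t) : x / 2 ^ (J+1) = t / 2 := by
  rw [pow_succ, ← Nat.div_div_eq_div_mul, h]

lemma blk_int_lt_cross {x y x' y' J q : ℕ} (hxy : x ≠ y) (hagree : x / 2 ^ J = y / 2 ^ J)
    (hx1 : x / 2 ^ (J+1) = q)
    (hx'1 : x' / 2 ^ (J+1) = q) (hy'1 : y' / 2 ^ (J+1) = q) (hcr : x' / 2 ^ J ≠ y' / 2 ^ J) :
    blk x y < blk x' y' := by
  have hcross := blk_cross hx'1 hy'1 hcr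
  set t := x / 2 ^ J with ht
  have hty : y / 2 ^ J = t := hagree.symm
  have ht2 : t / 2 = q := by
    have := div_succ_of_div ht.symm
    omega
  have hA := lemA hxy ht.symm hty
  have hjJ : hdiff x y < J := hdiff_lt hxy hagree
  have htT : tob3 t ≤ 3 * tob3 q + 1 := by
    have hcase : t = 2*q ∨ t = 2*q+1 := by omega
    rcases hcase with h | h
    · rw [h, tob3_two_mul]; omega
    · rw [h, tob3_two_mul_add_one]
  have hp1 : (3:ℕ) ^ (hdiff x y + 1) ≤ 3 ^ J := Nat.pow_le_pow_right (by norm_num) (by omega)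
  have hp2 : (3:ℕ) ^ J * tob3 t ≤ 3 * (3 ^ J * tob3 q) + 3 ^ J := by
    calc (3:ℕ) ^ J * tob3 t ≤ 3 ^ J * (3 * tob3 q + 1) := Nat.mul_le_mul_left _ htT
      _ = 3 * (3 ^ J * tob3 q) + 3 ^ J := by ring
  have e2 : (3:ℕ) ^ (J+1) * (3 * tob3 q + 2) = 9 * (3 ^ J * tob3 q) + 6 * 3 ^ J := by
    rw [pow_succ]; ring
  have hBpos : 1 ≤ (3:ℕ) ^ J := Nat.one_le_pow _ _ (by norm_num)
  rw [hcross, e2]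
  omega

/-! ### Vertex and edge keys -/

variable {nv : ℕ}

def sig (c : Fin nv → ℕ) (v : Fin nv) : ℕ := c v * nv + v.val

def lo (c : Fin nv → ℕ) (a b : Fin nv) : Fin nv :=
  if c a < c b then a else if c b < c a then b else min a b

def hi (c : Fin nv → ℕ) (a b : Fin nv) : Fin nv :=
  if c a < c b then b else if c b < c a then a else max a b

def K2 (NN : ℕ) (c : Fin nv → ℕ) (a b : Fin nv) : ℕ :=
  blk (c a) (c b) * (2 ^ NN * nv * (2 ^ NN * nv))
    + (sig c (lo c a b) * (2 ^ NN * nv) + (2 ^ NN * nv - 1 - sig c (hi c a b)))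

lemma lo_comm (c : Fin nv → ℕ) (a b : Fin nv) : lo c a b = lo c b a := by
  unfold lo
  rcases lt_trichotomy (c a) (c b) with h | h | h
  · simp [h, asymm h]
  · simp [h, lt_irrefl, min_comm]
  · simp [h, asymm h]

lemma hi_comm (c : Fin nv → ℕ) (a b : Fin nv) : hi c a b = hi c b a := by
  unfold hi
  rcases lt_trichotomy (c a) (c b) with h | h | h
  · simp [h, asymm h]
  · simp [h, lt_irrefl, max_comm]
  · simp [h, asymm h]

lemma lo_of_lt {c : Fin nv → ℕ} {a b : Fin nv} (h : c a < c b) : lo c a b = a := by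
  simp [lo, h]

lemma hi_of_lt {c : Fin nv → ℕ} {a b : Fin nv} (h : c a < c b) : hi c a b = b := by
  simp [hi, h]

lemma K2_comm (NN : ℕ) (c : Fin nv → ℕ) (a b : Fin nv) : K2 NN c a b = K2 NN c b a := by
  rw [K2, K2, blk_comm, lo_comm, hi_comm]

lemma sig_lt {NN : ℕ} {c : Fin nv → ℕ} (hlt : ∀ v, c v < 2 ^ NN) (v : Fin nv) :
    sig c v < 2 ^ NN * nv := by
  have h1 := v.isLt
  have h2 := hlt v
  calc sig c v < c v * nv + nv := by unfold sig; omega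
    _ = (c v + 1) * nv := by ring
    _ ≤ 2 ^ NN * nv := Nat.mul_le_mul_right _ (by omega)

lemma sig_inj {c : Fin nv → ℕ} {u v : Fin nv} (hc : c u = c v) (h : sig c u = sig c v) :
    u = v := by
  unfold sig at h
  rw [hc] at h
  have := u.isLt
  have := v.isLt
  exact Fin.ext (by omega)

lemma sig_inj' {c : Fin nv → ℕ} {u v : Fin nv} (h : sig c u = sig c v) : u = v := by
  unfold sig at h
  have h1 : (u.val + c u * nv) % nv = (v.val + c v * nv) % nv := by
    rw [add_comm (u.val), add_comm (v.val)]
    rw [h]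
  rw [Nat.add_mul_mod_self_right, Nat.add_mul_mod_self_right] at h1
  rw [Nat.mod_eq_of_lt u.isLt, Nat.mod_eq_of_lt v.isLt] at h1
  exact Fin.ext h1

lemma sig_lt_of_c_lt {c : Fin nv → ℕ} {u v : Fin nv} (h : c u < c v) : sig c u < sig c v := by
  unfold sig
  have h1 := u.isLt
  have h2 := v.isLt
  calc c u * nv + u.val < c u * nv + nv := by omega
    _ = (c u + 1) * nv := by ring
    _ ≤ c v * nv := Nat.mul_le_mul_right _ (by omega)
    _ ≤ c v * nv + v.val := Nat.le_add_right _ _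

lemma K2_lt_of_blk_lt {NN : ℕ} {c : Fin nv → ℕ} (hlt : ∀ v, c v < 2 ^ NN)
    {a b a' b' : Fin nv} (h : blk (c a) (c b) < blk (c a') (c b')) :
    K2 NN c a b < K2 NN c a' b' := by
  set M := 2 ^ NN * nv with hM
  have hMpos : 0 < M := by
    have := a.isLt
    have : 0 < nv := by omega
    have h2 : 0 < (2:ℕ) ^ NN := pow_pos (by norm_num) _
    positivity
  have h1 : sig c (lo c a b) < M := sig_lt hlt _
  have h2 : sig c (hi c a b) < M := sig_lt hlt _
  have h6 : sig c (lo c a b) * M + M ≤ M * M := by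
    calc sig c (lo c a b) * M + M = (sig c (lo c a b) + 1) * M := by ring
      _ ≤ M * M := Nat.mul_le_mul_right _ (by omega)
  have hinner : sig c (lo c a b) * M + (M - 1 - sig c (hi c a b)) + 1 ≤ M * M := by omega
  rw [K2, K2, ← hM]
  calc blk (c a) (c b) * (M * M) + (sig c (lo c a b) * M + (M - 1 - sig c (hi c a b)))
      < blk (c a) (c b) * (M * M) + M * M := by omega
    _ = (blk (c a) (c b) + 1) * (M * M) := by ring
    _ ≤ blk (c a') (c b') * (M * M) := Nat.mul_le_mul_right _ (by omega)
    _ ≤ _ := Nat.le_add_right _ _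

lemma K2_lt_iff_lo {NN : ℕ} {c : Fin nv → ℕ} (hlt : ∀ v, c v < 2 ^ NN)
    {a a' w : Fin nv} (h : c a < c w) (h' : c a' < c w)
    (hblk : blk (c a) (c w) = blk (c a') (c w)) :
    (K2 NN c a w < K2 NN c a' w ↔ sig c a < sig c a') := by
  rw [K2, K2, hblk, lo_of_lt h, lo_of_lt h', hi_of_lt h, hi_of_lt h']
  set M := 2 ^ NN * nv with hM
  have h1 : sig c a < M := sig_lt hlt _
  have h2 : sig c a' < M := sig_lt hlt _
  have h3 : sig c w < M := sig_lt hlt _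
  constructor
  · intro hk
    by_contra hc
    have : sig c a' * M ≤ sig c a * M := Nat.mul_le_mul_right _ (by omega)
    omega
  · intro hk
    have : sig c a * M + M ≤ sig c a' * M := by
      calc sig c a * M + M = (sig c a + 1) * M := by ring
        _ ≤ sig c a' * M := Nat.mul_le_mul_right _ (by omega)
    omega

lemma K2_lt_iff_hi {NN : ℕ} {c : Fin nv → ℕ} (hlt : ∀ v, c v < 2 ^ NN)
    {u y y' : Fin nv} (h : c u < c y) (h' : c u < c y')
    (hblk : blk (c u) (c y) = blk (c u) (c y')) :
    (K2 NN c u y < K2 NN c u y' ↔ sig c y' < sig c y) := by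
  rw [K2, K2, hblk, lo_of_lt h, lo_of_lt h', hi_of_lt h, hi_of_lt h']
  set M := 2 ^ NN * nv with hM
  have h1 : sig c y < M := sig_lt hlt _
  have h2 : sig c y' < M := sig_lt hlt _
  omega

lemma lt_of_div_lt {x y s : ℕ} (h : x / 2 ^ s < y / 2 ^ s) : x < y := by
  by_contra hc
  have := Nat.div_le_div_right (c := 2 ^ s) (show y ≤ x by omega)
  omega

lemma split2 {x J q : ℕ} (h : x / 2 ^ (J+1) = q) : x / 2 ^ J = 2*q ∨ x / 2 ^ J = 2*q+1 := by
  have h2 : x / 2 ^ J / 2 = q := by rw [Nat.div_div_eq_div_mul, ← pow_succ]; exact h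
  omega

lemma K2_int_lt_cross {NN J q : ℕ} {c : Fin nv → ℕ} (hlt : ∀ v, c v < 2 ^ NN)
    {a b a' b' : Fin nv} (hab : c a ≠ c b) (hagree : c a / 2 ^ J = c b / 2 ^ J)
    (hqa : c a / 2 ^ (J+1) = q) (hqa' : c a' / 2 ^ (J+1) = q) (hqb' : c b' / 2 ^ (J+1) = q)
    (hcr : c a' / 2 ^ J ≠ c b' / 2 ^ J) :
    K2 NN c a b < K2 NN c a' b' :=
  K2_lt_of_blk_lt hlt (blk_int_lt_cross hab hagree hqa hqa' hqb' hcr)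

theorem main (NN : ℕ) (G : SimpleGraph (Fin nv)) (c : Fin nv → ℕ)
    (hprop : ∀ a b, G.Adj a b → c a ≠ c b) (hlt : ∀ v, c v < 2 ^ NN) (J : ℕ) :
    (∀ q (u w : Fin nv) (v : Fin J → Fin nv),
      (∀ i, G.Adj u (v i)) → G.Adj u w → (∀ i, G.Adj (v i) w) →
      c u / 2 ^ J = q → c w / 2 ^ J = q → (∀ i, c (v i) / 2 ^ J = q) →
      (∀ i j : Fin J, i < j → K2 NN c u (v i) < K2 NN c u (v j)) →
      (∀ i, K2 NN c u (v i) < K2 NN c u w) →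
      (∀ i, K2 NN c u w < K2 NN c (v i) w) →
      (∀ i j : Fin J, i < j → K2 NN c (v i) w < K2 NN c (v j) w) → False)
    ∧ (∀ q (u : Fin nv) (v : Fin (J+1) → Fin nv),
      (∀ i, G.Adj u (v i)) →
      c u / 2 ^ J = q → (∀ i, c (v i) / 2 ^ J = q) →
      (∀ i j : Fin (J+1), i < j → K2 NN c u (v i) < K2 NN c u (v j)) →
      (∀ i j : Fin (J+1), i < j → sig c (v i) < sig c (v j)) →
      (∀ i, sig c u < sig c (v i)) → False)
    ∧ (∀ q (u : Fin nv) (v : Fin (J+1) → Fin nv),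
      (∀ i, G.Adj u (v i)) →
      c u / 2 ^ J = q → (∀ i, c (v i) / 2 ^ J = q) →
      (∀ i j : Fin (J+1), i < j → K2 NN c u (v i) < K2 NN c u (v j)) →
      (∀ i j : Fin (J+1), i < j → sig c (v j) < sig c (v i)) →
      (∀ i, sig c (v i) < sig c u) → False) := by
  induction J with
  | zero =>
    refine ⟨?_, ?_, ?_⟩
    · intro q u w v _ hadjuw _ hqu hqw _ _ _ _ _
      simp only [pow_zero, Nat.div_one] at hqu hqw
      exact hprop u w hadjuw (hqu.trans hqw.symm)
    · intro q u v hadj hqu hqv _ _ _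
      simp only [pow_zero, Nat.div_one] at hqu hqv
      exact hprop u (v 0) (hadj 0) (hqu.trans (hqv 0).symm)
    · intro q u v hadj hqu hqv _ _ _
      simp only [pow_zero, Nat.div_one] at hqu hqv
      exact hprop u (v 0) (hadj 0) (hqu.trans (hqv 0).symm)
  | succ J ih =>
    obtain ⟨IHD, IHS, IHR⟩ := ih
    refine ⟨?_, ?_, ?_⟩
    · -- the D pattern
      intro q u w v hadjuv hadjuw hadjvw hqu hqw hqv hm1 hm2 hm3 hm4
      rcases split2 hqu with hU | hU <;> rcases split2 hqw with hW | hW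
      · -- u, w ∈ A
        have hvA : ∀ i, c (v i) / 2 ^ J = 2*q := by
          intro i
          rcases split2 (hqv i) with h | h
          · exact h
          · exfalso
            have hx : K2 NN c u w < K2 NN c u (v i) :=
              K2_int_lt_cross hlt (hprop u w hadjuw) (hU.trans hW.symm) hqu hqu (hqv i)
                (by rw [hU, h]; omega)
            have hy := hm2 i
            omega
        exact IHD (2*q) u w (fun i => v i.castSucc) (fun i => hadjuv _) hadjuw
          (fun i => hadjvw _) hU hW (fun i => hvA _)
          (fun i j hij => hm1 _ _ (Fin.castSucc_lt_castSucc_iff.2 hij))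
          (fun i => hm2 _) (fun i => hm3 _)
          (fun i j hij => hm4 _ _ (Fin.castSucc_lt_castSucc_iff.2 hij))
      · -- u ∈ A, w ∈ B
        have hvA : ∀ i, c (v i) / 2 ^ J = 2*q := by
          intro i
          rcases split2 (hqv i) with h | h
          · exact h
          · exfalso
            have hx : K2 NN c (v i) w < K2 NN c u w :=
              K2_int_lt_cross hlt (hprop _ _ (hadjvw i)) (h.trans hW.symm) (hqv i) hqu hqw
                (by rw [hU, hW]; omega)
            have hy := hm3 i
            omega
        have hcu : c u < c w := lt_of_div_lt (s := J) (by rw [hU, hW]; omega)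
        have hcvw : ∀ i, c (v i) < c w := fun i => lt_of_div_lt (s := J) (by rw [hvA i, hW]; omega)
        have hblkuw : blk (c u) (c w) = 3^(J+1) * (3 * tob3 q + 2) :=
          blk_cross hqu hqw (by rw [hU, hW]; omega)
        have hblkvw : ∀ i, blk (c (v i)) (c w) = 3^(J+1) * (3 * tob3 q + 2) := fun i =>
          blk_cross (hqv i) hqw (by rw [hvA i, hW]; omega)
        have hsig1 : ∀ i, sig c u < sig c (v i) := fun i =>
          (K2_lt_iff_lo hlt hcu (hcvw i) (hblkuw.trans (hblkvw i).symm)).1 (hm3 i)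
        have hsig2 : ∀ i j : Fin (J+1), i < j → sig c (v i) < sig c (v j) := fun i j hij =>
          (K2_lt_iff_lo hlt (hcvw i) (hcvw j) ((hblkvw i).trans (hblkvw j).symm)).1 (hm4 i j hij)
        exact IHS (2*q) u v hadjuv hU hvA hm1 hsig2 hsig1
      · -- u ∈ B, w ∈ A
        have hvB : ∀ i, c (v i) / 2 ^ J = 2*q+1 := by
          intro i
          rcases split2 (hqv i) with h | h
          · exfalso
            have hx : K2 NN c (v i) w < K2 NN c u w :=
              K2_int_lt_cross hlt (hprop _ _ (hadjvw i)) (h.trans hW.symm) (hqv i) hqu hqw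
                (by rw [hU, hW]; omega)
            have hy := hm3 i
            omega
          · exact h
        have hcw : c w < c u := lt_of_div_lt (s := J) (by rw [hW, hU]; omega)
        have hcwv : ∀ i, c w < c (v i) := fun i => lt_of_div_lt (s := J) (by rw [hW, hvB i]; omega)
        have hblkwu : blk (c w) (c u) = 3^(J+1) * (3 * tob3 q + 2) :=
          blk_cross hqw hqu (by rw [hW, hU]; omega)
        have hblkwv : ∀ i, blk (c w) (c (v i)) = 3^(J+1) * (3 * tob3 q + 2) := fun i =>
          blk_cross hqw (hqv i) (by rw [hW, hvB i]; omega)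
        have hsig1 : ∀ i, sig c (v i) < sig c u := by
          intro i
          have h0 := hm3 i
          rw [K2_comm NN c u w, K2_comm NN c (v i) w] at h0
          exact (K2_lt_iff_hi hlt hcw (hcwv i) (hblkwu.trans (hblkwv i).symm)).1 h0
        have hanti : ∀ i j : Fin (J+1), i < j → sig c (v j) < sig c (v i) := by
          intro i j hij
          have h0 := hm4 i j hij
          rw [K2_comm NN c (v i) w, K2_comm NN c (v j) w] at h0
          exact (K2_lt_iff_hi hlt (hcwv i) (hcwv j) ((hblkwv i).trans (hblkwv j).symm)).1 h0
        exact IHR (2*q+1) u v hadjuv hU hvB hm1 hanti hsig1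
      · -- u, w ∈ B
        have hvB : ∀ i, c (v i) / 2 ^ J = 2*q+1 := by
          intro i
          rcases split2 (hqv i) with h | h
          · exfalso
            have hx : K2 NN c u w < K2 NN c u (v i) :=
              K2_int_lt_cross hlt (hprop u w hadjuw) (hU.trans hW.symm) hqu hqu (hqv i)
                (by rw [hU, h]; omega)
            have hy := hm2 i
            omega
          · exact h
        exact IHD (2*q+1) u w (fun i => v i.castSucc) (fun i => hadjuv _) hadjuw
          (fun i => hadjvw _) hU hW (fun i => hvB _)
          (fun i j hij => hm1 _ _ (Fin.castSucc_lt_castSucc_iff.2 hij))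
          (fun i => hm2 _) (fun i => hm3 _)
          (fun i j hij => hm4 _ _ (Fin.castSucc_lt_castSucc_iff.2 hij))
    · -- the S pattern
      intro q u v hadj hqu hqv hm hsig hsigu
      rcases split2 hqu with hU | hU
      · -- u ∈ A
        have hkey : ∀ i j : Fin (J+2), i < j → c (v i) / 2 ^ J = 2*q := by
          intro i j hij
          rcases split2 (hqv i) with h | h
          · exact h
          · exfalso
            rcases split2 (hqv j) with h' | h'
            · have hx : K2 NN c u (v j) < K2 NN c u (v i) :=
                K2_int_lt_cross hlt (hprop _ _ (hadj j)) (hU.trans h'.symm) hqu hqu (hqv i)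
                  (by rw [hU, h]; omega)
              have := hm i j hij
              omega
            · have hcu_i : c u < c (v i) := lt_of_div_lt (s := J) (by rw [hU, h]; omega)
              have hcu_j : c u < c (v j) := lt_of_div_lt (s := J) (by rw [hU, h']; omega)
              have hb_i : blk (c u) (c (v i)) = 3^(J+1) * (3 * tob3 q + 2) :=
                blk_cross hqu (hqv i) (by rw [hU, h]; omega)
              have hb_j : blk (c u) (c (v j)) = 3^(J+1) * (3 * tob3 q + 2) :=
                blk_cross hqu (hqv j) (by rw [hU, h']; omega)
              have h1 := (K2_lt_iff_hi hlt hcu_i hcu_j (hb_i.trans hb_j.symm)).1 (hm i j hij)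
              have h2 := hsig i j hij
              omega
        exact IHS (2*q) u (fun i => v i.castSucc) (fun i => hadj _) hU
          (fun i => hkey _ (Fin.last (J+1)) (Fin.castSucc_lt_last i))
          (fun i j hij => hm _ _ (Fin.castSucc_lt_castSucc_iff.2 hij))
          (fun i j hij => hsig _ _ (Fin.castSucc_lt_castSucc_iff.2 hij))
          (fun i => hsigu _)
      · -- u ∈ B
        have hvB : ∀ i, c (v i) / 2 ^ J = 2*q+1 := by
          intro i
          rcases split2 (hqv i) with h | h
          · exfalso
            have h1 : c (v i) < c u := lt_of_div_lt (s := J) (by rw [h, hU]; omega)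
            have h2 := sig_lt_of_c_lt h1
            have h3 := hsigu i
            omega
          · exact h
        exact IHS (2*q+1) u (fun i => v i.castSucc) (fun i => hadj _) hU
          (fun i => hvB _)
          (fun i j hij => hm _ _ (Fin.castSucc_lt_castSucc_iff.2 hij))
          (fun i j hij => hsig _ _ (Fin.castSucc_lt_castSucc_iff.2 hij))
          (fun i => hsigu _)
    · -- the R pattern
      intro q u v hadj hqu hqv hm hanti hsiglt
      rcases split2 hqu with hU | hU
      · -- u ∈ A
        have hvA : ∀ i, c (v i) / 2 ^ J = 2*q := by
          intro i
          rcases split2 (hqv i) with h | h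
          · exact h
          · exfalso
            have h1 : c u < c (v i) := lt_of_div_lt (s := J) (by rw [hU, h]; omega)
            have h2 := sig_lt_of_c_lt h1
            have h3 := hsiglt i
            omega
        exact IHR (2*q) u (fun i => v i.castSucc) (fun i => hadj _) hU
          (fun i => hvA _)
          (fun i j hij => hm _ _ (Fin.castSucc_lt_castSucc_iff.2 hij))
          (fun i j hij => hanti _ _ (Fin.castSucc_lt_castSucc_iff.2 hij))
          (fun i => hsiglt _)
      · -- u ∈ B
        have hkey : ∀ i j : Fin (J+2), i < j → c (v i) / 2 ^ J = 2*q+1 := by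
          intro i j hij
          rcases split2 (hqv i) with h | h
          · exfalso
            rcases split2 (hqv j) with h' | h'
            · have hci : c (v i) < c u := lt_of_div_lt (s := J) (by rw [h, hU]; omega)
              have hcj : c (v j) < c u := lt_of_div_lt (s := J) (by rw [h', hU]; omega)
              have hb_i : blk (c (v i)) (c u) = 3^(J+1) * (3 * tob3 q + 2) :=
                blk_cross (hqv i) hqu (by rw [h, hU]; omega)
              have hb_j : blk (c (v j)) (c u) = 3^(J+1) * (3 * tob3 q + 2) :=
                blk_cross (hqv j) hqu (by rw [h', hU]; omega)
              have h0 := hm i j hij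
              rw [K2_comm NN c u (v i), K2_comm NN c u (v j)] at h0
              have h1 := (K2_lt_iff_lo hlt hci hcj (hb_i.trans hb_j.symm)).1 h0
              have h2 := hanti i j hij
              omega
            · have hx : K2 NN c u (v j) < K2 NN c u (v i) :=
                K2_int_lt_cross hlt (hprop _ _ (hadj j)) (hU.trans h'.symm) hqu hqu (hqv i)
                  (by rw [hU, h]; omega)
              have := hm i j hij
              omega
          · exact h
        exact IHR (2*q+1) u (fun i => v i.castSucc) (fun i => hadj _) hU
          (fun i => hkey _ (Fin.last (J+1)) (Fin.castSucc_lt_last i))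
          (fun i j hij => hm _ _ (Fin.castSucc_lt_castSucc_iff.2 hij))
          (fun i j hij => hanti _ _ (Fin.castSucc_lt_castSucc_iff.2 hij))
          (fun i => hsiglt _)


/-! ### Glue: the labeling, validity, avoidance -/

lemma label_eq (NN : ℕ) (c : Fin nv → ℕ) (x y : Fin nv) :
    symLabel (fun a b => K2 NN c a b) s(x, y) = K2 NN c x y := by
  simp only [symLabel, Sym2.lift_mk]
  rcases le_total x y with h | h
  · rw [min_eq_left h, max_eq_right h]
  · rw [min_eq_right h, max_eq_left h, K2_comm]

lemma digit_split {X A B r s : ℕ} (hr : r < X) (hs : s < X) (h : A * X + r = B * X + s) :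
    A = B ∧ r = s := by
  have hX : 0 < X := by omega
  have h1 : (r + A * X) / X = A := by
    rw [Nat.add_mul_div_right _ _ hX, Nat.div_eq_of_lt hr, Nat.zero_add]
  have h2 : (s + B * X) / X = B := by
    rw [Nat.add_mul_div_right _ _ hX, Nat.div_eq_of_lt hs, Nat.zero_add]
  have h3 : (r + A * X) / X = (s + B * X) / X := by
    rw [show r + A * X = s + B * X by omega]
  rw [h1, h2] at h3
  refine ⟨h3, ?_⟩
  rw [h3] at h
  omega

lemma sym2_eq_lohi {c : Fin nv → ℕ} {a b : Fin nv} (hab : c a ≠ c b) :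
    s(a, b) = s(lo c a b, hi c a b) := by
  rcases lt_or_gt_of_ne hab with h | h
  · rw [lo_of_lt h, hi_of_lt h]
  · rw [lo_comm, hi_comm, lo_of_lt h, hi_of_lt h, Sym2.eq_swap]

lemma K2_inj {NN : ℕ} {c : Fin nv → ℕ} (hlt : ∀ v, c v < 2 ^ NN) {a b x y : Fin nv}
    (hab : c a ≠ c b) (hxy : c x ≠ c y) (h : K2 NN c a b = K2 NN c x y) :
    s(a, b) = s(x, y) := by
  set M := 2 ^ NN * nv with hM
  have hMpos : 0 < M := by
    have h1 := a.isLt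
    have h2 : 0 < (2:ℕ) ^ NN := pow_pos (by norm_num) _
    have : 0 < nv := by omega
    positivity
  have b1 : sig c (lo c a b) < M := sig_lt hlt _
  have b2 : sig c (hi c a b) < M := sig_lt hlt _
  have b3 : sig c (lo c x y) < M := sig_lt hlt _
  have b4 : sig c (hi c x y) < M := sig_lt hlt _
  have hinner1 : sig c (lo c a b) * M + (M - 1 - sig c (hi c a b)) < M * M := by
    have h6 : sig c (lo c a b) * M + M ≤ M * M := by
      calc sig c (lo c a b) * M + M = (sig c (lo c a b) + 1) * M := by ring
        _ ≤ M * M := Nat.mul_le_mul_right _ (by omega)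
    omega
  have hinner2 : sig c (lo c x y) * M + (M - 1 - sig c (hi c x y)) < M * M := by
    have h6 : sig c (lo c x y) * M + M ≤ M * M := by
      calc sig c (lo c x y) * M + M = (sig c (lo c x y) + 1) * M := by ring
        _ ≤ M * M := Nat.mul_le_mul_right _ (by omega)
    omega
  rw [K2, K2, ← hM] at h
  obtain ⟨-, h'⟩ := digit_split hinner1 hinner2 h
  obtain ⟨hlo, hhi⟩ := digit_split (show M - 1 - sig c (hi c a b) < M by omega)
    (show M - 1 - sig c (hi c x y) < M by omega) h'
  have hlo' : lo c a b = lo c x y := sig_inj' hlo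
  have hhi0 : sig c (hi c a b) = sig c (hi c x y) := by omega
  have hhi' : hi c a b = hi c x y := sig_inj' hhi0
  rw [sym2_eq_lohi hab, sym2_eq_lohi hxy, hlo', hhi']

lemma valid_label {NN : ℕ} (G : SimpleGraph (Fin nv)) (c : Fin nv → ℕ)
    (hprop : ∀ a b, G.Adj a b → c a ≠ c b) (hlt : ∀ v, c v < 2 ^ NN) :
    (EOGraph.mk nv G (symLabel (fun a b => K2 NN c a b))).Valid := by
  intro e he f hf hef
  induction e using Sym2.ind with | _ a b =>
  induction f using Sym2.ind with | _ x y =>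
  have he' : G.Adj a b := he
  have hf' : G.Adj x y := hf
  have hef' : symLabel (fun a b => K2 NN c a b) s(a, b)
      = symLabel (fun a b => K2 NN c a b) s(x, y) := hef
  rw [label_eq, label_eq] at hef'
  exact K2_inj hlt (hprop a b he') (hprop x y hf') hef'

theorem avoids_Dgraph (n : ℕ) (hn : 2 ≤ n) (G : SimpleGraph (Fin nv)) (c : Fin nv → ℕ)
    (hprop : ∀ a b, G.Adj a b → c a ≠ c b) (hlt : ∀ v, c v < 2 ^ (n-2)) :
    (EOGraph.mk nv G (symLabel (fun a b => K2 (n-2) c a b))).Avoids (Dgraph n) := by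
  rintro ⟨f, hadj, hord⟩
  set z0 : Fin n := ⟨0, by omega⟩ with hz0
  set zl : Fin n := ⟨n-1, by omega⟩ with hzl
  set mid : Fin (n-2) → Fin n := fun i => ⟨i.1+1, by have := i.isLt; omega⟩ with hmid
  have DAdj : ∀ a b : Fin n, a ≠ b → ((a:ℕ) = 0 ∨ (b:ℕ) = n-1) → (Dgraph n).graph.Adj a b := by
    intro a b hne hrel
    show (Dunder n).Adj a b
    rw [Dunder, SimpleGraph.fromRel_adj]
    exact ⟨hne, Or.inl hrel⟩
  have vz0 : (z0:ℕ) = 0 := rfl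
  have vzl : (zl:ℕ) = n-1 := rfl
  have vmid : ∀ i, ((mid i):ℕ) = i.1+1 := fun i => rfl
  have hz0mid : ∀ i, (Dgraph n).graph.Adj z0 (mid i) :=
    fun i => DAdj _ _ (Fin.ne_of_val_ne (by rw [vz0, vmid]; omega)) (Or.inl vz0)
  have hz0zl : (Dgraph n).graph.Adj z0 zl :=
    DAdj _ _ (Fin.ne_of_val_ne (by rw [vz0, vzl]; omega)) (Or.inl vz0)
  have hmidzl : ∀ i, (Dgraph n).graph.Adj (mid i) zl :=
    fun i => DAdj _ _ (Fin.ne_of_val_ne (by rw [vmid, vzl]; have := i.isLt; omega)) (Or.inr vzl)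
  have Dlab : ∀ a b : Fin n, (a:ℕ) < (b:ℕ) →
      (Dgraph n).label s(a,b) = if (a:ℕ) = 0 then (b:ℕ) else (n-1)+(a:ℕ) := by
    intro a b hab
    have hle : a ≤ b := Fin.le_def.mpr (le_of_lt hab)
    show symLabel (fun a b : Fin n => if (a:ℕ) = 0 then (b:ℕ) else (n-1)+(a:ℕ)) s(a,b) = _
    simp only [symLabel, Sym2.lift_mk]
    rw [min_eq_left hle, max_eq_right hle]
  have hlab1 : ∀ i, (Dgraph n).label s(z0, mid i) = i.1+1 := by
    intro i
    rw [Dlab z0 (mid i) (by rw [vz0, vmid]; omega), if_pos vz0, vmid i]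
  have hlab2 : (Dgraph n).label s(z0, zl) = n-1 := by
    rw [Dlab z0 zl (by rw [vz0, vzl]; omega), if_pos vz0, vzl]
  have hlab3 : ∀ i, (Dgraph n).label s(mid i, zl) = (n-1)+(i.1+1) := by
    intro i
    rw [Dlab (mid i) zl (by rw [vmid i, vzl]; have := i.isLt; omega),
      if_neg (by rw [vmid i]; omega), vmid i]
  have trans : ∀ (a b x y : Fin n), (Dgraph n).graph.Adj a b → (Dgraph n).graph.Adj x y →
      ((Dgraph n).label s(a,b) < (Dgraph n).label s(x,y) ↔
        K2 (n-2) c (f a) (f b) < K2 (n-2) c (f x) (f y)) := by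
    intro a b x y h1 h2
    rw [← label_eq (n-2) c (f a) (f b), ← label_eq (n-2) c (f x) (f y)]
    exact hord a b x y h1 h2
  obtain ⟨mainD, -, -⟩ := main (n-2) G c hprop hlt (n-2)
  apply mainD 0 (f z0) (f zl) (fun i => f (mid i))
  · exact fun i => hadj _ _ (hz0mid i)
  · exact hadj _ _ hz0zl
  · exact fun i => hadj _ _ (hmidzl i)
  · exact Nat.div_eq_of_lt (hlt _)
  · exact Nat.div_eq_of_lt (hlt _)
  · exact fun i => Nat.div_eq_of_lt (hlt _)
  · intro i j hij
    refine (trans z0 (mid i) z0 (mid j) (hz0mid i) (hz0mid j)).1 ?_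
    rw [hlab1 i, hlab1 j]
    have : i.1 < j.1 := hij
    omega
  · intro i
    refine (trans z0 (mid i) z0 zl (hz0mid i) hz0zl).1 ?_
    rw [hlab1 i, hlab2]
    have := i.isLt
    omega
  · intro i
    refine (trans z0 zl (mid i) zl hz0zl (hmidzl i)).1 ?_
    rw [hlab2, hlab3 i]
    omega
  · intro i j hij
    refine (trans (mid i) zl (mid j) zl (hmidzl i) (hmidzl j)).1 ?_
    rw [hlab3 i, hlab3 j]
    have : i.1 < j.1 := hij
    omega

end DnP

theorem canAvoid_of_colorable (n : ℕ) (hn : 2 ≤ n) {m : ℕ} (G : SimpleGraph (Fin m))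
    (hcol : G.Colorable (2 ^ (n-2))) : CanAvoid G {Dgraph n} := by
  obtain ⟨C⟩ := hcol
  set c : Fin m → ℕ := fun v => (C v).val with hc
  have hprop : ∀ a b, G.Adj a b → c a ≠ c b := by
    intro a b hab h
    exact C.valid hab (Fin.ext h)
  have hlt : ∀ v, c v < 2 ^ (n-2) := fun v => (C v).isLt
  refine ⟨symLabel (fun a b => DnP.K2 (n-2) c a b), DnP.valid_label G c hprop hlt, ?_⟩
  intro H hH
  rw [Set.mem_singleton_iff] at hH
  subst hH
  exact DnP.avoids_Dgraph n hn G c hprop hlt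

/-- For every `n ≥ 2`, the order chromatic number of `D_n` is larger
than `2^(n-2)`. -/
theorem orderChrom_Dgraph_gt (n : ℕ) (hn : 2 ≤ n) :
    ((2 : ℕ∞) ^ (n - 2)) < orderChrom {Dgraph n} := by
  have key : ∀ (m : ℕ) (G : SimpleGraph (Fin m)), ¬ CanAvoid G {Dgraph n} →
      ((2 ^ (n-2) : ℕ) : ℕ∞) + 1 ≤ G.chromaticNumber := by
    intro m G hG
    rw [ENat.add_one_le_iff (ENat.coe_ne_top _), ← not_le,
      SimpleGraph.chromaticNumber_le_iff_colorable]
    intro hcol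
    exact hG (canAvoid_of_colorable n hn G hcol)
  have h2 : ((2 ^ (n-2) : ℕ) : ℕ∞) + 1 ≤ orderChrom {Dgraph n} := by
    rw [orderChrom]
    exact le_iInf fun m => le_iInf fun G => le_iInf fun h => key m G h
  have h3 : ((2 : ℕ∞) ^ (n - 2)) < ((2 ^ (n-2) : ℕ) : ℕ∞) + 1 := by
    have hcast : ((2 : ℕ∞) ^ (n - 2)) = ((2 ^ (n-2) : ℕ) : ℕ∞) := by push_cast; rfl
    rw [hcast, show ((2 ^ (n-2) : ℕ) : ℕ∞) + 1 = ((2 ^ (n-2) + 1 : ℕ) : ℕ∞) by push_cast; rfl]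
    exact_mod_cast Nat.lt_succ_self _
  exact lt_of_lt_of_le h3 h2
end

section
/- The order chromatic number of the edge-ordered diamond D_4 satisfies 10 ≤ χ'_<(D_4) < ∞; in particular there is an edge-ordering of K_9 avoiding D_4 witnessing that χ'_<(D_4) > 9, while some finite simple graph cannot avoid D_4. -/
/-! ### Auxiliary machinery -/

section Aux

lemma chunk_le' {M a b r s : ℕ} (hs : s < M) (h : a * M + r ≤ b * M + s) : a ≤ b := by
  by_contra hc
  push_neg at hc
  have h2 : (b + 1) * M ≤ a * M := Nat.mul_le_mul_right _ hc
  rw [Nat.add_mul, one_mul] at h2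
  omega

lemma chunk_inj' {M a b r s : ℕ} (hr : r < M) (hs : s < M) (h : a * M + r = b * M + s) :
    a = b ∧ r = s := by
  have h1 : a ≤ b := chunk_le' hs h.le
  have h2 : b ≤ a := chunk_le' hr h.symm.le
  have : a = b := le_antisymm h1 h2
  subst this
  exact ⟨rfl, by omega⟩

def L9tbl : List (List ℕ) :=
  [[0, 19, 30, 7, 21, 0, 17, 18, 24], [19, 0, 11, 29, 14, 32, 15, 25, 22],
   [30, 11, 0, 1, 3, 35, 2, 33, 26], [7, 29, 1, 0, 28, 31, 27, 9, 8],
   [21, 14, 3, 28, 0, 6, 20, 16, 12], [0, 32, 35, 31, 6, 0, 34, 4, 5],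
   [17, 15, 2, 27, 20, 34, 0, 23, 10], [18, 25, 33, 9, 16, 4, 23, 0, 13],
   [24, 22, 26, 8, 12, 5, 10, 13, 0]]

def epsTbl : List (List ℕ) :=
  [[0, 0, 0, 0, 0, 0, 0, 0, 1], [1, 0, 1, 1, 1, 1, 1, 1, 1], [1, 0, 0, 0, 0, 1, 0, 1, 0],
   [1, 0, 1, 0, 1, 1, 1, 0, 1], [0, 1, 1, 1, 0, 0, 1, 0, 0], [1, 1, 0, 0, 0, 0, 0, 1, 1],
   [1, 1, 1, 1, 0, 1, 0, 1, 0], [0, 0, 0, 0, 1, 0, 1, 0, 0], [0, 0, 0, 0, 0, 0, 0, 0, 0]]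

def L9 (a b : Fin 9) : ℕ := (L9tbl.getD (a : ℕ) []).getD (b : ℕ) 0
def epsF (a b : Fin 9) : Bool := (epsTbl.getD (a : ℕ) []).getD (b : ℕ) 0 = 1

lemma L9symm : ∀ a b : Fin 9, L9 a b = L9 b a := by decide
lemma L9inj_lt : ∀ a b a' b' : Fin 9, a < b → a' < b' → L9 a b = L9 a' b' → a = a' ∧ b = b' := by
  decide
lemma L9ne : ∀ a b c : Fin 9, a ≠ b → a ≠ c → b ≠ c → L9 a b ≠ L9 a c := by decide
lemma noD4chain : ∀ a b c d : Fin 9,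
    ¬(L9 a b < L9 a c ∧ L9 a c < L9 a d ∧ L9 a d < L9 b d ∧ L9 b d < L9 c d) := by decide
lemma epsKey : ∀ a g b : Fin 9, L9 a g < L9 a b → L9 a b < L9 g b → epsF a g ≠ epsF b g := by
  decide

variable {n : ℕ} (c : Fin n → Fin 9)

/-- coordinate function, increasing or decreasing according to the bool -/
def phiF (n : ℕ) (b : Bool) (x : Fin n) : ℕ := if b then n - 1 - (x : ℕ) else (x : ℕ)

def baseL (u v : Fin n) : ℕ :=
  L9 (c u) (c v) * (n * n) + (phiF n (epsF (c v) (c u)) u * n + phiF n (epsF (c u) (c v)) v)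

def labf (u v : Fin n) : ℕ :=
  if c u < c v then baseL c u v else if c v < c u then baseL c v u else 0

lemma phiF_lt (b : Bool) (x : Fin n) : phiF n b x < n := by
  have := x.isLt; cases b <;> simp [phiF] <;> omega

lemma phiF_inj (b : Bool) (x y : Fin n) (h : phiF n b x = phiF n b y) : x = y := by
  have hx := x.isLt; have hy := y.isLt
  cases b <;> simp [phiF] at h <;> exact Fin.ext (by omega)

lemma sec_lt (b1 b2 : Bool) (x y : Fin n) : phiF n b1 x * n + phiF n b2 y < n * n := by
  have h1 : phiF n b1 x + 1 ≤ n := phiF_lt b1 x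
  have h2 := phiF_lt b2 y
  calc phiF n b1 x * n + phiF n b2 y < phiF n b1 x * n + n := by omega
  _ = (phiF n b1 x + 1) * n := by ring
  _ ≤ n * n := Nat.mul_le_mul_right _ h1

lemma labf_comm (u v : Fin n) : labf c u v = labf c v u := by
  unfold labf
  rcases lt_trichotomy (c u) (c v) with h | h | h
  · rw [if_pos h, if_neg (not_lt.2 h.le), if_pos h]
  · rw [h, if_neg (lt_irrefl _), if_neg (lt_irrefl _), if_neg (lt_irrefl _), if_neg (lt_irrefl _)]
  · rw [if_neg (not_lt.2 h.le), if_pos h, if_pos h]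

lemma labf_decomp (u v : Fin n) (h : c u ≠ c v) :
    ∃ r, r < n * n ∧ labf c u v = L9 (c u) (c v) * (n * n) + r := by
  unfold labf
  rcases lt_trichotomy (c u) (c v) with hlt | heq | hlt
  · refine ⟨phiF n (epsF (c v) (c u)) u * n + phiF n (epsF (c u) (c v)) v,
      sec_lt _ _ _ _, ?_⟩
    rw [if_pos hlt]
    rfl
  · exact absurd heq h
  · refine ⟨phiF n (epsF (c u) (c v)) v * n + phiF n (epsF (c v) (c u)) u,
      sec_lt _ _ _ _, ?_⟩
    rw [if_neg (not_lt.2 hlt.le), if_pos hlt]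
    unfold baseL
    rw [L9symm (c v) (c u)]

lemma labf_primary_le (u v u' v' : Fin n) (h : c u ≠ c v) (h' : c u' ≠ c v')
    (hlt : labf c u v < labf c u' v') : L9 (c u) (c v) ≤ L9 (c u') (c v') := by
  obtain ⟨r, hr, he⟩ := labf_decomp c u v h
  obtain ⟨r', hr', he'⟩ := labf_decomp c u' v' h'
  rw [he, he'] at hlt
  exact chunk_le' hr' hlt.le

lemma labf_tie (u v v' : Fin n) (h : c u ≠ c v) (hcc : c v = c v')
    (hlt : labf c u v < labf c u v') :
    phiF n (epsF (c u) (c v)) v < phiF n (epsF (c u) (c v)) v' := by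
  unfold labf baseL at hlt
  rw [← hcc] at hlt
  rcases lt_trichotomy (c u) (c v) with hc2 | hc2 | hc2
  · rw [if_pos hc2, if_pos hc2] at hlt
    omega
  · exact absurd hc2 h
  · rw [if_neg (not_lt.2 hc2.le), if_pos hc2, if_neg (not_lt.2 hc2.le), if_pos hc2] at hlt
    have h2 : phiF n (epsF (c u) (c v)) v * n < phiF n (epsF (c u) (c v)) v' * n := by omega
    exact lt_of_mul_lt_mul_right h2 (Nat.zero_le n)

lemma baseL_inj (u v u' v' : Fin n) (hlt : c u < c v) (hlt' : c u' < c v')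
    (h : baseL c u v = baseL c u' v') : u = u' ∧ v = v' := by
  unfold baseL at h
  obtain ⟨hL, hsec⟩ := chunk_inj' (sec_lt _ _ _ _) (sec_lt _ _ _ _) h
  obtain ⟨hcu, hcv⟩ := L9inj_lt _ _ _ _ hlt hlt' hL
  rw [← hcu, ← hcv] at hsec
  obtain ⟨h1, h2⟩ := chunk_inj' (phiF_lt _ _) (phiF_lt _ _) hsec
  exact ⟨phiF_inj _ _ _ h1, phiF_inj _ _ _ h2⟩

lemma labf_inj (u v u' v' : Fin n) (h : c u ≠ c v) (h' : c u' ≠ c v')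
    (heq : labf c u v = labf c u' v') : s(u, v) = s(u', v') := by
  unfold labf at heq
  rcases lt_trichotomy (c u) (c v) with h1 | h1 | h1 <;>
    rcases lt_trichotomy (c u') (c v') with h2 | h2 | h2
  · rw [if_pos h1, if_pos h2] at heq
    obtain ⟨e1, e2⟩ := baseL_inj c u v u' v' h1 h2 heq
    rw [e1, e2]
  · exact absurd h2 h'
  · rw [if_pos h1, if_neg (not_lt.2 h2.le), if_pos h2] at heq
    obtain ⟨e1, e2⟩ := baseL_inj c u v v' u' h1 h2 heq
    rw [e1, e2, Sym2.eq_swap]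
  · exact absurd h1 h
  · exact absurd h1 h
  · exact absurd h1 h
  · rw [if_neg (not_lt.2 h1.le), if_pos h1, if_pos h2] at heq
    obtain ⟨e1, e2⟩ := baseL_inj c v u u' v' h1 h2 heq
    rw [e1, e2, Sym2.eq_swap]
  · exact absurd h2 h'
  · rw [if_neg (not_lt.2 h1.le), if_pos h1, if_neg (not_lt.2 h2.le), if_pos h2] at heq
    obtain ⟨e1, e2⟩ := baseL_inj c v u v' u' h1 h2 heq
    rw [e1, e2]

lemma labf_min_max (u v : Fin n) : labf c (min u v) (max u v) = labf c u v := by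
  rcases le_total u v with h | h
  · rw [min_eq_left h, max_eq_right h]
  · rw [min_eq_right h, max_eq_left h, labf_comm]

lemma symLabel_labf (u v : Fin n) : symLabel (labf c) s(u, v) = labf c u v := by
  simp only [symLabel, Sym2.lift_mk]
  exact labf_min_max c u v

end Aux

section CanAvoidPart

instance (k : ℕ) : OfNat (Fin (Dgraph 4).nv) k := inferInstanceAs (OfNat (Fin 4) k)

lemma D4_adj_01 : (Dgraph 4).graph.Adj 0 1 := by
  exact (SimpleGraph.fromRel_adj _ _ _).2 (by decide)
lemma D4_adj_02 : (Dgraph 4).graph.Adj 0 2 := by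
  exact (SimpleGraph.fromRel_adj _ _ _).2 (by decide)
lemma D4_adj_03 : (Dgraph 4).graph.Adj 0 3 := by
  exact (SimpleGraph.fromRel_adj _ _ _).2 (by decide)
lemma D4_adj_13 : (Dgraph 4).graph.Adj 1 3 := by
  exact (SimpleGraph.fromRel_adj _ _ _).2 (by decide)
lemma D4_adj_23 : (Dgraph 4).graph.Adj 2 3 := by
  exact (SimpleGraph.fromRel_adj _ _ _).2 (by decide)

lemma D4_lab_01_02 : (Dgraph 4).label s(0, 1) < (Dgraph 4).label s(0, 2) := by decide
lemma D4_lab_02_03 : (Dgraph 4).label s(0, 2) < (Dgraph 4).label s(0, 3) := by decide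
lemma D4_lab_03_13 : (Dgraph 4).label s(0, 3) < (Dgraph 4).label s(1, 3) := by decide
lemma D4_lab_13_23 : (Dgraph 4).label s(1, 3) < (Dgraph 4).label s(2, 3) := by decide

lemma canAvoid_of_coloring {n : ℕ} (G : SimpleGraph (Fin n)) (c : Fin n → Fin 9)
    (hc : ∀ u v, G.Adj u v → c u ≠ c v) : CanAvoid G {Dgraph 4} := by
  refine ⟨symLabel (labf c), ?_, ?_⟩
  · -- validity
    intro e he e' he' heq
    revert he he' heq
    induction e, e' using Sym2.inductionOn₂ with
    | _ u v u' v' =>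
      intro he he' heq
      have heq' : labf c u v = labf c u' v' := by
        rw [← symLabel_labf c u v, ← symLabel_labf c u' v']
        exact heq
      exact labf_inj c u v u' v' (hc u v he) (hc u' v' he') heq'
  · -- avoidance
    intro H hH
    rw [Set.mem_singleton_iff] at hH
    subst hH
    rintro ⟨f, hadj, hord⟩
    have a01 : G.Adj (f 0) (f 1) := hadj 0 1 D4_adj_01
    have a02 : G.Adj (f 0) (f 2) := hadj 0 2 D4_adj_02
    have a03 : G.Adj (f 0) (f 3) := hadj 0 3 D4_adj_03
    have a13 : G.Adj (f 1) (f 3) := hadj 1 3 D4_adj_13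
    have a23 : G.Adj (f 2) (f 3) := hadj 2 3 D4_adj_23
    have h1 : labf c (f 0) (f 1) < labf c (f 0) (f 2) := by
      have := (hord 0 1 0 2 D4_adj_01 D4_adj_02).mp D4_lab_01_02
      rwa [show (EOGraph.mk n G (symLabel (labf c))).label = symLabel (labf c) from rfl,
        symLabel_labf, symLabel_labf] at this
    have h2 : labf c (f 0) (f 2) < labf c (f 0) (f 3) := by
      have := (hord 0 2 0 3 D4_adj_02 D4_adj_03).mp D4_lab_02_03
      rwa [show (EOGraph.mk n G (symLabel (labf c))).label = symLabel (labf c) from rfl,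
        symLabel_labf, symLabel_labf] at this
    have h3 : labf c (f 0) (f 3) < labf c (f 1) (f 3) := by
      have := (hord 0 3 1 3 D4_adj_03 D4_adj_13).mp D4_lab_03_13
      rwa [show (EOGraph.mk n G (symLabel (labf c))).label = symLabel (labf c) from rfl,
        symLabel_labf, symLabel_labf] at this
    have h4 : labf c (f 1) (f 3) < labf c (f 2) (f 3) := by
      have := (hord 1 3 2 3 D4_adj_13 D4_adj_23).mp D4_lab_13_23
      rwa [show (EOGraph.mk n G (symLabel (labf c))).label = symLabel (labf c) from rfl,
        symLabel_labf, symLabel_labf] at this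
    have ne01 := hc _ _ a01
    have ne02 := hc _ _ a02
    have ne03 := hc _ _ a03
    have ne13 := hc _ _ a13
    have ne23 := hc _ _ a23
    have p1 : L9 (c (f 0)) (c (f 2)) ≤ L9 (c (f 0)) (c (f 3)) :=
      labf_primary_le c _ _ _ _ ne02 ne03 h2
    have p2 : L9 (c (f 0)) (c (f 3)) ≤ L9 (c (f 1)) (c (f 3)) :=
      labf_primary_le c _ _ _ _ ne03 ne13 h3
    have s2' : L9 (c (f 0)) (c (f 3)) < L9 (c (f 1)) (c (f 3)) := by
      refine lt_of_le_of_ne p2 ?_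
      rw [L9symm (c (f 0)) (c (f 3)), L9symm (c (f 1)) (c (f 3))]
      exact L9ne _ _ _ (Ne.symm ne03) (Ne.symm ne13) ne01
    by_cases hγ : c (f 1) = c (f 2)
    · -- degenerate case : x₂ and x₃ share a colour
      have s1' : L9 (c (f 0)) (c (f 1)) < L9 (c (f 0)) (c (f 3)) := by
        rw [hγ]
        exact lt_of_le_of_ne p1 (L9ne _ _ _ ne02 ne03 ne23)
      have hb : epsF (c (f 0)) (c (f 1)) ≠ epsF (c (f 3)) (c (f 1)) :=
        epsKey _ _ _ s1' s2'
      have t1 : phiF n (epsF (c (f 0)) (c (f 1))) (f 1) <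
          phiF n (epsF (c (f 0)) (c (f 1))) (f 2) :=
        labf_tie c _ _ _ ne01 hγ h1
      have t2 : phiF n (epsF (c (f 3)) (c (f 1))) (f 1) <
          phiF n (epsF (c (f 3)) (c (f 1))) (f 2) := by
        rw [labf_comm c (f 1) (f 3), labf_comm c (f 2) (f 3)] at h4
        exact labf_tie c _ _ _ (Ne.symm ne13) hγ h4
      have i1 := (f 1).isLt
      have i2 := (f 2).isLt
      cases hb1 : epsF (c (f 0)) (c (f 1)) <;> cases hb2 : epsF (c (f 3)) (c (f 1)) <;>
        rw [hb1] at t1 hb <;> rw [hb2] at t2 hb <;> simp [phiF] at t1 t2 <;>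
        first
        | exact hb rfl
        | omega
    · -- nondegenerate case : all four colours distinct
      have q1 : L9 (c (f 0)) (c (f 1)) ≤ L9 (c (f 0)) (c (f 2)) :=
        labf_primary_le c _ _ _ _ ne01 ne02 h1
      have q4 : L9 (c (f 1)) (c (f 3)) ≤ L9 (c (f 2)) (c (f 3)) :=
        labf_primary_le c _ _ _ _ ne13 ne23 h4
      have s1 : L9 (c (f 0)) (c (f 1)) < L9 (c (f 0)) (c (f 2)) :=
        lt_of_le_of_ne q1 (L9ne _ _ _ ne01 ne02 hγ)
      have s2 : L9 (c (f 0)) (c (f 2)) < L9 (c (f 0)) (c (f 3)) :=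
        lt_of_le_of_ne p1 (L9ne _ _ _ ne02 ne03 ne23)
      have s4 : L9 (c (f 1)) (c (f 3)) < L9 (c (f 2)) (c (f 3)) := by
        refine lt_of_le_of_ne q4 ?_
        rw [L9symm (c (f 1)) (c (f 3)), L9symm (c (f 2)) (c (f 3))]
        exact L9ne _ _ _ (Ne.symm ne13) (Ne.symm ne23) hγ
      exact noD4chain (c (f 0)) (c (f 1)) (c (f 2)) (c (f 3)) ⟨s1, s2, s2', s4⟩

end CanAvoidPart

section Ramsey

/-- Bound for the 6-colour pair Ramsey sequence lemma. -/
def g2 : ℕ → ℕ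
  | 0 => 0
  | m + 1 => 6 * g2 m + 1

/-- Bound for the 6-colour triple Ramsey sequence lemma. -/
def g3 : ℕ → ℕ
  | 0 => 0
  | m + 1 => g2 (6 * g3 m) + 1

lemma seq2 : ∀ (m : ℕ) (S : Finset ℕ) (C : ℕ → ℕ → Fin 6), g2 m ≤ S.card →
    ∃ (a : Fin m → ℕ) (col : Fin m → Fin 6), StrictMono a ∧ (∀ i, a i ∈ S) ∧
      ∀ i j : Fin m, i < j → C (a i) (a j) = col i := by
  intro m
  induction m with
  | zero =>
    intro S C _
    exact ⟨Fin.elim0, Fin.elim0, fun i => i.elim0, fun i => i.elim0, fun i => i.elim0⟩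
  | succ m ih =>
    intro S C hcard
    have hg : g2 (m + 1) = 6 * g2 m + 1 := rfl
    have hne : S.Nonempty := Finset.card_pos.1 (by omega)
    have hxmem := S.min'_mem hne
    set x := S.min' hne with hx
    have hTcard : 6 * g2 m ≤ (S.erase x).card := by
      have := Finset.card_erase_of_mem hxmem
      omega
    obtain ⟨col0, -, hcol0⟩ := Finset.exists_le_card_fiber_of_mul_le_card_of_maps_to
      (s := S.erase x) (t := (Finset.univ : Finset (Fin 6))) (f := fun y => C x y)
      (fun a _ => Finset.mem_univ _) ⟨0, Finset.mem_univ 0⟩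
      (by simpa using hTcard)
    obtain ⟨a, col, hmono, hmem, hcol⟩ :=
      ih ((S.erase x).filter fun y => C x y = col0) C hcol0
    have hmem' : ∀ i, a i ∈ S.erase x ∧ C x (a i) = col0 := by
      intro i
      have := hmem i
      rwa [Finset.mem_filter] at this
    have hxlt : ∀ i, x < a i := by
      intro i
      have h1 := (hmem' i).1
      have h2 := Finset.min'_le S (a i) (Finset.mem_of_mem_erase h1)
      have h3 := Finset.ne_of_mem_erase h1
      omega
    refine ⟨Fin.cases x a, Fin.cases col0 col, ?_, ?_, ?_⟩
    · intro i j hij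
      rcases Fin.eq_zero_or_eq_succ j with rfl | ⟨j', rfl⟩
      · exact absurd hij (Fin.not_lt_zero i)
      · rcases Fin.eq_zero_or_eq_succ i with rfl | ⟨i', rfl⟩
        · simpa using hxlt j'
        · simpa using hmono (Fin.succ_lt_succ_iff.mp hij)
    · intro i
      rcases Fin.eq_zero_or_eq_succ i with rfl | ⟨i', rfl⟩
      · simpa using hxmem
      · simpa using Finset.mem_of_mem_erase (hmem' i').1
    · intro i j hij
      rcases Fin.eq_zero_or_eq_succ j with rfl | ⟨j', rfl⟩
      · exact absurd hij (Fin.not_lt_zero i)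
      · rcases Fin.eq_zero_or_eq_succ i with rfl | ⟨i', rfl⟩
        · simpa using (hmem' j').2
        · simpa using hcol i' j' (Fin.succ_lt_succ_iff.mp hij)

lemma ram2set (t : ℕ) (S : Finset ℕ) (C : ℕ → ℕ → Fin 6) (h : g2 (6 * t) ≤ S.card) :
    ∃ (U : Finset ℕ) (cl : Fin 6), U ⊆ S ∧ t ≤ U.card ∧
      ∀ x ∈ U, ∀ y ∈ U, x < y → C x y = cl := by
  obtain ⟨a, col, hmono, hmem, hcol⟩ := seq2 (6 * t) S C h
  obtain ⟨cl, -, hcl⟩ := Finset.exists_le_card_fiber_of_mul_le_card_of_maps_to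
    (s := (Finset.univ : Finset (Fin (6 * t)))) (t := (Finset.univ : Finset (Fin 6)))
    (f := col) (n := t) (fun a _ => Finset.mem_univ _) ⟨0, Finset.mem_univ 0⟩ (by simp)
  refine ⟨(Finset.univ.filter fun i => col i = cl).image a, cl, ?_, ?_, ?_⟩
  · intro y hy
    rw [Finset.mem_image] at hy
    obtain ⟨i, -, rfl⟩ := hy
    exact hmem i
  · rw [Finset.card_image_of_injective _ hmono.injective]
    exact hcl
  · intro x hx y hy hxy
    rw [Finset.mem_image] at hx hy
    obtain ⟨i, hi, rfl⟩ := hx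
    obtain ⟨j, hj, rfl⟩ := hy
    have hij : i < j := by
      by_contra hcon
      push_neg at hcon
      exact absurd (hmono.le_iff_le.2 hcon) (not_le.2 hxy)
    rw [hcol i j hij]
    rw [Finset.mem_filter] at hi
    exact hi.2

lemma seq3 : ∀ (m : ℕ) (S : Finset ℕ) (C : ℕ → ℕ → ℕ → Fin 6), g3 m ≤ S.card →
    ∃ (a : Fin m → ℕ) (col : Fin m → Fin 6), StrictMono a ∧ (∀ i, a i ∈ S) ∧
      ∀ i j k : Fin m, i < j → j < k → C (a i) (a j) (a k) = col i := by
  intro m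
  induction m with
  | zero =>
    intro S C _
    exact ⟨Fin.elim0, Fin.elim0, fun i => i.elim0, fun i => i.elim0, fun i => i.elim0⟩
  | succ m ih =>
    intro S C hcard
    have hg : g3 (m + 1) = g2 (6 * g3 m) + 1 := rfl
    have hne : S.Nonempty := Finset.card_pos.1 (by omega)
    have hxmem := S.min'_mem hne
    set x := S.min' hne with hx
    have hTcard : g2 (6 * g3 m) ≤ (S.erase x).card := by
      have := Finset.card_erase_of_mem hxmem
      omega
    obtain ⟨U, cl, hUsub, hUcard, hU⟩ := ram2set (g3 m) (S.erase x) (fun y z => C x y z) hTcard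
    obtain ⟨a, col, hmono, hmem, hcol⟩ := ih U C hUcard
    have hxlt : ∀ i, x < a i := by
      intro i
      have h1 := hUsub (hmem i)
      have h2 := Finset.min'_le S (a i) (Finset.mem_of_mem_erase h1)
      have h3 := Finset.ne_of_mem_erase h1
      omega
    refine ⟨Fin.cases x a, Fin.cases cl col, ?_, ?_, ?_⟩
    · intro i j hij
      rcases Fin.eq_zero_or_eq_succ j with rfl | ⟨j', rfl⟩
      · exact absurd hij (Fin.not_lt_zero i)
      · rcases Fin.eq_zero_or_eq_succ i with rfl | ⟨i', rfl⟩
        · simpa using hxlt j'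
        · simpa using hmono (Fin.succ_lt_succ_iff.mp hij)
    · intro i
      rcases Fin.eq_zero_or_eq_succ i with rfl | ⟨i', rfl⟩
      · simpa using hxmem
      · simpa using Finset.mem_of_mem_erase (hUsub (hmem i'))
    · intro i j k hij hjk
      rcases Fin.eq_zero_or_eq_succ k with rfl | ⟨k', rfl⟩
      · exact absurd hjk (Fin.not_lt_zero j)
      · rcases Fin.eq_zero_or_eq_succ j with rfl | ⟨j', rfl⟩
        · exact absurd hij (Fin.not_lt_zero i)
        · rcases Fin.eq_zero_or_eq_succ i with rfl | ⟨i', rfl⟩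
          · have hjk' : a j' < a k' := hmono (Fin.succ_lt_succ_iff.mp hjk)
            simpa using hU (a j') (hmem j') (a k') (hmem k') hjk'
          · simpa using hcol i' j' k' (Fin.succ_lt_succ_iff.mp hij)
              (Fin.succ_lt_succ_iff.mp hjk)

/-- Every 6-colouring of the triples of `{0, …, g3 19 - 1}` has a monochromatic 4-set. -/
lemma ram3_4 (C : ℕ → ℕ → ℕ → Fin 6) :
    ∃ v : Fin 4 → ℕ, StrictMono v ∧ (∀ i, v i < g3 19) ∧
      ∃ cl, ∀ i j k : Fin 4, i < j → j < k → C (v i) (v j) (v k) = cl := by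
  obtain ⟨a, col, hmono, hmem, hcol⟩ := seq3 19 (Finset.range (g3 19)) C (by simp)
  obtain ⟨cl, -, hcl⟩ := Finset.exists_lt_card_fiber_of_mul_lt_card_of_maps_to
    (s := (Finset.univ : Finset (Fin 19))) (t := (Finset.univ : Finset (Fin 6)))
    (f := col) (n := 3) (fun a _ => Finset.mem_univ _) (by simp)
  obtain ⟨F', hF'sub, hF'card⟩ := Finset.exists_subset_card_eq
    (show 4 ≤ (Finset.univ.filter fun i => col i = cl).card by omega)
  set b := F'.orderEmbOfFin hF'card with hb
  refine ⟨fun i => a (b i), hmono.comp b.strictMono, ?_, cl, ?_⟩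
  · intro i
    have := hmem (b i)
    rwa [Finset.mem_range] at this
  · intro i j k hij hjk
    rw [hcol (b i) (b j) (b k) (b.strictMono hij) (b.strictMono hjk)]
    have hmem' := hF'sub (F'.orderEmbOfFin_mem hF'card i)
    rw [Finset.mem_filter] at hmem'
    exact hmem'.2

end Ramsey

section CannotAvoid

/-- The order type of a triangle with edge labels `p q r`. -/
def colorOf (p q r : ℕ) : Fin 6 :=
  if p < q then (if q < r then 0 else if p < r then 1 else 2)
  else (if p < r then 3 else if q < r then 4 else 5)

lemma colorOf_cases (p q r : ℕ) (hpq : p ≠ q) (hpr : p ≠ r) (hqr : q ≠ r) :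
    (colorOf p q r = 0 → p < q ∧ q < r) ∧
    (colorOf p q r = 1 → p < r ∧ r < q) ∧
    (colorOf p q r = 2 → r < p ∧ p < q) ∧
    (colorOf p q r = 3 → q < p ∧ p < r) ∧
    (colorOf p q r = 4 → q < r ∧ r < p) ∧
    (colorOf p q r = 5 → r < q ∧ q < p) := by
  unfold colorOf
  split_ifs with h1 h2 h3 h4 h5 <;>
    refine ⟨?_, ?_, ?_, ?_, ?_, ?_⟩ <;> intro h <;>
    first
    | exact absurd h (by decide)
    | omega

instance : DecidableRel (Dunder 4).Adj := fun a b =>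
  decidable_of_iff _ (SimpleGraph.fromRel_adj _ a b).symm

instance : DecidableRel (Dgraph 4).graph.Adj :=
  inferInstanceAs (DecidableRel (Dunder 4).Adj)

lemma d4_rank : ∀ a b : Fin 4, (Dgraph 4).graph.Adj a b →
    (s(a, b) = s((0 : Fin 4), (1 : Fin 4)) ∧ (Dgraph 4).label s(a, b) = 1) ∨
    (s(a, b) = s((0 : Fin 4), (2 : Fin 4)) ∧ (Dgraph 4).label s(a, b) = 2) ∨
    (s(a, b) = s((0 : Fin 4), (3 : Fin 4)) ∧ (Dgraph 4).label s(a, b) = 3) ∨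
    (s(a, b) = s((1 : Fin 4), (3 : Fin 4)) ∧ (Dgraph 4).label s(a, b) = 4) ∨
    (s(a, b) = s((2 : Fin 4), (3 : Fin 4)) ∧ (Dgraph 4).label s(a, b) = 5) := by
  intro a b h
  revert h
  change (Dunder 4).Adj a b → _
  revert a b
  decide

lemma contains_of_chain {N : ℕ} (L : Sym2 (Fin N) → ℕ) (z0 z1 z2 z3 : Fin N)
    (e01 : z0 ≠ z1) (e02 : z0 ≠ z2) (e03 : z0 ≠ z3) (e12 : z1 ≠ z2) (e13 : z1 ≠ z3)
    (e23 : z2 ≠ z3)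
    (h1 : L s(z0, z1) < L s(z0, z2)) (h2 : L s(z0, z2) < L s(z0, z3))
    (h3 : L s(z0, z3) < L s(z1, z3)) (h4 : L s(z1, z3) < L s(z2, z3)) :
    (EOGraph.mk N ⊤ L).Contains (Dgraph 4) := by
  have hinj : Function.Injective (![z0, z1, z2, z3] : Fin 4 → Fin N) := by
    intro a b hab
    fin_cases a <;> fin_cases b <;> simp_all
  set y : Fin 4 → Fin N := ![z0, z1, z2, z3] with hy
  have hy0 : y 0 = z0 := rfl
  have hy1 : y 1 = z1 := rfl
  have hy2 : y 2 = z2 := rfl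
  have hy3 : y 3 = z3 := rfl
  refine ⟨⟨y, hinj⟩, fun a b hab => hinj.ne hab.ne, ?_⟩
  intro a b c d hab hcd
  show (Dgraph 4).label s(a, b) < (Dgraph 4).label s(c, d) ↔
    L s(y a, y b) < L s(y c, y d)
  rcases d4_rank a b hab with ⟨hea, hla⟩ | ⟨hea, hla⟩ | ⟨hea, hla⟩ | ⟨hea, hla⟩ | ⟨hea, hla⟩ <;>
    rcases d4_rank c d hcd with ⟨heb, hlb⟩ | ⟨heb, hlb⟩ | ⟨heb, hlb⟩ | ⟨heb, hlb⟩ | ⟨heb, hlb⟩ <;>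
    [skip; skip; skip; skip; skip; skip; skip; skip; skip; skip; skip; skip; skip;
      skip; skip; skip; skip; skip; skip; skip; skip; skip; skip; skip; skip] <;>
    (have gea := congrArg (Sym2.map y) hea
     have geb := congrArg (Sym2.map y) heb
     rw [Sym2.map_pair_eq] at gea
     change s(y a, y b) = _ at gea
     rw [Sym2.map_pair_eq] at geb
     change s(y c, y d) = _ at geb
     rw [hla, hlb, gea, geb]
     simp only [hy0, hy1, hy2, hy3]
     constructor <;> intro h' <;> omega)

lemma g3_succ (m : ℕ) : g3 (m + 1) = g2 (6 * g3 m) + 1 := rfl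

lemma g3_19_pos : 0 < g3 19 := by
  rw [show (19 : ℕ) = 18 + 1 from rfl, g3_succ]
  omega

lemma cannotAvoid_top : ¬ CanAvoid (⊤ : SimpleGraph (Fin (g3 19))) {Dgraph 4} := by
  rintro ⟨L, hval, hav⟩
  apply hav (Dgraph 4) (Set.mem_singleton _)
  have hN : 0 < g3 19 := g3_19_pos
  set emb : ℕ → Fin (g3 19) := fun x => if h : x < g3 19 then ⟨x, h⟩ else ⟨0, hN⟩ with hemb
  obtain ⟨v, hmono, hlt, cl, hcl⟩ := ram3_4 (fun x y z =>
    colorOf (L s(emb x, emb y)) (L s(emb x, emb z)) (L s(emb y, emb z)))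
  set w : Fin 4 → Fin (g3 19) := fun i => ⟨v i, hlt i⟩ with hw
  have hwinj : Function.Injective w := by
    intro i j hij
    have : v i = v j := congrArg Fin.val hij
    exact hmono.injective this
  have hne : ∀ i j : Fin 4, i ≠ j → w i ≠ w j := fun i j h he => h (hwinj he)
  have hembv : ∀ i, emb (v i) = w i := fun i => dif_pos (hlt i)
  have hC : ∀ i j k : Fin 4, i < j → j < k →
      colorOf (L s(w i, w j)) (L s(w i, w k)) (L s(w j, w k)) = cl := by
    intro i j k hij hjk
    have h := hcl i j k hij hjk
    rwa [hembv, hembv, hembv] at h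
  have hLne : ∀ i j k l : Fin 4, i ≠ j → k ≠ l → s(w i, w j) ≠ s(w k, w l) →
      L s(w i, w j) ≠ L s(w k, w l) := by
    intro i j k l hij hkl hs he
    refine hs (hval _ ?_ _ ?_ he)
    · rw [SimpleGraph.mem_edgeSet]
      exact hne _ _ hij
    · rw [SimpleGraph.mem_edgeSet]
      exact hne _ _ hkl
  have key : ∀ i j k : Fin 4, i < j → j < k →
      (cl = 0 → L s(w i, w j) < L s(w i, w k) ∧ L s(w i, w k) < L s(w j, w k)) ∧
      (cl = 1 → L s(w i, w j) < L s(w j, w k) ∧ L s(w j, w k) < L s(w i, w k)) ∧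
      (cl = 2 → L s(w j, w k) < L s(w i, w j) ∧ L s(w i, w j) < L s(w i, w k)) ∧
      (cl = 3 → L s(w i, w k) < L s(w i, w j) ∧ L s(w i, w j) < L s(w j, w k)) ∧
      (cl = 4 → L s(w i, w k) < L s(w j, w k) ∧ L s(w j, w k) < L s(w i, w j)) ∧
      (cl = 5 → L s(w j, w k) < L s(w i, w k) ∧ L s(w i, w k) < L s(w i, w j)) := by
    intro i j k hij hjk
    have hij' : i ≠ j := ne_of_lt hij
    have hjk' : j ≠ k := ne_of_lt hjk
    have hik' : i ≠ k := ne_of_lt (lt_trans hij hjk)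
    have hpq : L s(w i, w j) ≠ L s(w i, w k) := by
      refine hLne i j i k hij' hik' ?_
      intro hs
      rw [Sym2.eq_iff] at hs
      rcases hs with ⟨-, h2⟩ | ⟨-, h2⟩
      · exact hne _ _ hjk' h2
      · exact hne _ _ hij' h2.symm
    have hpr : L s(w i, w j) ≠ L s(w j, w k) := by
      refine hLne i j j k hij' hjk' ?_
      intro hs
      rw [Sym2.eq_iff] at hs
      rcases hs with ⟨h1, -⟩ | ⟨h1, -⟩
      · exact hne _ _ hij' h1
      · exact hne _ _ hik' h1
    have hqr : L s(w i, w k) ≠ L s(w j, w k) := by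
      refine hLne i k j k hik' hjk' ?_
      intro hs
      rw [Sym2.eq_iff] at hs
      rcases hs with ⟨h1, -⟩ | ⟨-, h2⟩
      · exact hne _ _ hij' h1
      · exact hne _ _ (Ne.symm hjk') h2
    have hc := hC i j k hij hjk
    obtain ⟨c0, c1, c2, c3, c4, c5⟩ := colorOf_cases _ _ _ hpq hpr hqr
    exact ⟨fun h => c0 (hc.trans h), fun h => c1 (hc.trans h), fun h => c2 (hc.trans h),
      fun h => c3 (hc.trans h), fun h => c4 (hc.trans h), fun h => c5 (hc.trans h)⟩
  clear hC hLne hembv hmono hcl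
  fin_cases cl
  · -- colour 0, assignment (0, 1, 2, 3)
    refine contains_of_chain L (w 0) (w 1) (w 2) (w 3) (hne _ _ (by decide)) (hne _ _ (by decide)) (hne _ _ (by decide)) (hne _ _ (by decide)) (hne _ _ (by decide)) (hne _ _ (by decide)) ?_ ?_ ?_ ?_
    · exact ((key 0 1 2 (by decide) (by decide)).1 rfl).1
    · exact ((key 0 2 3 (by decide) (by decide)).1 rfl).1
    · exact ((key 0 1 3 (by decide) (by decide)).1 rfl).2
    · exact ((key 1 2 3 (by decide) (by decide)).1 rfl).2
  · -- colour 1, assignment (2, 1, 0, 3)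
    refine contains_of_chain L (w 2) (w 1) (w 0) (w 3) (hne _ _ (by decide)) (hne _ _ (by decide)) (hne _ _ (by decide)) (hne _ _ (by decide)) (hne _ _ (by decide)) (hne _ _ (by decide)) ?_ ?_ ?_ ?_
    · rw [show s(w 2, w 1) = s(w 1, w 2) from Sym2.eq_swap, show s(w 2, w 0) = s(w 0, w 2) from Sym2.eq_swap]
      exact ((key 0 1 2 (by decide) (by decide)).2.1 rfl).2
    · rw [show s(w 2, w 0) = s(w 0, w 2) from Sym2.eq_swap]
      exact ((key 0 2 3 (by decide) (by decide)).2.1 rfl).1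
    · exact ((key 1 2 3 (by decide) (by decide)).2.1 rfl).2
    · exact ((key 0 1 3 (by decide) (by decide)).2.1 rfl).2
  · -- colour 2, assignment (1, 2, 3, 0)
    refine contains_of_chain L (w 1) (w 2) (w 3) (w 0) (hne _ _ (by decide)) (hne _ _ (by decide)) (hne _ _ (by decide)) (hne _ _ (by decide)) (hne _ _ (by decide)) (hne _ _ (by decide)) ?_ ?_ ?_ ?_
    · exact ((key 1 2 3 (by decide) (by decide)).2.2.1 rfl).2
    · rw [show s(w 1, w 0) = s(w 0, w 1) from Sym2.eq_swap]
      exact ((key 0 1 3 (by decide) (by decide)).2.2.1 rfl).1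
    · rw [show s(w 1, w 0) = s(w 0, w 1) from Sym2.eq_swap, show s(w 2, w 0) = s(w 0, w 2) from Sym2.eq_swap]
      exact ((key 0 1 2 (by decide) (by decide)).2.2.1 rfl).2
    · rw [show s(w 2, w 0) = s(w 0, w 2) from Sym2.eq_swap, show s(w 3, w 0) = s(w 0, w 3) from Sym2.eq_swap]
      exact ((key 0 2 3 (by decide) (by decide)).2.2.1 rfl).2
  · -- colour 3, assignment (0, 3, 2, 1)
    refine contains_of_chain L (w 0) (w 3) (w 2) (w 1) (hne _ _ (by decide)) (hne _ _ (by decide)) (hne _ _ (by decide)) (hne _ _ (by decide)) (hne _ _ (by decide)) (hne _ _ (by decide)) ?_ ?_ ?_ ?_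
    · exact ((key 0 2 3 (by decide) (by decide)).2.2.2.1 rfl).1
    · exact ((key 0 1 2 (by decide) (by decide)).2.2.2.1 rfl).1
    · rw [show s(w 3, w 1) = s(w 1, w 3) from Sym2.eq_swap]
      exact ((key 0 1 3 (by decide) (by decide)).2.2.2.1 rfl).2
    · rw [show s(w 3, w 1) = s(w 1, w 3) from Sym2.eq_swap, show s(w 2, w 1) = s(w 1, w 2) from Sym2.eq_swap]
      exact ((key 1 2 3 (by decide) (by decide)).2.2.2.1 rfl).1
  · -- colour 4, assignment (3, 0, 1, 2)
    refine contains_of_chain L (w 3) (w 0) (w 1) (w 2) (hne _ _ (by decide)) (hne _ _ (by decide)) (hne _ _ (by decide)) (hne _ _ (by decide)) (hne _ _ (by decide)) (hne _ _ (by decide)) ?_ ?_ ?_ ?_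
    · rw [show s(w 3, w 0) = s(w 0, w 3) from Sym2.eq_swap, show s(w 3, w 1) = s(w 1, w 3) from Sym2.eq_swap]
      exact ((key 0 1 3 (by decide) (by decide)).2.2.2.2.1 rfl).1
    · rw [show s(w 3, w 1) = s(w 1, w 3) from Sym2.eq_swap, show s(w 3, w 2) = s(w 2, w 3) from Sym2.eq_swap]
      exact ((key 1 2 3 (by decide) (by decide)).2.2.2.2.1 rfl).1
    · rw [show s(w 3, w 2) = s(w 2, w 3) from Sym2.eq_swap]
      exact ((key 0 2 3 (by decide) (by decide)).2.2.2.2.1 rfl).2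
    · exact ((key 0 1 2 (by decide) (by decide)).2.2.2.2.1 rfl).1
  · -- colour 5, assignment (3, 2, 1, 0)
    refine contains_of_chain L (w 3) (w 2) (w 1) (w 0) (hne _ _ (by decide)) (hne _ _ (by decide)) (hne _ _ (by decide)) (hne _ _ (by decide)) (hne _ _ (by decide)) (hne _ _ (by decide)) ?_ ?_ ?_ ?_
    · rw [show s(w 3, w 2) = s(w 2, w 3) from Sym2.eq_swap, show s(w 3, w 1) = s(w 1, w 3) from Sym2.eq_swap]
      exact ((key 1 2 3 (by decide) (by decide)).2.2.2.2.2 rfl).1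
    · rw [show s(w 3, w 1) = s(w 1, w 3) from Sym2.eq_swap, show s(w 3, w 0) = s(w 0, w 3) from Sym2.eq_swap]
      exact ((key 0 1 3 (by decide) (by decide)).2.2.2.2.2 rfl).1
    · rw [show s(w 3, w 0) = s(w 0, w 3) from Sym2.eq_swap, show s(w 2, w 0) = s(w 0, w 2) from Sym2.eq_swap]
      exact ((key 0 2 3 (by decide) (by decide)).2.2.2.2.2 rfl).2
    · rw [show s(w 2, w 0) = s(w 0, w 2) from Sym2.eq_swap, show s(w 1, w 0) = s(w 0, w 1) from Sym2.eq_swap]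
      exact ((key 0 1 2 (by decide) (by decide)).2.2.2.2.2 rfl).2

end CannotAvoid

/-- The order chromatic number of the edge-ordered diamond `D_4`
satisfies `10 ≤ χ'_<(D_4) < ∞`; in particular `K_9` can avoid `D_4` (witnessing
`χ'_<(D_4) > 9`), while some finite simple graph cannot avoid `D_4`. -/
theorem orderChrom_diamond :
    10 ≤ orderChrom {Dgraph 4} ∧ orderChrom {Dgraph 4} < ⊤ ∧
      CanAvoid (⊤ : SimpleGraph (Fin 9)) {Dgraph 4} := by
  have hK9 : CanAvoid (⊤ : SimpleGraph (Fin 9)) {Dgraph 4} :=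
    canAvoid_of_coloring ⊤ id (fun u v h => h.ne)
  refine ⟨?_, ?_, hK9⟩
  · rw [orderChrom]
    refine le_iInf fun n => le_iInf fun G => le_iInf fun hG => ?_
    by_contra hcon
    push_neg at hcon
    have hle : G.chromaticNumber ≤ (9 : ℕ) := by
      have h10 : (10 : ℕ∞) = (9 : ℕ) + 1 := by norm_num
      rw [h10] at hcon
      exact Order.le_of_lt_add_one hcon
    have hcol : G.Colorable 9 := SimpleGraph.chromaticNumber_le_iff_colorable.mp hle
    obtain ⟨c⟩ := hcol
    exact hG (canAvoid_of_coloring G c (fun u v h => c.valid h))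
  · rw [orderChrom]
    have h1 : (⨅ (n : ℕ) (G : SimpleGraph (Fin n)) (_ : ¬ CanAvoid G {Dgraph 4}),
        G.chromaticNumber) ≤ (⊤ : SimpleGraph (Fin (g3 19))).chromaticNumber :=
      (iInf_le _ (g3 19)).trans ((iInf_le _ ⊤).trans (iInf_le _ cannotAvoid_top))
    have h2 : (⊤ : SimpleGraph (Fin (g3 19))).chromaticNumber ≤ (g3 19 : ℕ∞) := by
      have := SimpleGraph.colorable_of_fintype (⊤ : SimpleGraph (Fin (g3 19)))
      rw [Fintype.card_fin] at this
      exact SimpleGraph.chromaticNumber_le_iff_colorable.mpr this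
    exact lt_of_le_of_lt (h1.trans h2) (WithTop.coe_lt_top _)
end

section
/- For every edge-ordering L of the complete graph K_4, the order chromatic number χ'_<(K_4^L) is infinite; equivalently, χ^-(K_4) = ∞, i.e., for every linear ordering of the six edges of K_4, every finite simple graph can avoid the resulting edge-ordered graph. -/
/-- lexicographic labeling -/
def lexL (n : ℕ) : Sym2 (Fin n) → ℕ := symLabel fun a b => (a : ℕ) * n + (b : ℕ)

/-- colexicographic labeling -/
def colexL (n : ℕ) : Sym2 (Fin n) → ℕ := symLabel fun a b => (b : ℕ) * n + (a : ℕ)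

lemma symLabel_eval {N : ℕ} (f : Fin N → Fin N → ℕ) (a b : Fin N) :
    symLabel f s(a, b) = f (min a b) (max a b) := rfl

lemma pick4 : ∀ v w : Fin 4, ∃ x y p q : Fin 4,
    x ≠ v ∧ y ≠ w ∧ s(v, x) = s(w, y) ∧ p ≠ q ∧ p ≠ v ∧ q ≠ v ∧ p ≠ w ∧ q ≠ w := by
  decide

lemma nat_mix {n m1 M1 m2 M2 : ℕ} (h1 : M1 < n) (h2 : M2 < n)
    (h : m1 * n + M1 = m2 * n + M2) : m1 = m2 ∧ M1 = M2 := by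
  have hm : m1 = m2 := by
    rcases lt_trichotomy m1 m2 with hlt | he | hgt
    · nlinarith
    · exact he
    · nlinarith
  subst hm
  exact ⟨rfl, by omega⟩

lemma sym2_minmax {α : Type*} [LinearOrder α] (a b : α) :
    s(a, b) = s(min a b, max a b) := by
  rcases le_total a b with h | h
  · rw [min_eq_left h, max_eq_right h]
  · rw [min_eq_right h, max_eq_left h, Sym2.eq_swap]

lemma lexL_inj (n : ℕ) : Function.Injective (lexL n) := by
  intro e1 e2 h
  induction e1 using Sym2.ind with
  | _ a b =>
  induction e2 using Sym2.ind with
  | _ c d =>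
  rw [lexL, symLabel_eval, symLabel_eval] at h
  have hmm := nat_mix (max a b).isLt (max c d).isLt h
  rw [sym2_minmax a b, sym2_minmax c d,
    Fin.ext (hmm.1 : ((min a b : Fin n) : ℕ) = (min c d : Fin n)),
    Fin.ext (hmm.2 : ((max a b : Fin n) : ℕ) = (max c d : Fin n))]

lemma colexL_inj (n : ℕ) : Function.Injective (colexL n) := by
  intro e1 e2 h
  induction e1 using Sym2.ind with
  | _ a b =>
  induction e2 using Sym2.ind with
  | _ c d =>
  rw [colexL, symLabel_eval, symLabel_eval] at h
  have hmm := nat_mix (min a b).isLt (min c d).isLt h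
  rw [sym2_minmax a b, sym2_minmax c d,
    Fin.ext (hmm.2 : ((min a b : Fin n) : ℕ) = (min c d : Fin n)),
    Fin.ext (hmm.1 : ((max a b : Fin n) : ℕ) = (max c d : Fin n))]

/-- On a lex-labeled host, edges at the vertex with smallest image are smaller than
edges avoiding it. -/
lemma lex_star {n : ℕ} (f : Fin 4 ↪ Fin n) (v : Fin 4) (hv : ∀ x, f v ≤ f x)
    {x p q : Fin 4} (hx : x ≠ v) (hp : p ≠ v) (hq : q ≠ v) :
    lexL n s(f v, f x) < lexL n s(f p, f q) := by
  have hvx : f v < f x := lt_of_le_of_ne (hv x) (fun h => hx (f.injective h).symm)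
  have hvp : f v < f p := lt_of_le_of_ne (hv p) (fun h => hp (f.injective h).symm)
  have hvq : f v < f q := lt_of_le_of_ne (hv q) (fun h => hq (f.injective h).symm)
  rw [lexL, symLabel_eval, symLabel_eval, min_eq_left hvx.le, max_eq_right hvx.le]
  have hm : ((f v : ℕ)) + 1 ≤ ((min (f p) (f q) : Fin n) : ℕ) := lt_min hvp hvq
  calc (f v : ℕ) * n + (f x : ℕ) < (f v : ℕ) * n + n := by
        have := (f x).isLt; omega
    _ = ((f v : ℕ) + 1) * n := by ring
    _ ≤ ((min (f p) (f q) : Fin n) : ℕ) * n := Nat.mul_le_mul_right n hm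
    _ ≤ _ := Nat.le_add_right _ _

/-- On a colex-labeled host, edges avoiding the vertex with largest image are smaller
than edges at it. -/
lemma colex_tri {n : ℕ} (g : Fin 4 ↪ Fin n) (w : Fin 4) (hw : ∀ x, g x ≤ g w)
    {x p q : Fin 4} (hx : x ≠ w) (hp : p ≠ w) (hq : q ≠ w) :
    colexL n s(g p, g q) < colexL n s(g w, g x) := by
  have hwx : g x < g w := lt_of_le_of_ne (hw x) (fun h => hx (g.injective h))
  have hwp : g p < g w := lt_of_le_of_ne (hw p) (fun h => hp (g.injective h))
  have hwq : g q < g w := lt_of_le_of_ne (hw q) (fun h => hq (g.injective h))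
  rw [colexL, symLabel_eval, symLabel_eval, min_eq_right hwx.le, max_eq_left hwx.le]
  have hm : ((max (g p) (g q) : Fin n) : ℕ) + 1 ≤ (g w : ℕ) := max_lt hwp hwq
  calc ((max (g p) (g q) : Fin n) : ℕ) * n + ((min (g p) (g q) : Fin n) : ℕ)
      < ((max (g p) (g q) : Fin n) : ℕ) * n + n := by
        have := (min (g p) (g q)).isLt; omega
    _ = (((max (g p) (g q) : Fin n) : ℕ) + 1) * n := by ring
    _ ≤ (g w : ℕ) * n := Nat.mul_le_mul_right n hm
    _ ≤ _ := Nat.le_add_right _ _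

/-- No edge-ordered `K₄` can be contained both in a lex-labeled host and in a
colex-labeled host: in the former its three smallest edges form a star, in the
latter a triangle. -/
lemma no_both {n : ℕ} {G : SimpleGraph (Fin n)} {L : Sym2 (Fin 4) → ℕ}
    (h1 : (EOGraph.mk n G (lexL n)).Contains (EOGraph.mk 4 ⊤ L))
    (h2 : (EOGraph.mk n G (colexL n)).Contains (EOGraph.mk 4 ⊤ L)) : False := by
  obtain ⟨f, -, hf⟩ := h1
  obtain ⟨g, -, hg⟩ := h2
  obtain ⟨v, -, hv⟩ :=
    Finset.exists_min_image Finset.univ (fun i => f i) ⟨0, Finset.mem_univ 0⟩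
  obtain ⟨w, -, hw⟩ :=
    Finset.exists_max_image Finset.univ (fun i => g i) ⟨0, Finset.mem_univ 0⟩
  obtain ⟨x, y, p, q, hx, hy, hvxwy, hpq, hpv, hqv, hpw, hqw⟩ := pick4 v w
  have A : L s(v, x) < L s(p, q) :=
    (hf v x p q ((SimpleGraph.top_adj _ _).mpr hx.symm) ((SimpleGraph.top_adj _ _).mpr hpq)).mpr
      (lex_star f v (fun i => hv i (Finset.mem_univ i)) hx hpv hqv)
  have B : L s(p, q) < L s(w, y) :=
    (hg p q w y ((SimpleGraph.top_adj _ _).mpr hpq) ((SimpleGraph.top_adj _ _).mpr hy.symm)).mpr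
      (colex_tri g w (fun i => hw i (Finset.mem_univ i)) hy hpw hqw)
  rw [hvxwy] at A
  exact lt_irrefl _ (A.trans B)

/-- Every finite simple graph can avoid any fixed edge-ordering of `K₄`. -/
lemma canAvoid_K4 (L : Sym2 (Fin 4) → ℕ) {n : ℕ} (G : SimpleGraph (Fin n)) :
    CanAvoid G {EOGraph.mk 4 ⊤ L} := by
  by_cases h : (EOGraph.mk n G (lexL n)).Contains (EOGraph.mk 4 ⊤ L)
  · refine ⟨colexL n, fun e _ e' _ he => colexL_inj n he, fun H hH => ?_⟩
    rw [Set.mem_singleton_iff] at hH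
    subst hH
    exact fun hc => no_both h hc
  · refine ⟨lexL n, fun e _ e' _ he => lexL_inj n he, fun H hH => ?_⟩
    rw [Set.mem_singleton_iff] at hH
    subst hH
    exact h

/-- For every edge-ordering `L` of the complete graph `K_4`, the
order chromatic number of `K_4^L` is infinite: every finite simple graph can avoid the
resulting edge-ordered graph. -/
theorem orderChrom_K4_eq_top (L : Sym2 (Fin 4) → ℕ)
    (hL : (EOGraph.mk 4 ⊤ L).Valid) :
    orderChrom {EOGraph.mk 4 ⊤ L} = ⊤ := by
  rw [orderChrom]
  exact top_unique (le_iInf fun n => le_iInf fun G => le_iInf fun h =>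
    (h (canAvoid_K4 L G)).elim)
end
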